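/- arXiv:2403.11768 — 6 statements merged into one kernel-verified Lean document; each statement's English description precedes it below -/
import Mathlib

section
/- Let ε ∈ (0,1) and n₁, n₂ ∈ ℕ, and set r = ⌈9·log(3·n₁·n₂)/ε²⌉ ∈ ℕ (natural logarithm). Then for every matrix A ∈ ℝ^{n₁×n₂} there exists a matrix B ∈ ℝ^{n₁×n₂} with rank(B) ≤ r such that ‖A − B‖_max ≤ ε·γ₂(A). -/
set_option maxHeartbeats 2000000

open scoped BigOperators
open Matrix

namespace Stmt0

noncomputable def maxNorm {a b : ℕ} (A : Matrix (Fin a) (Fin b) ℝ) : ℝ :=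
  ⨆ i, ⨆ j, |A i j|

noncomputable def rowNormTwoInf {a k : ℕ} (X : Matrix (Fin a) (Fin k) ℝ) : ℝ :=
  ⨆ i, Real.sqrt (∑ j, X i j ^ 2)

noncomputable def gamma2 {a b : ℕ} (A : Matrix (Fin a) (Fin b) ℝ) : ℝ :=
  sInf { t | ∃ (k : ℕ) (X : Matrix (Fin a) (Fin k) ℝ) (Y : Matrix (Fin b) (Fin k) ℝ),
    A = X * Yᵀ ∧ t = rowNormTwoInf X * rowNormTwoInf Y }

open Real Finset MeasureTheory

/-! ### Signs and dot products -/

def sg (b : Bool) : ℝ := if b then 1 else -1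

noncomputable def dotp {k : ℕ} (w : Fin k → ℝ) (v : Fin k → Bool) : ℝ :=
  ∑ l, sg (v l) * w l

lemma sum_pi_prod {n : ℕ} {V : Type*} [Fintype V] [DecidableEq V] (g : Fin n → V → ℝ) :
    ∑ ω : Fin n → V, ∏ t, g t (ω t) = ∏ t, ∑ v, g t v := by
  classical
  rw [Finset.prod_univ_sum, Fintype.piFinset_univ]

lemma sum_pi_prod_const {n : ℕ} {V : Type*} [Fintype V] [DecidableEq V] (g : V → ℝ) :
    ∑ ω : Fin n → V, ∏ t, g (ω t) = (∑ v, g v) ^ n := by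
  rw [sum_pi_prod (fun _ v => g v), Finset.prod_const, Finset.card_univ, Fintype.card_fin]

lemma sum_succ_bool {k : ℕ} (f : (Fin (k + 1) → Bool) → ℝ) :
    ∑ v, f v = ∑ b : Bool, ∑ v : Fin k → Bool, f (Fin.cons b v) := by
  rw [← Equiv.sum_comp (Fin.consEquiv (fun _ => Bool)) f, Fintype.sum_prod_type]
  rfl

lemma dotp_cons {k : ℕ} (u : Fin (k + 1) → ℝ) (b : Bool) (v : Fin k → Bool) :
    dotp u (Fin.cons b v) = sg b * u 0 + dotp (fun l => u l.succ) v := by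
  unfold dotp
  rw [Fin.sum_univ_succ]
  simp

lemma sum_dotp_sq {k : ℕ} (u : Fin k → ℝ) :
    ∑ v : Fin k → Bool, dotp u v ^ 2 = 2 ^ k * ∑ l, u l ^ 2 := by
  induction k with
  | zero => simp [dotp]
  | succ k ih =>
    rw [sum_succ_bool (fun v => dotp u v ^ 2), Fintype.sum_bool]
    simp only [dotp_cons]
    have key : ∀ v : Fin k → Bool,
        (sg true * u 0 + dotp (fun l => u l.succ) v) ^ 2
          + (sg false * u 0 + dotp (fun l => u l.succ) v) ^ 2
        = 2 * dotp (fun l => u l.succ) v ^ 2 + 2 * u 0 ^ 2 := by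
      intro v; simp [sg]; ring
    rw [← Finset.sum_add_distrib, Finset.sum_congr rfl (fun v _ => key v),
      Finset.sum_add_distrib, ← Finset.mul_sum, ih (fun l => u l.succ),
      Finset.sum_const, Finset.card_univ]
    simp only [Fintype.card_fun, Fintype.card_bool, Fintype.card_fin, nsmul_eq_mul,
      Fin.sum_univ_succ]
    push_cast
    ring

lemma sum_dotp_quad {k : ℕ} (u : Fin k → ℝ) :
    ∑ v : Fin k → Bool, dotp u v ^ 4 ≤ 3 * 2 ^ k * (∑ l, u l ^ 2) ^ 2 := by
  induction k with
  | zero => simp [dotp]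
  | succ k ih =>
    rw [sum_succ_bool (fun v => dotp u v ^ 4), Fintype.sum_bool]
    simp only [dotp_cons]
    have key : ∀ v : Fin k → Bool,
        (sg true * u 0 + dotp (fun l => u l.succ) v) ^ 4
          + (sg false * u 0 + dotp (fun l => u l.succ) v) ^ 4
        = 2 * dotp (fun l => u l.succ) v ^ 4
            + 12 * u 0 ^ 2 * dotp (fun l => u l.succ) v ^ 2 + 2 * u 0 ^ 4 := by
      intro v; simp [sg]; ring
    rw [← Finset.sum_add_distrib, Finset.sum_congr rfl (fun v _ => key v)]
    rw [Finset.sum_add_distrib, Finset.sum_add_distrib, ← Finset.mul_sum, ← Finset.mul_sum,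
      sum_dotp_sq (fun l => u l.succ), Finset.sum_const, Finset.card_univ]
    simp only [Fintype.card_fun, Fintype.card_bool, Fintype.card_fin, nsmul_eq_mul,
      Fin.sum_univ_succ]
    push_cast
    have hS : (0:ℝ) ≤ ∑ l : Fin k, u l.succ ^ 2 := by positivity
    have h2 : (0:ℝ) < 2 ^ k := by positivity
    have hp : (2:ℝ) ^ (k + 1) = 2 * 2 ^ k := by ring
    have h3 : (0:ℝ) ≤ 2 ^ k * u 0 ^ 4 := by positivity
    have h4 : (0:ℝ) ≤ 2 ^ k * (u 0 ^ 2 * ∑ l : Fin k, u l.succ ^ 2) := by positivity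
    nlinarith [ih (fun l => u l.succ), hp, h3, h4]

lemma sum_exp_dotp {k : ℕ} (u : Fin k → ℝ) (a : ℝ) :
    ∑ v : Fin k → Bool, Real.exp (a * dotp u v)
      = ∏ l, (Real.exp (a * u l) + Real.exp (-(a * u l))) := by
  have h : ∀ v : Fin k → Bool, Real.exp (a * dotp u v)
      = ∏ l, Real.exp (a * (sg (v l) * u l)) := by
    intro v
    rw [← Real.exp_sum, dotp, Finset.mul_sum]
  simp only [h]
  rw [sum_pi_prod (fun l x => Real.exp (a * (sg x * u l)))]
  refine Finset.prod_congr rfl fun l _ => ?_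
  rw [Fintype.sum_bool]
  simp [sg]

/-! ### Gaussian integrals -/

lemma integrable_exp_lin_gauss (a : ℝ) :
    Integrable (fun g : ℝ => Real.exp (a * g - g ^ 2 / 2)) := by
  have h : ∀ g : ℝ, a * g - g ^ 2 / 2 = a ^ 2 / 2 + -2⁻¹ * (g - a) ^ 2 := fun g => by ring
  simp only [h, Real.exp_add]
  exact ((integrable_exp_neg_mul_sq (by norm_num : (0:ℝ) < 2⁻¹)).comp_sub_right a).const_mul _

lemma integral_exp_lin_gauss (a : ℝ) :
    ∫ g : ℝ, Real.exp (a * g - g ^ 2 / 2) = Real.exp (a ^ 2 / 2) * Real.sqrt (2 * π) := by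
  have h : ∀ g : ℝ, a * g - g ^ 2 / 2 = a ^ 2 / 2 + -2⁻¹ * (g - a) ^ 2 := fun g => by ring
  simp only [h, Real.exp_add]
  rw [MeasureTheory.integral_const_mul,
    integral_sub_right_eq_self (fun x : ℝ => Real.exp (-2⁻¹ * x ^ 2)) a, integral_gaussian]
  congr 1
  rw [show π / 2⁻¹ = 2 * π by ring]

/-! ### Moment generating function bounds -/

lemma sum_exp_sq_le {k : ℕ} (u : Fin k → ℝ) (hu : ∑ l, u l ^ 2 ≤ 1)
    {lam : ℝ} (hl0 : 0 < lam) (hl2 : lam < 1 / 2) :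
    ∑ v : Fin k → Bool, Real.exp (lam * dotp u v ^ 2) ≤ 2 ^ k / Real.sqrt (1 - 2 * lam) := by
  have h2l : (0:ℝ) ≤ 2 * lam := by linarith
  set c : ℝ := Real.sqrt (2 * lam) with hc
  have hc2 : c ^ 2 = 2 * lam := Real.sq_sqrt h2l
  have hsp : (0:ℝ) < Real.sqrt (2 * π) := Real.sqrt_pos.mpr (by positivity)
  rw [← mul_le_mul_iff_of_pos_right hsp]
  have hb : (0:ℝ) < 2⁻¹ - lam := by linarith
  have pointwise : ∀ g : ℝ,
      ∑ v : Fin k → Bool, Real.exp (c * dotp u v * g - g ^ 2 / 2)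
        ≤ (2 : ℝ) ^ k * Real.exp (-(2⁻¹ - lam) * g ^ 2) := by
    intro g
    have e1 : ∀ v : Fin k → Bool, Real.exp (c * dotp u v * g - g ^ 2 / 2)
        = Real.exp (c * g * dotp u v) * Real.exp (-(g ^ 2 / 2)) := by
      intro v; rw [← Real.exp_add]; congr 1; ring
    calc ∑ v : Fin k → Bool, Real.exp (c * dotp u v * g - g ^ 2 / 2)
        = (∑ v : Fin k → Bool, Real.exp (c * g * dotp u v)) * Real.exp (-(g ^ 2 / 2)) := by
          rw [Finset.sum_mul]; exact Finset.sum_congr rfl fun v _ => e1 v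
      _ = (∏ l, (Real.exp (c * g * u l) + Real.exp (-(c * g * u l)))) * Real.exp (-(g ^ 2 / 2)) := by
          rw [sum_exp_dotp u (c * g)]
      _ ≤ (∏ l, 2 * Real.exp ((c * g * u l) ^ 2 / 2)) * Real.exp (-(g ^ 2 / 2)) := by
          refine mul_le_mul_of_nonneg_right (Finset.prod_le_prod (fun l _ => by positivity)
            (fun l _ => ?_)) (Real.exp_nonneg _)
          have hch : Real.exp (c * g * u l) + Real.exp (-(c * g * u l))
              = 2 * Real.cosh (c * g * u l) := by rw [Real.cosh_eq]; ring
          rw [hch]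
          have := Real.cosh_le_exp_half_sq (c * g * u l)
          linarith
      _ = 2 ^ k * Real.exp (∑ l, (c * g * u l) ^ 2 / 2) * Real.exp (-(g ^ 2 / 2)) := by
          rw [Finset.prod_mul_distrib, Finset.prod_const, Finset.card_univ, Fintype.card_fin,
            ← Real.exp_sum]
      _ ≤ 2 ^ k * Real.exp (lam * g ^ 2) * Real.exp (-(g ^ 2 / 2)) := by
          have hsum : ∑ l, (c * g * u l) ^ 2 / 2 = lam * g ^ 2 * ∑ l, u l ^ 2 := by
            rw [Finset.mul_sum]
            refine Finset.sum_congr rfl fun l _ => ?_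
            have : (c * g * u l) ^ 2 / 2 = c ^ 2 / 2 * g ^ 2 * u l ^ 2 := by ring
            rw [this, hc2]; ring
          rw [hsum]
          have hle : lam * g ^ 2 * ∑ l, u l ^ 2 ≤ lam * g ^ 2 := by
            have hnn : (0:ℝ) ≤ lam * g ^ 2 := by positivity
            nlinarith
          exact mul_le_mul_of_nonneg_right
            (mul_le_mul_of_nonneg_left (Real.exp_le_exp.mpr hle) (by positivity))
            (Real.exp_nonneg _)
      _ = 2 ^ k * Real.exp (-(2⁻¹ - lam) * g ^ 2) := by
          rw [mul_assoc, ← Real.exp_add]; congr 2; ring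
  calc (∑ v : Fin k → Bool, Real.exp (lam * dotp u v ^ 2)) * Real.sqrt (2 * π)
      = ∑ v : Fin k → Bool, ∫ g : ℝ, Real.exp (c * dotp u v * g - g ^ 2 / 2) := by
        rw [Finset.sum_mul]
        refine Finset.sum_congr rfl fun v _ => ?_
        rw [integral_exp_lin_gauss (c * dotp u v)]
        congr 2
        have : (c * dotp u v) ^ 2 / 2 = c ^ 2 / 2 * dotp u v ^ 2 := by ring
        rw [this, hc2]; ring
    _ = ∫ g : ℝ, ∑ v : Fin k → Bool, Real.exp (c * dotp u v * g - g ^ 2 / 2) :=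
        (integral_finset_sum _ fun v _ => integrable_exp_lin_gauss _).symm
    _ ≤ ∫ g : ℝ, (2 : ℝ) ^ k * Real.exp (-(2⁻¹ - lam) * g ^ 2) := by
        refine integral_mono (integrable_finset_sum _ fun v _ => integrable_exp_lin_gauss _)
          ((integrable_exp_neg_mul_sq hb).const_mul _) ?_
        exact pointwise
    _ = (2 : ℝ) ^ k * Real.sqrt (π / (2⁻¹ - lam)) := by
        rw [MeasureTheory.integral_const_mul, integral_gaussian]
    _ = 2 ^ k / Real.sqrt (1 - 2 * lam) * Real.sqrt (2 * π) := by
        rw [show π / (2⁻¹ - lam) = 2 * π / (1 - 2 * lam) by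
          rw [div_eq_div_iff (by linarith) (by linarith)]; ring]
        rw [Real.sqrt_div (by positivity : (0:ℝ) ≤ 2 * π) (1 - 2 * lam)]
        ring

lemma exp_neg_le_quad {x : ℝ} (hx : 0 ≤ x) : Real.exp (-x) ≤ 1 - x + x ^ 2 / 2 := by
  have h1 := Real.quadratic_le_exp_of_nonneg hx
  have h2 : Real.exp (-x) * Real.exp x = 1 := by rw [← Real.exp_add]; simp
  have h3 : (0:ℝ) < Real.exp x := Real.exp_pos x
  have hq : (0:ℝ) < 1 - x + x ^ 2 / 2 := by nlinarith [sq_nonneg (x - 1)]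
  have h4 : (1:ℝ) ≤ (1 - x + x ^ 2 / 2) * Real.exp x := by nlinarith [sq_nonneg (x ^ 2)]
  have h5 : Real.exp (-x) * Real.exp x ≤ (1 - x + x ^ 2 / 2) * Real.exp x := by
    rw [h2]; linarith
  exact le_of_mul_le_mul_right h5 h3

lemma sum_exp_neg_sq_le {k : ℕ} (u : Fin k → ℝ) (hu : ∑ l, u l ^ 2 = 1)
    {lam : ℝ} (hl0 : 0 ≤ lam) :
    ∑ v : Fin k → Bool, Real.exp (-(lam * dotp u v ^ 2))
      ≤ 2 ^ k * Real.exp (-lam + 3 / 2 * lam ^ 2) := by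
  have step1 : ∑ v : Fin k → Bool, Real.exp (-(lam * dotp u v ^ 2))
      ≤ ∑ v : Fin k → Bool, (1 - lam * dotp u v ^ 2 + lam ^ 2 / 2 * dotp u v ^ 4) := by
    refine Finset.sum_le_sum fun v _ => ?_
    have := exp_neg_le_quad (x := lam * dotp u v ^ 2) (by positivity)
    have he : (lam * dotp u v ^ 2) ^ 2 / 2 = lam ^ 2 / 2 * dotp u v ^ 4 := by ring
    linarith [he ▸ this]
  have step2 : ∑ v : Fin k → Bool, (1 - lam * dotp u v ^ 2 + lam ^ 2 / 2 * dotp u v ^ 4)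
      = 2 ^ k - lam * (2 ^ k) + lam ^ 2 / 2 * ∑ v : Fin k → Bool, dotp u v ^ 4 := by
    rw [Finset.sum_add_distrib, Finset.sum_sub_distrib, Finset.sum_const, Finset.card_univ,
      ← Finset.mul_sum, ← Finset.mul_sum, sum_dotp_sq u, hu]
    simp only [Fintype.card_fun, Fintype.card_bool, Fintype.card_fin, nsmul_eq_mul]
    push_cast
    ring
  have step3 : lam ^ 2 / 2 * ∑ v : Fin k → Bool, dotp u v ^ 4
      ≤ lam ^ 2 / 2 * (3 * 2 ^ k) := by
    refine mul_le_mul_of_nonneg_left ?_ (by positivity)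
    have := sum_dotp_quad u
    rw [hu] at this
    simpa using this
  have step4 : (2:ℝ) ^ k - lam * 2 ^ k + lam ^ 2 / 2 * (3 * 2 ^ k)
      = 2 ^ k * (1 + (-lam + 3 / 2 * lam ^ 2)) := by ring
  have step5 : (1:ℝ) + (-lam + 3 / 2 * lam ^ 2) ≤ Real.exp (-lam + 3 / 2 * lam ^ 2) := by
    have := Real.add_one_le_exp (-lam + 3 / 2 * lam ^ 2)
    linarith
  have hp : (0:ℝ) ≤ (2:ℝ) ^ k := by positivity
  calc ∑ v : Fin k → Bool, Real.exp (-(lam * dotp u v ^ 2))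
      ≤ 2 ^ k - lam * (2 ^ k) + lam ^ 2 / 2 * ∑ v : Fin k → Bool, dotp u v ^ 4 := by
        rw [← step2]; exact step1
    _ ≤ 2 ^ k * (1 + (-lam + 3 / 2 * lam ^ 2)) := by rw [← step4]; linarith [step3]
    _ ≤ 2 ^ k * Real.exp (-lam + 3 / 2 * lam ^ 2) := mul_le_mul_of_nonneg_left step5 hp

/-! ### A logarithm inequality: `x - log(1+x) ≥ (743/2500) x²` on `[0,1]` -/

lemma key_log_ineq {x : ℝ} (h0 : 0 ≤ x) (h1 : x ≤ 1) :
    743 / 2500 * x ^ 2 ≤ x - Real.log (1 + x) := by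
  set f : ℝ → ℝ := fun z => z - Real.log (1 + z) - 743 / 2500 * z ^ 2 with hf
  have hder : ∀ y : ℝ, -1 < y → HasDerivAt f (1 - (1 + y)⁻¹ - 743 / 1250 * y) y := by
    intro y hy
    have h1y : (0:ℝ) < 1 + y := by linarith
    have d1 : HasDerivAt (fun z : ℝ => 1 + z) 1 y := by
      simpa using (hasDerivAt_id y).const_add (1:ℝ)
    have d2 : HasDerivAt (fun z : ℝ => Real.log (1 + z)) (1 / (1 + y)) y := by
      simpa using d1.log h1y.ne'
    have d3 : HasDerivAt (fun z : ℝ => 743 / 2500 * z ^ 2) (743 / 2500 * (2 * y)) y := by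
      have := (hasDerivAt_pow 2 y).const_mul (743 / 2500 : ℝ)
      simpa [mul_comm] using this
    have := ((hasDerivAt_id y).sub d2).sub d3
    refine this.congr_deriv ?_
    rw [one_div]
    ring
  have hcont : ∀ s : Set ℝ, s ⊆ Set.Ici (0:ℝ) → ContinuousOn f s := by
    intro s hs y hy
    exact ((hder y (by have := hs hy; simp at this; linarith)).continuousAt).continuousWithinAt
  have hmono : MonotoneOn f (Set.Icc (0:ℝ) (507/743)) := by
    apply monotoneOn_of_deriv_nonneg (convex_Icc _ _)
      (hcont _ (fun y hy => by simp at hy ⊢; linarith [hy.1]))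
    · intro y hy
      rw [interior_Icc] at hy
      exact ((hder y (by linarith [hy.1])).differentiableAt).differentiableWithinAt
    · intro y hy
      rw [interior_Icc] at hy
      obtain ⟨hy1, hy2⟩ := hy
      rw [(hder y (by linarith)).deriv]
      have h1y : (0:ℝ) < 1 + y := by linarith
      have hiv : (1 + y) * (1 + y)⁻¹ = 1 := mul_inv_cancel₀ h1y.ne'
      have hivnn : 0 ≤ (1 + y)⁻¹ := by positivity
      -- need: (1+y)⁻¹ + (743/1250) y ≤ 1, since (1+y)⁻¹ = 1 - y(1+y)⁻¹
      -- 1 - y*iv + c*y ≤ 1 ⟺ y(c - iv) ≤ 0 ⟸ iv ≥ c ⟸ 1 = iv(1+y) ... 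
      -- iv ≥ 743/1250 since 1+y ≤ 1250/743
      have hivge : (743:ℝ)/1250 ≤ (1 + y)⁻¹ := by
        rw [le_inv_comm₀ (by norm_num) h1y]
        linarith
      nlinarith [hiv, hivge, hy1.le]
  have hanti : AntitoneOn f (Set.Icc (507/743 : ℝ) 1) := by
    apply antitoneOn_of_deriv_nonpos (convex_Icc _ _)
      (hcont _ (fun y hy => by simp at hy ⊢; linarith [hy.1]))
    · intro y hy
      rw [interior_Icc] at hy
      exact ((hder y (by linarith [hy.1])).differentiableAt).differentiableWithinAt
    · intro y hy
      rw [interior_Icc] at hy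
      obtain ⟨hy1, hy2⟩ := hy
      rw [(hder y (by linarith)).deriv]
      have h1y : (0:ℝ) < 1 + y := by linarith
      have hiv : (1 + y) * (1 + y)⁻¹ = 1 := mul_inv_cancel₀ h1y.ne'
      have hivle : (1 + y)⁻¹ ≤ (743:ℝ)/1250 := by
        rw [inv_le_comm₀ h1y (by norm_num)]
        linarith
      nlinarith [hiv, hivle, hy1]
  have hf0 : f 0 = 0 := by simp [hf]
  have hf1 : 0 ≤ f 1 := by
    have hl2 : Real.log 2 < 0.6931471808 := Real.log_two_lt_d9
    have : f 1 = 1 - Real.log 2 - 743 / 2500 := by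
      simp only [hf]
      norm_num
    rw [this]
    linarith
  have hgoal : 0 ≤ f x := by
    rcases le_total x (507/743) with hx | hx
    · have := hmono (Set.mem_Icc.mpr ⟨le_refl 0, by norm_num⟩) (Set.mem_Icc.mpr ⟨h0, hx⟩) h0
      rw [hf0] at this
      exact this
    · have := hanti (Set.mem_Icc.mpr ⟨hx, h1⟩) (Set.mem_Icc.mpr ⟨by norm_num, le_refl 1⟩) h1
      linarith [hf1]
  simp only [hf] at hgoal
  linarith

/-! ### Counting (Chernoff) lemmas -/

open scoped Classical in
lemma count_upper_unit {k R : ℕ} {eps : ℝ} (he : 0 < eps) (u : Fin k → ℝ)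
    (hu : ∑ l, u l ^ 2 ≤ 1) :
    (((Finset.univ.filter fun ω : Fin R → Fin k → Bool =>
        (1 + eps) * R < ∑ t, dotp u (ω t) ^ 2).card : ℕ) : ℝ)
      ≤ 2 ^ (k * R) * Real.exp (-(R : ℝ) / 2 * (eps - Real.log (1 + eps))) := by
  have h1e : (0:ℝ) < 1 + eps := by linarith
  set lam : ℝ := eps / (2 * (1 + eps)) with hlam
  have hl0 : 0 < lam := div_pos he (by linarith)
  have hl2 : lam < 1 / 2 := by
    rw [hlam, div_lt_iff₀ (by linarith)]
    nlinarith
  have hmgf := sum_exp_sq_le u hu hl0 hl2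
  set S : (Fin R → Fin k → Bool) → ℝ := fun ω => ∑ t, dotp u (ω t) ^ 2 with hS
  set a : ℝ := (1 + eps) * R with ha
  have step1 : (((Finset.univ.filter fun ω : Fin R → Fin k → Bool => a < S ω).card : ℕ) : ℝ)
      ≤ ∑ ω : Fin R → Fin k → Bool, Real.exp (lam * (S ω - a)) := by
    calc (((Finset.univ.filter fun ω : Fin R → Fin k → Bool => a < S ω).card : ℕ) : ℝ)
        = ∑ _ω ∈ Finset.univ.filter fun ω : Fin R → Fin k → Bool => a < S ω, (1:ℝ) := by
          simp
      _ ≤ ∑ ω ∈ Finset.univ.filter fun ω : Fin R → Fin k → Bool => a < S ω,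
            Real.exp (lam * (S ω - a)) := by
          refine Finset.sum_le_sum fun ω hω => ?_
          have hw := (Finset.mem_filter.mp hω).2
          have : 0 ≤ lam * (S ω - a) := by nlinarith
          exact Real.one_le_exp this
      _ ≤ ∑ ω : Fin R → Fin k → Bool, Real.exp (lam * (S ω - a)) :=
          Finset.sum_le_sum_of_subset_of_nonneg (Finset.filter_subset _ _)
            fun ω _ _ => (Real.exp_pos _).le
  have step2 : ∑ ω : Fin R → Fin k → Bool, Real.exp (lam * (S ω - a))
      = Real.exp (-(lam * a)) * (∑ v : Fin k → Bool, Real.exp (lam * dotp u v ^ 2)) ^ R := by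
    have e1 : ∀ ω : Fin R → Fin k → Bool, Real.exp (lam * (S ω - a))
        = Real.exp (-(lam * a)) * ∏ t, Real.exp (lam * dotp u (ω t) ^ 2) := by
      intro ω
      rw [← Real.exp_sum, ← Real.exp_add]
      congr 1
      rw [hS, mul_sub, Finset.mul_sum]
      ring
    simp only [e1]
    rw [← Finset.mul_sum, sum_pi_prod_const (fun v => Real.exp (lam * dotp u v ^ 2))]
  have hnn : (0:ℝ) ≤ ∑ v : Fin k → Bool, Real.exp (lam * dotp u v ^ 2) := by positivity
  have step3 : (∑ v : Fin k → Bool, Real.exp (lam * dotp u v ^ 2)) ^ R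
      ≤ (2 ^ k / Real.sqrt (1 - 2 * lam)) ^ R := pow_le_pow_left₀ hnn hmgf R
  have h12 : 1 - 2 * lam = (1 + eps)⁻¹ := by
    have hne : (1:ℝ) + eps ≠ 0 := h1e.ne'
    have h2 : (1 - 2 * lam) * (1 + eps) = 1 := by
      rw [hlam]
      field_simp
      ring
    have h3 := inv_eq_of_mul_eq_one_right h2
    rw [← h3, inv_inv]
  have hse : Real.sqrt (1 + eps) = Real.exp (Real.log (1 + eps) / 2) := by
    conv_lhs => rw [← Real.exp_log h1e]
    rw [show Real.exp (Real.log (1 + eps)) = Real.exp (Real.log (1 + eps) / 2) ^ 2 by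
      rw [sq, ← Real.exp_add, add_halves]]
    exact Real.sqrt_sq (Real.exp_pos _).le
  have hla : lam * a = eps * R / 2 := by
    rw [hlam, ha]
    field_simp
  have hfin : Real.exp (-(lam * a)) * (2 ^ k / Real.sqrt (1 - 2 * lam)) ^ R
      = 2 ^ (k * R) * Real.exp (-(R : ℝ) / 2 * (eps - Real.log (1 + eps))) := by
    rw [h12, Real.sqrt_inv, div_eq_mul_inv, inv_inv, mul_pow, hse, ← Real.exp_nat_mul, hla,
      ← pow_mul]
    rw [show Real.exp (-(eps * (R:ℝ) / 2)) * (2 ^ (k * R) * Real.exp ((R:ℝ) * (Real.log (1 + eps) / 2)))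
        = 2 ^ (k * R) * (Real.exp (-(eps * (R:ℝ) / 2)) * Real.exp ((R:ℝ) * (Real.log (1 + eps) / 2))) by
      ring, ← Real.exp_add]
    congr 2
    ring
  calc (((Finset.univ.filter fun ω : Fin R → Fin k → Bool => a < S ω).card : ℕ) : ℝ)
      ≤ Real.exp (-(lam * a)) * (∑ v : Fin k → Bool, Real.exp (lam * dotp u v ^ 2)) ^ R := by
        rw [← step2]; exact step1
    _ ≤ Real.exp (-(lam * a)) * (2 ^ k / Real.sqrt (1 - 2 * lam)) ^ R :=
        mul_le_mul_of_nonneg_left step3 (Real.exp_pos _).le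
    _ = _ := hfin

open scoped Classical in
lemma count_lower_unit {k R : ℕ} {eps : ℝ} (he : 0 < eps) (u : Fin k → ℝ)
    (hu : ∑ l, u l ^ 2 = 1) :
    (((Finset.univ.filter fun ω : Fin R → Fin k → Bool =>
        (∑ t, dotp u (ω t) ^ 2) < (1 - eps) * R).card : ℕ) : ℝ)
      ≤ 2 ^ (k * R) * Real.exp (-(R : ℝ) * eps ^ 2 / 6) := by
  set lam : ℝ := eps / 3 with hlam
  have hl0 : 0 < lam := by positivity
  have hmgf := sum_exp_neg_sq_le u hu hl0.le
  set S : (Fin R → Fin k → Bool) → ℝ := fun ω => ∑ t, dotp u (ω t) ^ 2 with hS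
  set a : ℝ := (1 - eps) * R with ha
  have step1 : (((Finset.univ.filter fun ω : Fin R → Fin k → Bool => S ω < a).card : ℕ) : ℝ)
      ≤ ∑ ω : Fin R → Fin k → Bool, Real.exp (lam * (a - S ω)) := by
    calc (((Finset.univ.filter fun ω : Fin R → Fin k → Bool => S ω < a).card : ℕ) : ℝ)
        = ∑ _ω ∈ Finset.univ.filter fun ω : Fin R → Fin k → Bool => S ω < a, (1:ℝ) := by
          simp
      _ ≤ ∑ ω ∈ Finset.univ.filter fun ω : Fin R → Fin k → Bool => S ω < a,
            Real.exp (lam * (a - S ω)) := by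
          refine Finset.sum_le_sum fun ω hω => ?_
          have hw := (Finset.mem_filter.mp hω).2
          have : 0 ≤ lam * (a - S ω) := by nlinarith
          exact Real.one_le_exp this
      _ ≤ ∑ ω : Fin R → Fin k → Bool, Real.exp (lam * (a - S ω)) :=
          Finset.sum_le_sum_of_subset_of_nonneg (Finset.filter_subset _ _)
            fun ω _ _ => (Real.exp_pos _).le
  have step2 : ∑ ω : Fin R → Fin k → Bool, Real.exp (lam * (a - S ω))
      = Real.exp (lam * a) * (∑ v : Fin k → Bool, Real.exp (-(lam * dotp u v ^ 2))) ^ R := by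
    have e1 : ∀ ω : Fin R → Fin k → Bool, Real.exp (lam * (a - S ω))
        = Real.exp (lam * a) * ∏ t, Real.exp (-(lam * dotp u (ω t) ^ 2)) := by
      intro ω
      rw [← Real.exp_sum, ← Real.exp_add]
      congr 1
      rw [hS, mul_sub, Finset.mul_sum]
      rw [show ∑ t : Fin R, -(lam * dotp u (ω t) ^ 2) = -∑ t : Fin R, lam * dotp u (ω t) ^ 2 by
        simp]
      ring
    simp only [e1]
    rw [← Finset.mul_sum, sum_pi_prod_const (fun v => Real.exp (-(lam * dotp u v ^ 2)))]
  have hnn : (0:ℝ) ≤ ∑ v : Fin k → Bool, Real.exp (-(lam * dotp u v ^ 2)) := by positivity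
  have step3 : (∑ v : Fin k → Bool, Real.exp (-(lam * dotp u v ^ 2))) ^ R
      ≤ (2 ^ k * Real.exp (-lam + 3 / 2 * lam ^ 2)) ^ R := pow_le_pow_left₀ hnn hmgf R
  have hfin : Real.exp (lam * a) * (2 ^ k * Real.exp (-lam + 3 / 2 * lam ^ 2)) ^ R
      = 2 ^ (k * R) * Real.exp (-(R : ℝ) * eps ^ 2 / 6) := by
    rw [mul_pow, ← Real.exp_nat_mul, ← pow_mul]
    rw [show Real.exp (lam * a) * (2 ^ (k * R) * Real.exp ((R:ℝ) * (-lam + 3 / 2 * lam ^ 2)))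
      = 2 ^ (k * R) * (Real.exp (lam * a) * Real.exp ((R:ℝ) * (-lam + 3 / 2 * lam ^ 2))) by ring]
    rw [← Real.exp_add]
    congr 2
    rw [ha, hlam]
    ring
  calc (((Finset.univ.filter fun ω : Fin R → Fin k → Bool => S ω < a).card : ℕ) : ℝ)
      ≤ Real.exp (lam * a) * (∑ v : Fin k → Bool, Real.exp (-(lam * dotp u v ^ 2))) ^ R := by
        rw [← step2]; exact step1
    _ ≤ Real.exp (lam * a) * (2 ^ k * Real.exp (-lam + 3 / 2 * lam ^ 2)) ^ R :=
        mul_le_mul_of_nonneg_left step3 (Real.exp_pos _).le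
    _ = _ := hfin

open scoped Classical in
lemma count_upper {k R : ℕ} {eps : ℝ} (he : 0 < eps) (w : Fin k → ℝ) :
    (((Finset.univ.filter fun ω : Fin R → Fin k → Bool =>
        (1 + eps) * R * (∑ l, w l ^ 2) < ∑ t, dotp w (ω t) ^ 2).card : ℕ) : ℝ)
      ≤ 2 ^ (k * R) * Real.exp (-(R : ℝ) / 2 * (eps - Real.log (1 + eps))) := by
  have hν : (0:ℝ) ≤ ∑ l, w l ^ 2 := by positivity
  rcases eq_or_lt_of_le hν with h0 | hpos
  · have hwz : ∀ v : Fin k → Bool, dotp w v = 0 := by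
      intro v
      unfold dotp
      refine Finset.sum_eq_zero fun l _ => ?_
      have hl : w l ^ 2 = 0 :=
        (Finset.sum_eq_zero_iff_of_nonneg fun l _ => sq_nonneg _).mp h0.symm l (Finset.mem_univ l)
      have : w l = 0 := by
        have := sq_eq_zero_iff.mp hl
        exact this
      simp [this]
    have hempty : (Finset.univ.filter fun ω : Fin R → Fin k → Bool =>
        (1 + eps) * R * (∑ l, w l ^ 2) < ∑ t, dotp w (ω t) ^ 2) = ∅ := by
      rw [Finset.filter_eq_empty_iff]
      intro ω _
      simp [hwz, ← h0]
    rw [hempty]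
    simp
    positivity
  · set ν := ∑ l, w l ^ 2 with hνdef
    set u : Fin k → ℝ := fun l => w l / Real.sqrt ν with hudef
    have hsν : 0 < Real.sqrt ν := Real.sqrt_pos.mpr hpos
    have hsq : Real.sqrt ν ^ 2 = ν := Real.sq_sqrt hpos.le
    have hu : ∑ l, u l ^ 2 = 1 := by
      simp only [hudef, div_pow, ← Finset.sum_div, hsq]
      exact div_self hpos.ne'
    have hdot : ∀ v, dotp w v = Real.sqrt ν * dotp u v := by
      intro v
      unfold dotp
      rw [Finset.mul_sum]
      refine Finset.sum_congr rfl fun l _ => ?_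
      simp only [hudef]
      field_simp
    have hsum : ∀ ω : Fin R → Fin k → Bool,
        ∑ t, dotp w (ω t) ^ 2 = ν * ∑ t, dotp u (ω t) ^ 2 := by
      intro ω
      rw [Finset.mul_sum]
      refine Finset.sum_congr rfl fun t _ => ?_
      rw [hdot, mul_pow, hsq]
    have hfilter : (Finset.univ.filter fun ω : Fin R → Fin k → Bool =>
          (1 + eps) * R * ν < ∑ t, dotp w (ω t) ^ 2)
        = (Finset.univ.filter fun ω : Fin R → Fin k → Bool =>
          (1 + eps) * R < ∑ t, dotp u (ω t) ^ 2) := by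
      refine Finset.filter_congr fun ω _ => ?_
      rw [hsum ω, show (1 + eps) * R * ν = ν * ((1 + eps) * R) by ring]
      exact mul_lt_mul_iff_right₀ hpos
    rw [hfilter]
    exact count_upper_unit he u hu.le

open scoped Classical in
lemma count_lower {k R : ℕ} {eps : ℝ} (he : 0 < eps) (w : Fin k → ℝ) :
    (((Finset.univ.filter fun ω : Fin R → Fin k → Bool =>
        (∑ t, dotp w (ω t) ^ 2) < (1 - eps) * R * (∑ l, w l ^ 2)).card : ℕ) : ℝ)
      ≤ 2 ^ (k * R) * Real.exp (-(R : ℝ) * eps ^ 2 / 6) := by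
  have hν : (0:ℝ) ≤ ∑ l, w l ^ 2 := by positivity
  rcases eq_or_lt_of_le hν with h0 | hpos
  · have hempty : (Finset.univ.filter fun ω : Fin R → Fin k → Bool =>
        (∑ t, dotp w (ω t) ^ 2) < (1 - eps) * R * (∑ l, w l ^ 2)) = ∅ := by
      rw [Finset.filter_eq_empty_iff]
      intro ω _
      rw [← h0]
      simp only [mul_zero, not_lt]
      positivity
    rw [hempty]
    simp
    positivity
  · set ν := ∑ l, w l ^ 2 with hνdef
    set u : Fin k → ℝ := fun l => w l / Real.sqrt ν with hudef
    have hsν : 0 < Real.sqrt ν := Real.sqrt_pos.mpr hpos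
    have hsq : Real.sqrt ν ^ 2 = ν := Real.sq_sqrt hpos.le
    have hu : ∑ l, u l ^ 2 = 1 := by
      simp only [hudef, div_pow, ← Finset.sum_div, hsq]
      exact div_self hpos.ne'
    have hdot : ∀ v, dotp w v = Real.sqrt ν * dotp u v := by
      intro v
      unfold dotp
      rw [Finset.mul_sum]
      refine Finset.sum_congr rfl fun l _ => ?_
      simp only [hudef]
      field_simp
    have hsum : ∀ ω : Fin R → Fin k → Bool,
        ∑ t, dotp w (ω t) ^ 2 = ν * ∑ t, dotp u (ω t) ^ 2 := by
      intro ω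
      rw [Finset.mul_sum]
      refine Finset.sum_congr rfl fun t _ => ?_
      rw [hdot, mul_pow, hsq]
    have hfilter : (Finset.univ.filter fun ω : Fin R → Fin k → Bool =>
          (∑ t, dotp w (ω t) ^ 2) < (1 - eps) * R * ν)
        = (Finset.univ.filter fun ω : Fin R → Fin k → Bool =>
          (∑ t, dotp u (ω t) ^ 2) < (1 - eps) * R) := by
      refine Finset.filter_congr fun ω _ => ?_
      rw [hsum ω, show (1 - eps) * R * ν = ν * ((1 - eps) * R) by ring]
      exact mul_lt_mul_iff_right₀ hpos
    rw [hfilter]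
    exact count_lower_unit he u hu

/-! ### gamma₂ basics -/

lemma rowNorm_nonneg {a k : ℕ} (X : Matrix (Fin a) (Fin k) ℝ) : 0 ≤ rowNormTwoInf X := by
  rcases isEmpty_or_nonempty (Fin a) with h | h
  · rw [rowNormTwoInf, Real.iSup_of_isEmpty]
  · obtain ⟨i⟩ := h
    refine (Real.sqrt_nonneg (∑ j, X i j ^ 2)).trans ?_
    exact le_ciSup (f := fun i => Real.sqrt (∑ j, X i j ^ 2))
      (Set.Finite.bddAbove (Set.finite_range _)) i

lemma row_le_rowNorm {a k : ℕ} (X : Matrix (Fin a) (Fin k) ℝ) (i : Fin a) :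
    Real.sqrt (∑ j, X i j ^ 2) ≤ rowNormTwoInf X :=
  le_ciSup (f := fun i => Real.sqrt (∑ j, X i j ^ 2))
    (Set.Finite.bddAbove (Set.finite_range _)) i

lemma gammaSet_nonempty {a b : ℕ} (A : Matrix (Fin a) (Fin b) ℝ) :
    { t | ∃ (k : ℕ) (X : Matrix (Fin a) (Fin k) ℝ) (Y : Matrix (Fin b) (Fin k) ℝ),
      A = X * Yᵀ ∧ t = rowNormTwoInf X * rowNormTwoInf Y }.Nonempty :=
  ⟨rowNormTwoInf A * rowNormTwoInf (1 : Matrix (Fin b) (Fin b) ℝ), b, A, 1, by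
    rw [Matrix.transpose_one, Matrix.mul_one], rfl⟩

lemma gammaSet_nonneg {a b : ℕ} (A : Matrix (Fin a) (Fin b) ℝ) :
    ∀ t ∈ { t | ∃ (k : ℕ) (X : Matrix (Fin a) (Fin k) ℝ) (Y : Matrix (Fin b) (Fin k) ℝ),
      A = X * Yᵀ ∧ t = rowNormTwoInf X * rowNormTwoInf Y }, 0 ≤ t := by
  rintro t ⟨k, X, Y, -, rfl⟩
  exact mul_nonneg (rowNorm_nonneg X) (rowNorm_nonneg Y)

lemma gamma2_nonneg {a b : ℕ} (A : Matrix (Fin a) (Fin b) ℝ) : 0 ≤ gamma2 A :=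
  Real.sInf_nonneg (gammaSet_nonneg A)

lemma abs_entry_le_gamma2 {a b : ℕ} (A : Matrix (Fin a) (Fin b) ℝ) (i : Fin a) (j : Fin b) :
    |A i j| ≤ gamma2 A := by
  refine le_csInf (gammaSet_nonempty A) ?_
  rintro t ⟨k, X, Y, hA, rfl⟩
  have hcs : |A i j| ≤ Real.sqrt (∑ l, X i l ^ 2) * Real.sqrt (∑ l, Y j l ^ 2) := by
    rw [hA, Matrix.mul_apply]
    simp only [Matrix.transpose_apply]
    have h := Finset.sum_mul_sq_le_sq_mul_sq Finset.univ (fun l => X i l) (fun l => Y j l)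
    calc |∑ l, X i l * Y j l| = Real.sqrt ((∑ l, X i l * Y j l) ^ 2) :=
          (Real.sqrt_sq_eq_abs _).symm
      _ ≤ Real.sqrt ((∑ l, X i l ^ 2) * ∑ l, Y j l ^ 2) := Real.sqrt_le_sqrt h
      _ = _ := Real.sqrt_mul (by positivity) _
  exact hcs.trans (mul_le_mul (row_le_rowNorm X i) (row_le_rowNorm Y j)
    (Real.sqrt_nonneg _) (rowNorm_nonneg X))

/-- For every `ε ∈ (0,1)` and `r = ⌈9 log(3 n₁ n₂) / ε²⌉`, every real `n₁ × n₂` matrix `A`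
admits an approximation `B` of rank at most `r` with `‖A − B‖_max ≤ ε · γ₂(A)`. -/
theorem matrix_entrywise_approx (ε : ℝ) (hε0 : 0 < ε) (hε1 : ε < 1) (n₁ n₂ : ℕ)
    (A : Matrix (Fin n₁) (Fin n₂) ℝ) :
    ∃ B : Matrix (Fin n₁) (Fin n₂) ℝ,
      B.rank ≤ ⌈9 * Real.log (3 * n₁ * n₂) / ε ^ 2⌉₊ ∧
      maxNorm (A - B) ≤ ε * gamma2 A := by
  classical
  rcases Nat.eq_zero_or_pos n₁ with hn1 | hn1
  · subst hn1
    refine ⟨0, ?_, ?_⟩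
    · exact (Matrix.rank_le_card_height 0).trans (by simp)
    · have h0 : maxNorm (A - 0) = 0 := by
        rw [maxNorm]
        exact Real.iSup_of_isEmpty _
      rw [h0]
      exact mul_nonneg hε0.le (gamma2_nonneg A)
  rcases Nat.eq_zero_or_pos n₂ with hn2 | hn2
  · subst hn2
    haveI : Nonempty (Fin n₁) := ⟨⟨0, hn1⟩⟩
    refine ⟨0, ?_, ?_⟩
    · exact (Matrix.rank_le_card_width 0).trans (by simp)
    · have h0 : maxNorm (A - 0) = 0 := by
        rw [maxNorm]
        simp [Real.iSup_of_isEmpty, ciSup_const]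
      rw [h0]
      exact mul_nonneg hε0.le (gamma2_nonneg A)
  haveI hne1 : Nonempty (Fin n₁) := ⟨⟨0, hn1⟩⟩
  haveI hne2 : Nonempty (Fin n₂) := ⟨⟨0, hn2⟩⟩
  have hγ0 : 0 ≤ gamma2 A := gamma2_nonneg A
  rcases eq_or_lt_of_le hγ0 with hγz | hγpos
  · refine ⟨0, ?_, ?_⟩
    · rw [Matrix.rank_zero]
      exact Nat.zero_le _
    · rw [maxNorm]
      refine ciSup_le fun i => ciSup_le fun j => ?_
      have h1 := abs_entry_le_gamma2 A i j
      have h2 : (A - 0) i j = A i j := by simp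
      have h3 : ε * gamma2 A = 0 := by rw [← hγz]; ring
      rw [h2, h3]
      linarith [hγz ▸ h1]
  -- main case
  set m : ℝ := (n₁ : ℝ) * n₂ with hm
  have hm1 : (1:ℝ) ≤ m := by
    rw [hm]
    have h1 : (1:ℝ) ≤ (n₁:ℝ) := by exact_mod_cast hn1
    have h2 : (1:ℝ) ≤ (n₂:ℝ) := by exact_mod_cast hn2
    nlinarith
  have h3m : (3 : ℝ) * (n₁:ℝ) * (n₂:ℝ) = 3 * m := by rw [hm]; ring
  have hLpos : 0 < Real.log (3 * (n₁:ℝ) * n₂) := by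
    apply Real.log_pos
    rw [h3m]
    nlinarith
  set L : ℝ := Real.log (3 * (n₁:ℝ) * n₂) with hL
  set Rn : ℕ := ⌈9 * Real.log (3 * (n₁:ℝ) * n₂) / ε ^ 2⌉₊ with hRn
  have hRL : 9 * L / ε ^ 2 ≤ (Rn : ℝ) := Nat.le_ceil _
  have hRpos : 0 < Rn := by
    rw [hRn]
    apply Nat.ceil_pos.mpr
    positivity
  have hRr : (0:ℝ) < (Rn:ℝ) := by exact_mod_cast hRpos
  -- pick a near-optimal factorization
  have hlt : sInf { t | ∃ (k : ℕ) (X : Matrix (Fin n₁) (Fin k) ℝ) (Y : Matrix (Fin n₂) (Fin k) ℝ),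
      A = X * Yᵀ ∧ t = rowNormTwoInf X * rowNormTwoInf Y } < gamma2 A * (1001 / 1000) := by
    have h : gamma2 A < gamma2 A * (1001 / 1000) := by nlinarith
    exact h
  obtain ⟨t0, ht0mem, ht0lt⟩ := (csInf_lt_iff ⟨0, fun t ht => gammaSet_nonneg A t ht⟩
    (gammaSet_nonempty A)).mp hlt
  obtain ⟨k, X, Y, hAXY, ht0⟩ := ht0mem
  have ht0nn : 0 ≤ t0 := ht0 ▸ mul_nonneg (rowNorm_nonneg X) (rowNorm_nonneg Y)
  set ε' : ℝ := 1000 / 1001 * ε with hε'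
  have hε'0 : 0 < ε' := by rw [hε']; positivity
  have hε'1 : ε' ≤ 1 := by
    rw [hε']
    nlinarith [hε0.le, hε1]
  -- numeric bounds for the exponents
  have hup : 4 / 3 * L ≤ (Rn:ℝ) / 2 * (ε' - Real.log (1 + ε')) := by
    have hkey := key_log_ineq hε'0.le hε'1
    have s1 : (Rn:ℝ) / 2 * (743 / 2500 * ε' ^ 2) ≤ (Rn:ℝ) / 2 * (ε' - Real.log (1 + ε')) :=
      mul_le_mul_of_nonneg_left hkey (by positivity)
    have s2 : 9 * L / ε ^ 2 / 2 * (743 / 2500 * ε' ^ 2) ≤ (Rn:ℝ) / 2 * (743 / 2500 * ε' ^ 2) :=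
      mul_le_mul_of_nonneg_right (by linarith) (by positivity)
    have s3 : 4 / 3 * L ≤ 9 * L / ε ^ 2 / 2 * (743 / 2500 * ε' ^ 2) := by
      have he2 : ε ^ 2 ≠ 0 := pow_ne_zero 2 hε0.ne'
      rw [show 9 * L / ε ^ 2 / 2 * (743 / 2500 * ε' ^ 2)
          = L * (9 / 2 * (743 / 2500) * (1000 / 1001) ^ 2) * (ε ^ 2 / ε ^ 2) by rw [hε']; ring]
      rw [div_self he2, mul_one]
      have hc : (4:ℝ) / 3 ≤ 9 / 2 * (743 / 2500) * (1000 / 1001) ^ 2 := by norm_num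
      calc 4 / 3 * L = L * (4 / 3) := by ring
        _ ≤ L * (9 / 2 * (743 / 2500) * (1000 / 1001) ^ 2) :=
            mul_le_mul_of_nonneg_left hc hLpos.le
    linarith
  have hdn : 4 / 3 * L ≤ (Rn:ℝ) * ε' ^ 2 / 6 := by
    have he2 : ε ^ 2 ≠ 0 := pow_ne_zero 2 hε0.ne'
    have s2 : 9 * L / ε ^ 2 * ε' ^ 2 / 6 ≤ (Rn:ℝ) * ε' ^ 2 / 6 := by
      have := mul_le_mul_of_nonneg_right hRL (by positivity : (0:ℝ) ≤ ε' ^ 2)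
      linarith
    have s3 : 4 / 3 * L ≤ 9 * L / ε ^ 2 * ε' ^ 2 / 6 := by
      rw [show 9 * L / ε ^ 2 * ε' ^ 2 / 6 = L * (9 / 6 * (1000 / 1001) ^ 2) * (ε ^ 2 / ε ^ 2) by
        rw [hε']; ring]
      rw [div_self he2, mul_one]
      have hc : (4:ℝ) / 3 ≤ 9 / 6 * (1000 / 1001) ^ 2 := by norm_num
      calc 4 / 3 * L = L * (4 / 3) := by ring
        _ ≤ L * (9 / 6 * (1000 / 1001) ^ 2) := mul_le_mul_of_nonneg_left hc hLpos.le
    linarith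
  -- test vectors
  set wv : Fin n₁ → Fin n₂ → Bool → (Fin k → ℝ) :=
    fun i j b => fun l => X i l / Real.sqrt (∑ l', X i l' ^ 2)
      + sg b * (Y j l / Real.sqrt (∑ l', Y j l' ^ 2)) with hwv
  -- bad events
  set Bad : Fin n₁ × Fin n₂ × Bool × Bool → Finset (Fin Rn → Fin k → Bool) := fun e =>
    cond e.2.2.2
      (Finset.univ.filter fun ω => (1 + ε') * (Rn:ℝ) * (∑ l, wv e.1 e.2.1 e.2.2.1 l ^ 2)
        < ∑ t, dotp (wv e.1 e.2.1 e.2.2.1) (ω t) ^ 2)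
      (Finset.univ.filter fun ω => (∑ t, dotp (wv e.1 e.2.1 e.2.2.1) (ω t) ^ 2)
        < (1 - ε') * (Rn:ℝ) * (∑ l, wv e.1 e.2.1 e.2.2.1 l ^ 2)) with hBad
  have hcard : ∀ e, (((Bad e).card : ℕ) : ℝ) ≤ 2 ^ (k * Rn) * Real.exp (-(4 / 3 * L)) := by
    intro e
    rcases Bool.eq_false_or_eq_true e.2.2.2 with hb | hb
    · rw [hBad]
      simp only [hb, cond_true]
      refine (count_upper hε'0 (wv e.1 e.2.1 e.2.2.1)).trans ?_
      refine mul_le_mul_of_nonneg_left ?_ (by positivity)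
      exact Real.exp_le_exp.mpr (by linarith [hup])
    · rw [hBad]
      simp only [hb, cond_false]
      refine (count_lower hε'0 (wv e.1 e.2.1 e.2.2.1)).trans ?_
      refine mul_le_mul_of_nonneg_left ?_ (by positivity)
      exact Real.exp_le_exp.mpr (by linarith [hdn])
  -- union bound
  have hex : ∃ ω : Fin Rn → Fin k → Bool, ∀ e, ω ∉ Bad e := by
    by_contra hcon
    push_neg at hcon
    have hsub : (Finset.univ : Finset (Fin Rn → Fin k → Bool)) ⊆ Finset.univ.biUnion Bad := by
      intro ω _
      obtain ⟨e, he⟩ := hcon ω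
      exact Finset.mem_biUnion.mpr ⟨e, Finset.mem_univ _, he⟩
    have h1 : (Fintype.card (Fin Rn → Fin k → Bool) : ℝ)
        ≤ ∑ e : Fin n₁ × Fin n₂ × Bool × Bool, (((Bad e).card : ℕ) : ℝ) := by
      have hn := (Finset.card_le_card hsub).trans Finset.card_biUnion_le
      rw [Finset.card_univ] at hn
      calc (Fintype.card (Fin Rn → Fin k → Bool) : ℝ)
          ≤ ((∑ e : Fin n₁ × Fin n₂ × Bool × Bool, (Bad e).card : ℕ) : ℝ) := by exact_mod_cast hn
        _ = _ := by push_cast; rfl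
    have h2 : ∑ e : Fin n₁ × Fin n₂ × Bool × Bool, (((Bad e).card : ℕ) : ℝ)
        ≤ 4 * m * (2 ^ (k * Rn) * Real.exp (-(4 / 3 * L))) := by
      calc ∑ e : Fin n₁ × Fin n₂ × Bool × Bool, (((Bad e).card : ℕ) : ℝ)
          ≤ (Finset.univ : Finset (Fin n₁ × Fin n₂ × Bool × Bool)).card
              • (2 ^ (k * Rn) * Real.exp (-(4 / 3 * L))) :=
            Finset.sum_le_card_nsmul _ _ _ (fun e _ => hcard e)
        _ = _ := by
            simp only [Finset.card_univ, Fintype.card_prod, Fintype.card_fin, Fintype.card_bool,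
              nsmul_eq_mul, hm]
            push_cast
            ring
    have hm2 : (1:ℝ) ≤ m ^ 2 := by nlinarith
    have hm3 : (1:ℝ) ≤ m ^ 3 := by nlinarith
    have h3 : Real.log (4 * m) < 4 / 3 * L := by
      have e1 : Real.log ((4 * m) ^ 3) < Real.log ((3 * (n₁:ℝ) * n₂) ^ 4) := by
        apply Real.log_lt_log (by positivity)
        rw [h3m]
        have hmul := mul_le_mul_of_nonneg_left hm1 (show (0:ℝ) ≤ 81 * m ^ 3 by positivity)
        nlinarith [hmul, hm3]
      rw [Real.log_pow, Real.log_pow] at e1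
      push_cast at e1
      rw [hL]
      linarith
    have h4 : 4 * m * Real.exp (-(4 / 3 * L)) < 1 := by
      rw [show (4 * m) = Real.exp (Real.log (4 * m)) from (Real.exp_log (by nlinarith)).symm,
        ← Real.exp_add]
      rw [show (1:ℝ) = Real.exp 0 from (Real.exp_zero).symm]
      exact Real.exp_lt_exp.mpr (by linarith)
    have h5 : (Fintype.card (Fin Rn → Fin k → Bool) : ℝ) = 2 ^ (k * Rn) := by
      rw [show Fintype.card (Fin Rn → Fin k → Bool) = 2 ^ (k * Rn) by
        rw [Fintype.card_fun, Fintype.card_fun, Fintype.card_bool, Fintype.card_fin,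
          Fintype.card_fin, ← pow_mul]]
      push_cast
      ring
    have hp : (0:ℝ) < 2 ^ (k * Rn) := by positivity
    rw [h5] at h1
    nlinarith [h1, h2, mul_lt_mul_of_pos_left h4 hp]
  obtain ⟨ω, hω⟩ := hex
  have hgoodF : ∀ i j b,
      |(∑ t, dotp (wv i j b) (ω t) ^ 2) - (Rn:ℝ) * (∑ l, wv i j b l ^ 2)|
        ≤ ε' * (Rn:ℝ) * (∑ l, wv i j b l ^ 2) := by
    intro i j b
    have h1 := hω (i, j, b, true)
    have h2 := hω (i, j, b, false)
    rw [hBad] at h1 h2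
    simp only [cond_true, cond_false, Finset.mem_filter, Finset.mem_univ, true_and,
      not_lt] at h1 h2
    rw [abs_le]
    have hνnn : (0:ℝ) ≤ ∑ l, wv i j b l ^ 2 := by positivity
    constructor <;> nlinarith [h1, h2, mul_nonneg (mul_nonneg hε'0.le hRr.le) hνnn]
  -- the low-rank approximation
  set P : Matrix (Fin n₁) (Fin Rn) ℝ := Matrix.of fun i t => dotp (fun l => X i l) (ω t) with hP
  set Q : Matrix (Fin n₂) (Fin Rn) ℝ :=
    Matrix.of fun j t => (Rn:ℝ)⁻¹ * dotp (fun l => Y j l) (ω t) with hQ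
  refine ⟨P * Qᵀ, ?_, ?_⟩
  · refine (Matrix.rank_mul_le_left P Qᵀ).trans ?_
    refine (Matrix.rank_le_card_width P).trans ?_
    rw [Fintype.card_fin]
  · rw [maxNorm]
    refine ciSup_le fun i => ciSup_le fun j => ?_
    have hεγnn : 0 ≤ ε * gamma2 A := mul_nonneg hε0.le hγ0
    have hAij : A i j = ∑ l, X i l * Y j l := by
      rw [hAXY, Matrix.mul_apply]
      simp [Matrix.transpose_apply]
    have hBij : (P * Qᵀ) i j
        = ∑ t, dotp (fun l => X i l) (ω t) * ((Rn:ℝ)⁻¹ * dotp (fun l => Y j l) (ω t)) := by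
      rw [Matrix.mul_apply]
      simp [hP, hQ, Matrix.transpose_apply]
    rw [Matrix.sub_apply, hAij, hBij]
    by_cases hxz : (∑ l, X i l ^ 2) = 0
    · have hX0 : ∀ l, X i l = 0 := fun l =>
        sq_eq_zero_iff.mp
          ((Finset.sum_eq_zero_iff_of_nonneg fun l _ => sq_nonneg _).mp hxz l (Finset.mem_univ l))
      have hd : ∀ t, dotp (fun l => X i l) (ω t) = 0 := by
        intro t
        unfold dotp
        exact Finset.sum_eq_zero fun l _ => by simp [hX0 l]
      have hz : (∑ l, X i l * Y j l) - ∑ t, dotp (fun l => X i l) (ω t)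
          * ((Rn:ℝ)⁻¹ * dotp (fun l => Y j l) (ω t)) = 0 := by
        simp only [hd]
        rw [Finset.sum_eq_zero fun l _ => by rw [hX0 l, zero_mul]]
        simp
      rw [hz, abs_zero]
      exact hεγnn
    by_cases hyz : (∑ l, Y j l ^ 2) = 0
    · have hY0 : ∀ l, Y j l = 0 := fun l =>
        sq_eq_zero_iff.mp
          ((Finset.sum_eq_zero_iff_of_nonneg fun l _ => sq_nonneg _).mp hyz l (Finset.mem_univ l))
      have hd : ∀ t, dotp (fun l => Y j l) (ω t) = 0 := by
        intro t
        unfold dotp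
        exact Finset.sum_eq_zero fun l _ => by simp [hY0 l]
      have hz : (∑ l, X i l * Y j l) - ∑ t, dotp (fun l => X i l) (ω t)
          * ((Rn:ℝ)⁻¹ * dotp (fun l => Y j l) (ω t)) = 0 := by
        simp only [hd]
        rw [Finset.sum_eq_zero fun l _ => by rw [hY0 l, mul_zero]]
        simp
      rw [hz, abs_zero]
      exact hεγnn
    -- both rows nonzero
    have hxpos : 0 < ∑ l, X i l ^ 2 := lt_of_le_of_ne (by positivity) (Ne.symm hxz)
    have hypos : 0 < ∑ l, Y j l ^ 2 := lt_of_le_of_ne (by positivity) (Ne.symm hyz)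
    have hapos : 0 < Real.sqrt (∑ l, X i l ^ 2) := Real.sqrt_pos.mpr hxpos
    have hcpos : 0 < Real.sqrt (∑ l, Y j l ^ 2) := Real.sqrt_pos.mpr hypos
    have ha2 : Real.sqrt (∑ l, X i l ^ 2) ^ 2 = ∑ l, X i l ^ 2 := Real.sq_sqrt hxpos.le
    have hc2 : Real.sqrt (∑ l, Y j l ^ 2) ^ 2 = ∑ l, Y j l ^ 2 := Real.sq_sqrt hypos.le
    set u : Fin k → ℝ := fun l => X i l / Real.sqrt (∑ l', X i l' ^ 2) with hu
    set v : Fin k → ℝ := fun l => Y j l / Real.sqrt (∑ l', Y j l' ^ 2) with hv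
    have hwvu : ∀ b, wv i j b = fun l => u l + sg b * v l := by
      intro b
      funext l
      simp only [hwv, hu, hv]
    have hu1 : ∑ l, u l ^ 2 = 1 := by
      simp only [hu, div_pow, ← Finset.sum_div, ha2]
      exact div_self hxz
    have hv1 : ∑ l, v l ^ 2 = 1 := by
      simp only [hv, div_pow, ← Finset.sum_div, hc2]
      exact div_self hyz
    have hXu : ∀ l, X i l = Real.sqrt (∑ l', X i l' ^ 2) * u l := by
      intro l
      simp only [hu]
      field_simp
    have hYv : ∀ l, Y j l = Real.sqrt (∑ l', Y j l' ^ 2) * v l := by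
      intro l
      simp only [hv]
      field_simp
    have hdu : ∀ t, dotp (fun l => X i l) (ω t) = Real.sqrt (∑ l', X i l' ^ 2) * dotp u (ω t) := by
      intro t
      unfold dotp
      rw [Finset.mul_sum]
      exact Finset.sum_congr rfl fun l _ => by beta_reduce; rw [hXu l]; ring
    have hdv : ∀ t, dotp (fun l => Y j l) (ω t) = Real.sqrt (∑ l', Y j l' ^ 2) * dotp v (ω t) := by
      intro t
      unfold dotp
      rw [Finset.mul_sum]
      exact Finset.sum_congr rfl fun l _ => by beta_reduce; rw [hYv l]; ring
    set Sc : ℝ := ∑ l, u l * v l with hScdef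
    have hsg2 : ∀ b : Bool, sg b ^ 2 = 1 := by intro b; cases b <;> simp [sg]
    have hν : ∀ b, ∑ l, wv i j b l ^ 2 = 2 + sg b * (2 * Sc) := by
      intro b
      rw [hwvu b]
      have hpt : ∀ l, (u l + sg b * v l) ^ 2
          = u l ^ 2 + v l ^ 2 + sg b * (2 * (u l * v l)) := by
        intro l
        linear_combination v l ^ 2 * hsg2 b
      rw [Finset.sum_congr rfl fun l _ => hpt l]
      rw [Finset.sum_add_distrib, Finset.sum_add_distrib, hu1, hv1, ← Finset.mul_sum,
        ← Finset.mul_sum, hScdef]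
      ring
    have hdw : ∀ b t, dotp (wv i j b) (ω t) = dotp u (ω t) + sg b * dotp v (ω t) := by
      intro b t
      rw [hwvu b]
      unfold dotp
      simp only [mul_add]
      rw [Finset.sum_add_distrib]
      congr 1
      rw [Finset.mul_sum]
      exact Finset.sum_congr rfl fun l _ => by ring
    set D : ℝ := ∑ t, dotp u (ω t) * dotp v (ω t) with hDdef
    have h4D : 4 * D = (∑ t, dotp (wv i j true) (ω t) ^ 2)
        - ∑ t, dotp (wv i j false) (ω t) ^ 2 := by
      rw [← Finset.sum_sub_distrib, hDdef, Finset.mul_sum]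
      exact Finset.sum_congr rfl fun t _ => by
        rw [hdw true t, hdw false t]
        simp [sg]
        ring
    have hνt := hν true
    have hνf := hν false
    have hSc4 : 4 * Sc = (∑ l, wv i j true l ^ 2) - ∑ l, wv i j false l ^ 2 := by
      rw [hνt, hνf]
      simp [sg]
      ring
    have hνtnn : (0:ℝ) ≤ ∑ l, wv i j true l ^ 2 := by positivity
    have hνfnn : (0:ℝ) ≤ ∑ l, wv i j false l ^ 2 := by positivity
    have hνsum : (∑ l, wv i j true l ^ 2) + (∑ l, wv i j false l ^ 2) = 4 := by
      rw [hνt, hνf]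
      simp [sg]
      ring
    have hgt := hgoodF i j true
    have hgf := hgoodF i j false
    rw [abs_le] at hgt hgf
    have hmulsum : ε' * (Rn:ℝ) * (∑ l, wv i j true l ^ 2)
        + ε' * (Rn:ℝ) * (∑ l, wv i j false l ^ 2) = 4 * (ε' * (Rn:ℝ)) := by
      linear_combination (ε' * (Rn:ℝ)) * hνsum
    have hkey : |(Rn:ℝ) * Sc - D| ≤ ε' * (Rn:ℝ) := by
      have hcomb : 4 * ((Rn:ℝ) * Sc - D)
          = ((Rn:ℝ) * (∑ l, wv i j true l ^ 2) - ∑ t, dotp (wv i j true) (ω t) ^ 2)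
            - ((Rn:ℝ) * (∑ l, wv i j false l ^ 2) - ∑ t, dotp (wv i j false) (ω t) ^ 2) := by
        linear_combination (Rn:ℝ) * hSc4 - h4D
      rw [abs_le]
      constructor
      · linarith [hgt.1, hgt.2, hgf.1, hgf.2, hcomb, hmulsum]
      · linarith [hgt.1, hgt.2, hgf.1, hgf.2, hcomb, hmulsum]
    have hAval : ∑ l, X i l * Y j l
        = Real.sqrt (∑ l', X i l' ^ 2) * Real.sqrt (∑ l', Y j l' ^ 2) * Sc := by
      rw [hScdef, Finset.mul_sum]
      exact Finset.sum_congr rfl fun l _ => by beta_reduce; rw [hXu l, hYv l]; ring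
    have hBval : ∑ t, dotp (fun l => X i l) (ω t) * ((Rn:ℝ)⁻¹ * dotp (fun l => Y j l) (ω t))
        = Real.sqrt (∑ l', X i l' ^ 2) * Real.sqrt (∑ l', Y j l' ^ 2) * (Rn:ℝ)⁻¹ * D := by
      rw [hDdef, Finset.mul_sum]
      exact Finset.sum_congr rfl fun t _ => by rw [hdu t, hdv t]; ring
    rw [hAval, hBval]
    have hdiff : Real.sqrt (∑ l', X i l' ^ 2) * Real.sqrt (∑ l', Y j l' ^ 2) * Sc
        - Real.sqrt (∑ l', X i l' ^ 2) * Real.sqrt (∑ l', Y j l' ^ 2) * (Rn:ℝ)⁻¹ * D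
        = Real.sqrt (∑ l', X i l' ^ 2) * Real.sqrt (∑ l', Y j l' ^ 2) * (Rn:ℝ)⁻¹
            * ((Rn:ℝ) * Sc - D) := by
      field_simp
    rw [hdiff, abs_mul,
      abs_of_nonneg (by positivity :
        (0:ℝ) ≤ Real.sqrt (∑ l', X i l' ^ 2) * Real.sqrt (∑ l', Y j l' ^ 2) * (Rn:ℝ)⁻¹)]
    have hstep : Real.sqrt (∑ l', X i l' ^ 2) * Real.sqrt (∑ l', Y j l' ^ 2) * (Rn:ℝ)⁻¹
          * |(Rn:ℝ) * Sc - D|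
        ≤ Real.sqrt (∑ l', X i l' ^ 2) * Real.sqrt (∑ l', Y j l' ^ 2) * (Rn:ℝ)⁻¹
          * (ε' * (Rn:ℝ)) :=
      mul_le_mul_of_nonneg_left hkey (by positivity)
    have heq : Real.sqrt (∑ l', X i l' ^ 2) * Real.sqrt (∑ l', Y j l' ^ 2) * (Rn:ℝ)⁻¹
          * (ε' * (Rn:ℝ))
        = Real.sqrt (∑ l', X i l' ^ 2) * Real.sqrt (∑ l', Y j l' ^ 2) * ε' := by
      field_simp
    have hrow : Real.sqrt (∑ l', X i l' ^ 2) * Real.sqrt (∑ l', Y j l' ^ 2) * ε' ≤ t0 * ε' := by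
      rw [ht0]
      refine mul_le_mul_of_nonneg_right ?_ hε'0.le
      exact mul_le_mul (row_le_rowNorm X i) (row_le_rowNorm Y j) (Real.sqrt_nonneg _)
        (rowNorm_nonneg X)
    have hlast : t0 * ε' ≤ ε * gamma2 A := by
      rw [hε']
      have h1 : t0 * (1000 / 1001 * ε) ≤ gamma2 A * (1001 / 1000) * (1000 / 1001 * ε) :=
        mul_le_mul_of_nonneg_right ht0lt.le (by positivity)
      have h2 : gamma2 A * (1001 / 1000) * (1000 / 1001 * ε) = ε * gamma2 A := by ring
      linarith
    linarith [hstep, heq, hrow, hlast]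

end Stmt0
end

section
/- Let ‖·‖_∘ be a matrix norm defined for real matrices of all sizes that is submultiplicative, i.e. ‖AB‖_∘ ≤ ‖A‖_∘·‖B‖_∘ for all matrices A, B of compatible sizes. Then for every d ≥ 2 and every tensor A ∈ ℝ^{n₁×⋯×n_d}: (i) γ_∘^TT(A) = 0 if and only if A = 0; (ii) γ_∘^TT(c·A) = |c|·γ_∘^TT(A) for every c ∈ ℝ. -/
open scoped BigOperators Pointwise
open Matrix

namespace TT

/-- Evaluation of a tensor-train factorization: `A(i₁,…,i_d) = Σ_α Π_s G_s(α_{s-1}, i_s, α_s)`. -/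
noncomputable def ttEval {d : ℕ} (n : Fin d → ℕ) (ρ : Fin (d + 1) → ℕ)
    (G : ∀ s : Fin d, Fin (ρ s.castSucc) → Fin (n s) → Fin (ρ s.succ) → ℝ) :
    (∀ s : Fin d, Fin (n s)) → ℝ := fun i =>
  ∑ α : ∀ s : Fin (d + 1), Fin (ρ s), ∏ s : Fin d, G s (α s.castSucc) (i s) (α s.succ)

/-- `‖G‖_{∘,∞} = max_i ‖G(:,i,:)‖_∘` for a third-order tensor `G ∈ ℝ^{p×n×q}`. -/
noncomputable def sliceNormInf (ν : ∀ p q : ℕ, Matrix (Fin p) (Fin q) ℝ → ℝ)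
    {p n q : ℕ} (G : Fin p → Fin n → Fin q → ℝ) : ℝ :=
  ⨆ i : Fin n, ν p q (fun a b => G a i b)

/-- The TT factorization quasinorm `γ_∘^TT` associated with a matrix norm `‖·‖_∘`. -/
noncomputable def gammaTT {d : ℕ} (n : Fin d → ℕ) (ν : ∀ p q : ℕ, Matrix (Fin p) (Fin q) ℝ → ℝ)
    (A : (∀ s : Fin d, Fin (n s)) → ℝ) : ℝ :=
  sInf { y | ∃ ρ : Fin (d + 1) → ℕ, ρ 0 = 1 ∧ ρ (Fin.last d) = 1 ∧
    ∃ G : ∀ s : Fin d, Fin (ρ s.castSucc) → Fin (n s) → Fin (ρ s.succ) → ℝ,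
      ttEval n ρ G = A ∧ y = ∏ s : Fin d, sliceNormInf ν (G s) }

/-- Frobenius norm of a matrix. -/
noncomputable def frobNorm {p q : ℕ} (M : Matrix (Fin p) (Fin q) ℝ) : ℝ :=
  Real.sqrt (∑ i, ∑ j, M i j ^ 2)

/-- Euclidean norm of a vector. -/
noncomputable def vecNorm {q : ℕ} (x : Fin q → ℝ) : ℝ := Real.sqrt (∑ j, x j ^ 2)

/-- Spectral norm of a matrix: `‖M‖₂ = max{‖Mx‖₂ : ‖x‖₂ = 1}`. -/
noncomputable def specNorm {p q : ℕ} (M : Matrix (Fin p) (Fin q) ℝ) : ℝ :=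
  sSup { y | ∃ x : Fin q → ℝ, vecNorm x = 1 ∧ y = vecNorm (M.mulVec x) }

/-- Entrywise maximum norm of a tensor. -/
noncomputable def maxNorm {d : ℕ} {n : Fin d → ℕ} (A : (∀ s : Fin d, Fin (n s)) → ℝ) : ℝ :=
  ⨆ i, |A i|

/-- `ttRankLE n B r` : `B` admits a TT factorization all of whose ranks are at most `r`,
i.e. every component of `ttrank(B)` is at most `r`. -/
def ttRankLE {d : ℕ} (n : Fin d → ℕ) (B : (∀ s : Fin d, Fin (n s)) → ℝ) (r : ℕ) : Prop :=
  ∃ ρ : Fin (d + 1) → ℕ, ρ 0 = 1 ∧ ρ (Fin.last d) = 1 ∧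
    (∀ s : Fin (d + 1), s ≠ 0 → s ≠ Fin.last d → ρ s ≤ r) ∧
    ∃ G : ∀ s : Fin d, Fin (ρ s.castSucc) → Fin (n s) → Fin (ρ s.succ) → ℝ,
      ttEval n ρ G = B

/-- The CP max-qnorm `γ^CP`. -/
noncomputable def gammaCP {d : ℕ} (n : Fin d → ℕ) (A : (∀ s : Fin d, Fin (n s)) → ℝ) : ℝ :=
  sInf { y | ∃ (k : ℕ) (C : ∀ s : Fin d, Matrix (Fin (n s)) (Fin k) ℝ),
    (∀ i, A i = ∑ α : Fin k, ∏ s : Fin d, C s (i s) α) ∧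
    y = ∏ s : Fin d, (⨆ i : Fin (n s), Real.sqrt (∑ α, C s i α ^ 2)) }

end TT

namespace TT

section Aux
variable (ν : ∀ p q : ℕ, Matrix (Fin p) (Fin q) ℝ → ℝ)

lemma sliceNormInf_nonneg (hnonneg : ∀ p q (A : Matrix (Fin p) (Fin q) ℝ), 0 ≤ ν p q A)
    {p n q : ℕ} (G : Fin p → Fin n → Fin q → ℝ) : 0 ≤ sliceNormInf ν G :=
  Real.iSup_nonneg fun i => hnonneg _ _ _

lemma nu_slice_le {p n q : ℕ} (G : Fin p → Fin n → Fin q → ℝ) (i : Fin n) :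
    ν p q (fun a b => G a i b) ≤ sliceNormInf ν G :=
  le_ciSup (f := fun i : Fin n => ν p q fun a b => G a i b) (Finite.bddAbove_range _) i

lemma abs_entry_le
    (hnonneg : ∀ p q (A : Matrix (Fin p) (Fin q) ℝ), 0 ≤ ν p q A)
    (hdef : ∀ p q (A : Matrix (Fin p) (Fin q) ℝ), ν p q A = 0 ↔ A = 0)
    (hhom : ∀ p q (c : ℝ) (A : Matrix (Fin p) (Fin q) ℝ), ν p q (c • A) = |c| * ν p q A)
    (hsub : ∀ p q r (A : Matrix (Fin p) (Fin q) ℝ) (B : Matrix (Fin q) (Fin r) ℝ),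
      ν p r (A * B) ≤ ν p q A * ν q r B)
    {p q : ℕ} (hp : p = 1) (hq : q = 1) (M : Matrix (Fin p) (Fin q) ℝ) (a : Fin p) (b : Fin q) :
    |M a b| ≤ ν p q M := by
  subst hp; subst hq
  have hone : (1 : Matrix (Fin 1) (Fin 1) ℝ) ≠ 0 := by
    intro h
    have := congrFun (congrFun h 0) 0
    simp [Matrix.one_apply] at this
  have hν1pos : 0 < ν 1 1 1 := by
    rcases lt_or_eq_of_le (hnonneg 1 1 1) with h | h
    · exact h
    · exact absurd ((hdef 1 1 1).mp h.symm) hone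
  have h1le : (1 : ℝ) ≤ ν 1 1 1 := by
    have := hsub 1 1 1 1 1
    rw [one_mul] at this
    nlinarith
  have hM : M = M a b • (1 : Matrix (Fin 1) (Fin 1) ℝ) := by
    ext x y
    obtain rfl : a = x := Subsingleton.elim _ _
    obtain rfl : b = y := Subsingleton.elim _ _
    obtain rfl : a = b := Subsingleton.elim _ _
    simp [Matrix.one_apply]
  calc |M a b| = |M a b| * 1 := (mul_one _).symm
    _ ≤ |M a b| * ν 1 1 1 := by
        exact mul_le_mul_of_nonneg_left h1le (abs_nonneg _)
    _ = ν 1 1 (M a b • 1) := (hhom 1 1 (M a b) 1).symm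
    _ = ν 1 1 M := by rw [← hM]


/-- The matrix of partial contractions of a TT factorization at a fixed multi-index. -/
noncomputable def Tmat {d : ℕ} (n : Fin d → ℕ) (ρ : Fin (d + 1) → ℕ)
    (G : ∀ s : Fin d, Fin (ρ s.castSucc) → Fin (n s) → Fin (ρ s.succ) → ℝ)
    (i : ∀ s : Fin d, Fin (n s)) : Matrix (Fin (ρ 0)) (Fin (ρ (Fin.last d))) ℝ :=
  fun a b => ∑ α : ∀ s : Fin (d + 1), Fin (ρ s),
    if α 0 = a ∧ α (Fin.last d) = b then ∏ s : Fin d, G s (α s.castSucc) (i s) (α s.succ) else 0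

lemma ttEval_eq_Tmat {d : ℕ} (n : Fin d → ℕ) (ρ : Fin (d + 1) → ℕ)
    (G : ∀ s : Fin d, Fin (ρ s.castSucc) → Fin (n s) → Fin (ρ s.succ) → ℝ)
    (h0 : ρ 0 = 1) (hl : ρ (Fin.last d) = 1) (i : ∀ s : Fin d, Fin (n s)) :
    ttEval n ρ G i = Tmat n ρ G i ⟨0, by omega⟩ ⟨0, by omega⟩ := by
  unfold ttEval Tmat
  refine Finset.sum_congr rfl fun α _ => ?_
  rw [if_pos]
  constructor
  · apply Fin.ext
    have := (α 0).isLt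
    omega
  · apply Fin.ext
    have := (α (Fin.last d)).isLt
    omega


lemma Tmat_zero (n : Fin 0 → ℕ) (ρ : Fin 1 → ℕ)
    (G : ∀ s : Fin 0, Fin (ρ s.castSucc) → Fin (n s) → Fin (ρ s.succ) → ℝ)
    (i : ∀ s : Fin 0, Fin (n s)) (a : Fin (ρ 0)) (b : Fin (ρ (Fin.last 0))) :
    Tmat n ρ G i a b = if a = b then 1 else 0 := by
  classical
  unfold Tmat
  rw [Fintype.sum_eq_single
    (fun s : Fin 1 => Fin.cast (congrArg ρ (Subsingleton.elim (0 : Fin 1) s)) a)]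
  · simp [Fin.ext_iff]
  · intro α hα
    rw [if_neg]
    rintro ⟨hc1, _⟩
    apply hα
    funext s
    obtain rfl : (0 : Fin 1) = s := Subsingleton.elim _ _
    apply Fin.ext
    simp only [Fin.coe_cast]
    exact congrArg Fin.val hc1

lemma Tmat_peel {d : ℕ} (n : Fin (d+1) → ℕ) (ρ : Fin (d+2) → ℕ)
    (G : ∀ s : Fin (d+1), Fin (ρ s.castSucc) → Fin (n s) → Fin (ρ s.succ) → ℝ)
    (i : ∀ s : Fin (d+1), Fin (n s)) (a : Fin (ρ 0)) (b : Fin (ρ (Fin.last (d+1)))) :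
    Tmat n ρ G i a b = ∑ b' : Fin (ρ (Fin.last d).castSucc),
      Tmat (fun s => n s.castSucc) (fun s => ρ s.castSucc) (fun s => G s.castSucc)
        (fun s => i s.castSucc) a b' * G (Fin.last d) b' (i (Fin.last d)) b := by
  classical
  unfold Tmat
  rw [← Equiv.sum_comp (Fin.snocEquiv (fun s : Fin (d+2) => Fin (ρ s))), Fintype.sum_prod_type]
  rw [Finset.sum_comm]
  simp only [Finset.sum_mul]
  conv_rhs => rw [Finset.sum_comm]
  refine Finset.sum_congr rfl fun g _ => ?_
  have h1 : ∀ x : Fin (ρ (Fin.last (d+1))),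
      (Fin.snoc g x : ∀ s : Fin (d+2), Fin (ρ s)) 0 = g 0 := fun x => Fin.snoc_castSucc (α := fun t : Fin (d+2) => Fin (ρ t)) x g 0
  have h2 : ∀ x : Fin (ρ (Fin.last (d+1))),
      (Fin.snoc g x : ∀ s : Fin (d+2), Fin (ρ s)) (Fin.last (d+1)) = x := fun x => Fin.snoc_last (α := fun t : Fin (d+2) => Fin (ρ t)) x g
  have h4 : ∀ x : Fin (ρ (Fin.last (d+1))),
      (Fin.snoc g x : ∀ s : Fin (d+2), Fin (ρ s)) ((Fin.last d).succ) = x := fun x => Fin.snoc_last (α := fun t : Fin (d+2) => Fin (ρ t)) x g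
  have hprod : ∀ x : Fin (ρ (Fin.last (d+1))),
      (∏ s : Fin (d+1), G s ((Fin.snoc g x : ∀ t : Fin (d+2), Fin (ρ t)) s.castSucc) (i s)
        ((Fin.snoc g x : ∀ t : Fin (d+2), Fin (ρ t)) s.succ))
      = (∏ s : Fin d, G s.castSucc (g s.castSucc) (i s.castSucc) (g s.succ))
        * G (Fin.last d) (g (Fin.last d)) (i (Fin.last d)) x := by
    intro x
    rw [Fin.prod_univ_castSucc]
    congr 1
    · refine Finset.prod_congr rfl fun s _ => ?_
      rw [Fin.snoc_castSucc (α := fun t : Fin (d+2) => Fin (ρ t)) x g s.castSucc]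
      rw [show (Fin.snoc g x : ∀ t : Fin (d+2), Fin (ρ t)) (s.castSucc).succ = g s.succ from
        Fin.snoc_castSucc (α := fun t : Fin (d+2) => Fin (ρ t)) x g s.succ]
    · rw [Fin.snoc_castSucc (α := fun t : Fin (d+2) => Fin (ρ t)) x g (Fin.last d), h4 x]
  have hL : ∀ x : Fin (ρ (Fin.last (d+1))),
      (if (Fin.snocEquiv (fun s : Fin (d+2) => Fin (ρ s))) (x, g) 0 = a ∧
          (Fin.snocEquiv (fun s : Fin (d+2) => Fin (ρ s))) (x, g) (Fin.last (d+1)) = b then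
        ∏ s : Fin (d+1),
          G s ((Fin.snocEquiv (fun t : Fin (d+2) => Fin (ρ t))) (x, g) s.castSucc) (i s)
            ((Fin.snocEquiv (fun t : Fin (d+2) => Fin (ρ t))) (x, g) s.succ)
      else 0)
      = (if g 0 = a ∧ x = b then
          (∏ s : Fin d, G s.castSucc (g s.castSucc) (i s.castSucc) (g s.succ))
            * G (Fin.last d) (g (Fin.last d)) (i (Fin.last d)) x
        else 0) := by
    intro x
    simp only [Fin.snocEquiv_apply]
    rw [h1 x, h2 x, hprod x]
    congr 1
  rw [Finset.sum_congr rfl fun x _ => hL x]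
  by_cases hg : g 0 = a
  · simp [hg, ite_and, Finset.sum_ite_eq, Finset.sum_ite_eq']
  · refine (Finset.sum_eq_zero fun x _ => ?_).trans (Finset.sum_eq_zero fun x _ => ?_).symm
    · exact if_neg (not_and_of_not_left _ hg)
    · simp only [ite_mul, zero_mul]
      exact if_neg (not_and_of_not_left _ hg)


lemma nu_Tmat_le (ν : ∀ p q : ℕ, Matrix (Fin p) (Fin q) ℝ → ℝ)
    (hnonneg : ∀ p q (A : Matrix (Fin p) (Fin q) ℝ), 0 ≤ ν p q A)
    (hsub : ∀ p q r (A : Matrix (Fin p) (Fin q) ℝ) (B : Matrix (Fin q) (Fin r) ℝ),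
      ν p r (A * B) ≤ ν p q A * ν q r B) :
    ∀ (d : ℕ) (n : Fin (d+1) → ℕ) (ρ : Fin (d+2) → ℕ)
      (G : ∀ s : Fin (d+1), Fin (ρ s.castSucc) → Fin (n s) → Fin (ρ s.succ) → ℝ)
      (i : ∀ s : Fin (d+1), Fin (n s)),
      ν (ρ 0) (ρ (Fin.last (d+1))) (Tmat n ρ G i) ≤ ∏ s, sliceNormInf ν (G s) := by
  intro d
  induction d with
  | zero =>
    intro n ρ G i
    have hT : Tmat n ρ G i = fun a b => G (Fin.last 0) a (i (Fin.last 0)) b := by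
      funext a b
      rw [Tmat_peel n ρ G i a b]
      have : ∀ b' : Fin (ρ (Fin.last 0).castSucc),
          Tmat (fun s => n s.castSucc) (fun s => ρ s.castSucc) (fun s => G s.castSucc)
            (fun s => i s.castSucc) a b' = if a = b' then 1 else 0 := fun b' =>
        Tmat_zero (fun s => n s.castSucc) (fun s => ρ s.castSucc) (fun s => G s.castSucc)
          (fun s => i s.castSucc) a b'
      rw [Finset.sum_congr rfl fun b' _ => by rw [this b']]
      simp
    rw [hT, Fin.prod_univ_one]
    exact nu_slice_le ν (G 0) (i (Fin.last 0))
  | succ d ih =>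
    intro n ρ G i
    have hT : Tmat n ρ G i =
        (Tmat (fun s => n s.castSucc) (fun s => ρ s.castSucc) (fun s => G s.castSucc)
          (fun s => i s.castSucc) : Matrix (Fin (ρ 0)) (Fin (ρ (Fin.last (d+1)).castSucc)) ℝ)
        * Matrix.of (fun b' b => G (Fin.last (d+1)) b' (i (Fin.last (d+1))) b) := by
      funext a b
      exact Tmat_peel n ρ G i a b
    rw [hT, Fin.prod_univ_castSucc]
    calc ν (ρ 0) (ρ (Fin.last (d+2))) _
        ≤ ν (ρ 0) (ρ (Fin.last (d+1)).castSucc)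
            (Tmat (fun s => n s.castSucc) (fun s => ρ s.castSucc) (fun s => G s.castSucc)
              (fun s => i s.castSucc))
          * ν (ρ (Fin.last (d+1)).castSucc) (ρ (Fin.last (d+2)))
            (fun b' b => G (Fin.last (d+1)) b' (i (Fin.last (d+1))) b) := hsub _ _ _ _ _
      _ ≤ (∏ s : Fin (d+1), sliceNormInf ν (G s.castSucc)) * sliceNormInf ν (G (Fin.last (d+1))) := by
          apply mul_le_mul
          · exact ih (fun s => n s.castSucc) (fun s => ρ s.castSucc) (fun s => G s.castSucc)
              (fun s => i s.castSucc)
          · exact nu_slice_le ν (G (Fin.last (d+1))) (i (Fin.last (d+1)))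
          · exact hnonneg _ _ _
          · exact Finset.prod_nonneg fun s _ => sliceNormInf_nonneg ν hnonneg _

lemma abs_ttEval_le (ν : ∀ p q : ℕ, Matrix (Fin p) (Fin q) ℝ → ℝ)
    (hnonneg : ∀ p q (A : Matrix (Fin p) (Fin q) ℝ), 0 ≤ ν p q A)
    (hdef : ∀ p q (A : Matrix (Fin p) (Fin q) ℝ), ν p q A = 0 ↔ A = 0)
    (hhom : ∀ p q (c : ℝ) (A : Matrix (Fin p) (Fin q) ℝ), ν p q (c • A) = |c| * ν p q A)
    (hsub : ∀ p q r (A : Matrix (Fin p) (Fin q) ℝ) (B : Matrix (Fin q) (Fin r) ℝ),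
      ν p r (A * B) ≤ ν p q A * ν q r B)
    {d : ℕ} (hd : 1 ≤ d) (n : Fin d → ℕ) (ρ : Fin (d + 1) → ℕ)
    (G : ∀ s : Fin d, Fin (ρ s.castSucc) → Fin (n s) → Fin (ρ s.succ) → ℝ)
    (h0 : ρ 0 = 1) (hl : ρ (Fin.last d) = 1) (i : ∀ s : Fin d, Fin (n s)) :
    |ttEval n ρ G i| ≤ ∏ s, sliceNormInf ν (G s) := by
  obtain ⟨m, rfl⟩ : ∃ m, d = m + 1 := ⟨d - 1, by omega⟩
  rw [ttEval_eq_Tmat n ρ G h0 hl i]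
  calc |Tmat n ρ G i ⟨0, by omega⟩ ⟨0, by omega⟩|
      ≤ ν (ρ 0) (ρ (Fin.last (m+1))) (Tmat n ρ G i) :=
        abs_entry_le ν hnonneg hdef hhom hsub h0 hl _ _ _
    _ ≤ ∏ s, sliceNormInf ν (G s) := nu_Tmat_le ν hnonneg hsub m n ρ G i


/-! ### Existence of a TT factorization -/

def dRank (d K : ℕ) : Fin (d+1) → ℕ := fun s => if s = 0 ∨ s = Fin.last d then 1 else K

lemma dRank_zero (d K : ℕ) : dRank d K 0 = 1 := by simp [dRank]

lemma dRank_last (d K : ℕ) : dRank d K (Fin.last d) = 1 := by simp [dRank]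

lemma dRank_one_or (d K : ℕ) (s : Fin (d+1)) : dRank d K s = 1 ∨ dRank d K s = K := by
  unfold dRank; split <;> simp

lemma dRank_castSucc {d K : ℕ} {s : Fin d} (hs : (s:ℕ) ≠ 0) : dRank d K s.castSucc = K := by
  unfold dRank
  rw [if_neg]
  push_neg
  constructor
  · intro h; exact hs (by simpa using congrArg Fin.val h)
  · exact (Fin.castSucc_lt_last s).ne

lemma dRank_succ {d K : ℕ} {s : Fin d} (hs : (s:ℕ) + 1 ≠ d) : dRank d K s.succ = K := by
  unfold dRank
  rw [if_neg]
  push_neg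
  exact ⟨Fin.succ_ne_zero s, fun h => hs (by simpa using congrArg Fin.val h)⟩

lemma ne0_of_top {d : ℕ} (hd : 2 ≤ d) {s : Fin d} (h : (s:ℕ) + 1 = d) : (s:ℕ) ≠ 0 := by omega

/-- The delta cores realizing an arbitrary tensor as a TT factorization. -/
noncomputable def dCore {d K : ℕ} (hd : 2 ≤ d) (n : Fin d → ℕ)
    (dec : Fin K ≃ (∀ s : Fin d, Fin (n s))) (A : (∀ s : Fin d, Fin (n s)) → ℝ) :
    ∀ s : Fin d, Fin (dRank d K s.castSucc) → Fin (n s) → Fin (dRank d K s.succ) → ℝ :=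
  fun s a i b =>
    if hs1 : (s:ℕ) + 1 = d then
      (if i = dec (Fin.cast (dRank_castSucc (ne0_of_top hd hs1)) a) s
        then A (dec (Fin.cast (dRank_castSucc (ne0_of_top hd hs1)) a)) else 0)
    else if hs0 : (s:ℕ) = 0 then
      (if i = dec (Fin.cast (dRank_succ hs1) b) s then 1 else 0)
    else
      (if Fin.cast (dRank_succ hs1) b = Fin.cast (dRank_castSucc hs0) a
          ∧ i = dec (Fin.cast (dRank_castSucc hs0) a) s then 1 else 0)

/-- The unique nonvanishing summand in the delta factorization. -/
def dStar (d K : ℕ) (β : Fin K) : ∀ s : Fin (d+1), Fin (dRank d K s) := fun s =>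
  ⟨if dRank d K s = K then (β : ℕ) else 0, by
    have h := β.isLt
    rcases dRank_one_or d K s with h1 | h1 <;> rw [h1] <;> split <;> omega⟩

lemma dStar_val (d K : ℕ) (β : Fin K) (s : Fin (d+1)) :
    (dStar d K β s : ℕ) = if dRank d K s = K then (β : ℕ) else 0 := rfl

lemma dStar_cast {d K : ℕ} (β : Fin K) (t : Fin (d+1)) (h : dRank d K t = K) :
    Fin.cast h (dStar d K β t) = β := by
  apply Fin.ext
  show (dStar d K β t : ℕ) = (β : ℕ)
  rw [dStar_val, if_pos h]

/-- The common value carried by the interior components of a nonvanishing summand. -/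
noncomputable def dB {d K : ℕ} (hd : 2 ≤ d) (α : ∀ s : Fin (d+1), Fin (dRank d K s)) :
    Fin d → Fin K := fun s =>
  if hs0 : (s : ℕ) = 0 then Fin.cast (dRank_succ (by omega)) (α s.succ)
  else Fin.cast (dRank_castSucc hs0) (α s.castSucc)

lemma dB_zero {d K : ℕ} (hd : 2 ≤ d) (α : ∀ s : Fin (d+1), Fin (dRank d K s))
    {s : Fin d} (hs0 : (s:ℕ) = 0) : (dB hd α s : ℕ) = (α s.succ : ℕ) := by
  unfold dB; rw [dif_pos hs0]; rfl

lemma dB_pos {d K : ℕ} (hd : 2 ≤ d) (α : ∀ s : Fin (d+1), Fin (dRank d K s))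
    {s : Fin d} (hs0 : (s:ℕ) ≠ 0) : (dB hd α s : ℕ) = (α s.castSucc : ℕ) := by
  unfold dB; rw [dif_neg hs0]; rfl

lemma dCore_eval {d K : ℕ} (hd : 2 ≤ d) (n : Fin d → ℕ)
    (dec : Fin K ≃ (∀ s : Fin d, Fin (n s))) (A : (∀ s : Fin d, Fin (n s)) → ℝ) :
    ttEval n (dRank d K) (dCore hd n dec A) = A := by
  classical
  funext i
  unfold ttEval
  refine (Fintype.sum_eq_single (dStar d K (dec.symm i)) ?side).trans ?main
  case main =>
    have hlast : ((⟨d-1, by omega⟩ : Fin d) : ℕ) + 1 = d := by simp; omega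
    refine (Finset.prod_eq_single (⟨d-1, by omega⟩ : Fin d) ?h0 ?h1).trans ?hval
    case h0 =>
      intro s _ hne
      unfold dCore
      have hs1 : ¬((s:ℕ) + 1 = d) := by
        intro h; exact hne (Fin.ext (by simp; omega))
      rw [dif_neg hs1]
      by_cases hs0 : (s:ℕ) = 0
      · rw [dif_pos hs0, dStar_cast (dec.symm i) s.succ (dRank_succ hs1),
          Equiv.apply_symm_apply, if_pos rfl]
      · rw [dif_neg hs0, dStar_cast (dec.symm i) s.succ (dRank_succ hs1),
          dStar_cast (dec.symm i) s.castSucc (dRank_castSucc hs0),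
          Equiv.apply_symm_apply, if_pos ⟨rfl, rfl⟩]
    case h1 =>
      intro h
      exact absurd (Finset.mem_univ _) h
    case hval =>
      unfold dCore
      rw [dif_pos hlast,
        dStar_cast (dec.symm i) (Fin.castSucc ⟨d-1, by omega⟩)
          (dRank_castSucc (ne0_of_top hd hlast)),
        Equiv.apply_symm_apply, if_pos rfl]
  case side =>
    intro α hne
    by_contra hP
    apply hne
    have hfac : ∀ s : Fin d,
        dCore hd n dec A s (α s.castSucc) (i s) (α s.succ) ≠ 0 := by
      intro s
      exact Finset.prod_ne_zero_iff.mp hP s (Finset.mem_univ s)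
    have F1 : ∀ s : Fin d, i s = dec (dB hd α s) s := by
      intro s
      have h := hfac s
      unfold dCore at h
      by_cases hs1 : (s:ℕ) + 1 = d
      · rw [dif_pos hs1, ite_ne_right_iff] at h
        have hs0 : (s:ℕ) ≠ 0 := ne0_of_top hd hs1
        have hb : dB hd α s = Fin.cast (dRank_castSucc (ne0_of_top hd hs1)) (α s.castSucc) := by
          apply Fin.ext
          rw [dB_pos hd α hs0]
          rfl
        rw [hb]
        exact h.1
      · rw [dif_neg hs1] at h
        by_cases hs0 : (s:ℕ) = 0
        · rw [dif_pos hs0, ite_ne_right_iff] at h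
          have hb : dB hd α s = Fin.cast (dRank_succ hs1) (α s.succ) := by
            apply Fin.ext
            rw [dB_zero hd α hs0]
            rfl
          rw [hb]
          exact h.1
        · rw [dif_neg hs0, ite_ne_right_iff] at h
          have hb : dB hd α s = Fin.cast (dRank_castSucc hs0) (α s.castSucc) := by
            apply Fin.ext
            rw [dB_pos hd α hs0]
            rfl
          rw [hb]
          exact h.1.2
    have F2 : ∀ s : Fin d, (s:ℕ) ≠ 0 → (s:ℕ) + 1 ≠ d →
        (α s.succ : ℕ) = (α s.castSucc : ℕ) := by
      intro s hs0 hs1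
      have h := hfac s
      unfold dCore at h
      rw [dif_neg hs1, dif_neg hs0, ite_ne_right_iff] at h
      exact congrArg Fin.val h.1.1
    have hchain : ∀ (k : ℕ) (hk : k < d), (dB hd α ⟨k, hk⟩ : ℕ) = (dB hd α ⟨0, by omega⟩ : ℕ) := by
      intro k
      induction k with
      | zero => intro hk; rfl
      | succ k ihk =>
        intro hk
        have hk' : k < d := by omega
        have e1 : (dB hd α ⟨k+1, hk⟩ : ℕ) = (α (⟨k, hk'⟩ : Fin d).succ : ℕ) := by
          rw [dB_pos hd α (by simp)]
          rfl
        by_cases hk0 : k = 0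
        · subst hk0
          rw [e1, ← dB_zero hd α (s := ⟨0, by omega⟩) rfl]
        · rw [e1, F2 ⟨k, hk'⟩ (by simpa using hk0) (by simp; omega),
            ← dB_pos hd α (s := ⟨k, hk'⟩) (by simpa using hk0), ihk hk']
    have hb0 : dec (dB hd α ⟨0, by omega⟩) = i := by
      funext s
      have h1 := F1 s
      have h2 : dB hd α s = dB hd α ⟨0, by omega⟩ := by
        apply Fin.ext
        have := hchain (s:ℕ) s.isLt
        simpa using this
      rw [h2] at h1
      exact h1.symm
    have hbeta : (dec.symm i : Fin K) = dB hd α ⟨0, by omega⟩ := by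
      rw [← hb0, Equiv.symm_apply_apply]
    funext t
    apply Fin.ext
    rw [dStar_val]
    by_cases hb : t = 0 ∨ t = Fin.last d
    · have h1 : dRank d K t = 1 := by unfold dRank; rw [if_pos hb]
      have h2 := (α t).isLt
      have h3 := (dec.symm i).isLt
      split
      · next hK => omega
      · omega
    · push_neg at hb
      have ht0 : (t:ℕ) ≠ 0 := fun h => hb.1 (Fin.ext (by simpa using h))
      have htl : (t:ℕ) < d := by
        have h2 := t.isLt
        rcases Nat.lt_or_ge (t:ℕ) d with h | h
        · exact h
        · exact absurd (Fin.ext (by simp; omega) : t = Fin.last d) hb.2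
      have hK : dRank d K t = K := by
        unfold dRank
        rw [if_neg]
        push_neg
        refine ⟨fun h => ht0 (by simpa using congrArg Fin.val h), fun h => ?_⟩
        have := congrArg Fin.val h
        simp at this
        omega
      rw [if_pos hK, hbeta, ← hchain (t:ℕ) htl, dB_pos hd α (s := (⟨(t:ℕ), htl⟩ : Fin d)) ht0]
      rfl


lemma exists_tt {d : ℕ} (hd : 2 ≤ d) (n : Fin d → ℕ) (A : (∀ s : Fin d, Fin (n s)) → ℝ) :
    ∃ ρ : Fin (d + 1) → ℕ, ρ 0 = 1 ∧ ρ (Fin.last d) = 1 ∧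
      ∃ G : ∀ s : Fin d, Fin (ρ s.castSucc) → Fin (n s) → Fin (ρ s.succ) → ℝ,
        ttEval n ρ G = A := by
  classical
  by_cases hne : Nonempty (∀ s : Fin d, Fin (n s))
  · have dec : Fin (Fintype.card (∀ s : Fin d, Fin (n s))) ≃ (∀ s : Fin d, Fin (n s)) :=
      (Fintype.equivFin _).symm
    exact ⟨dRank d _, dRank_zero _ _, dRank_last _ _, dCore hd n dec A, dCore_eval hd n dec A⟩
  · refine ⟨fun _ => 1, rfl, rfl, fun s a i b => 0, ?_⟩
    funext i
    exact absurd ⟨i⟩ hne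

lemma ttEval_zero {d : ℕ} (hd : 1 ≤ d) (n : Fin d → ℕ) :
    ttEval n (fun _ => 1) (fun s a i b => (0:ℝ)) = 0 := by
  funext i
  unfold ttEval
  rw [show (0 : (∀ s : Fin d, Fin (n s)) → ℝ) i = 0 from rfl]
  refine Finset.sum_eq_zero fun α _ => ?_
  exact Finset.prod_eq_zero (Finset.mem_univ (⟨0, by omega⟩ : Fin d)) rfl

lemma sliceNormInf_zero (ν : ∀ p q : ℕ, Matrix (Fin p) (Fin q) ℝ → ℝ)
    (hdef : ∀ p q (A : Matrix (Fin p) (Fin q) ℝ), ν p q A = 0 ↔ A = 0)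
    {p m q : ℕ} : sliceNormInf ν (fun (a : Fin p) (i : Fin m) (b : Fin q) => (0:ℝ)) = 0 := by
  unfold sliceNormInf
  have h0 : ν p q (fun a b => (0:ℝ)) = 0 := (hdef p q 0).mpr rfl
  exact le_antisymm (Real.iSup_le (fun i => le_of_eq h0) le_rfl)
    (Real.iSup_nonneg fun i => le_of_eq h0.symm)

lemma scale_eval {d : ℕ} (hd : 1 ≤ d) (n : Fin d → ℕ) (c : ℝ) (ρ : Fin (d+1) → ℕ)
    (G : ∀ s : Fin d, Fin (ρ s.castSucc) → Fin (n s) → Fin (ρ s.succ) → ℝ) :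
    ttEval n ρ (fun s => if (s:ℕ) = 0 then c • G s else G s) = c • ttEval n ρ G := by
  funext i
  unfold ttEval
  rw [Pi.smul_apply, smul_eq_mul, Finset.mul_sum]
  refine Finset.sum_congr rfl fun α _ => ?_
  have h1 : ∀ s : Fin d,
      (if (s:ℕ) = 0 then c • G s else G s) (α s.castSucc) (i s) (α s.succ)
      = (if (s:ℕ) = 0 then c else 1) * G s (α s.castSucc) (i s) (α s.succ) := by
    intro s
    split
    · simp [Pi.smul_apply, smul_eq_mul]
    · rw [one_mul]
  rw [Finset.prod_congr rfl fun s _ => h1 s, Finset.prod_mul_distrib]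
  congr 1
  rw [Finset.prod_eq_single (⟨0, by omega⟩ : Fin d)]
  · simp
  · intro b _ hb
    rw [if_neg]
    intro h
    exact hb (Fin.ext (by simpa using h))
  · intro h
    exact absurd (Finset.mem_univ _) h

lemma scale_slice {d : ℕ} (hd : 1 ≤ d) (n : Fin d → ℕ)
    (ν : ∀ p q : ℕ, Matrix (Fin p) (Fin q) ℝ → ℝ)
    (hhom : ∀ p q (c : ℝ) (A : Matrix (Fin p) (Fin q) ℝ), ν p q (c • A) = |c| * ν p q A)
    (c : ℝ) (ρ : Fin (d+1) → ℕ)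
    (G : ∀ s : Fin d, Fin (ρ s.castSucc) → Fin (n s) → Fin (ρ s.succ) → ℝ) :
    ∏ s : Fin d, sliceNormInf ν (if (s:ℕ) = 0 then c • G s else G s)
      = |c| * ∏ s, sliceNormInf ν (G s) := by
  have hs : ∀ s : Fin d, sliceNormInf ν ((if (s:ℕ) = 0 then c • G s else G s))
      = (if (s:ℕ) = 0 then |c| else 1) * sliceNormInf ν (G s) := by
    intro s
    split
    · unfold sliceNormInf
      rw [Real.mul_iSup_of_nonneg (abs_nonneg c)]
      congr 1
      funext j
      exact hhom _ _ c (fun a b => G s a j b)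
    · rw [one_mul]
  rw [Finset.prod_congr rfl fun s _ => hs s, Finset.prod_mul_distrib]
  congr 1
  rw [Finset.prod_eq_single (⟨0, by omega⟩ : Fin d)]
  · simp
  · intro b _ hb
    rw [if_neg]
    intro h
    exact hb (Fin.ext (by simpa using h))
  · intro h
    exact absurd (Finset.mem_univ _) h

/-- The set whose infimum defines `gammaTT`. -/
def SetTT {d : ℕ} (n : Fin d → ℕ) (ν : ∀ p q : ℕ, Matrix (Fin p) (Fin q) ℝ → ℝ)
    (A : (∀ s : Fin d, Fin (n s)) → ℝ) : Set ℝ :=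
  { y | ∃ ρ : Fin (d + 1) → ℕ, ρ 0 = 1 ∧ ρ (Fin.last d) = 1 ∧
    ∃ G : ∀ s : Fin d, Fin (ρ s.castSucc) → Fin (n s) → Fin (ρ s.succ) → ℝ,
      ttEval n ρ G = A ∧ y = ∏ s : Fin d, sliceNormInf ν (G s) }

lemma SetTT_nonneg {d : ℕ} (n : Fin d → ℕ) (ν : ∀ p q : ℕ, Matrix (Fin p) (Fin q) ℝ → ℝ)
    (hnonneg : ∀ p q (A : Matrix (Fin p) (Fin q) ℝ), 0 ≤ ν p q A)
    (A : (∀ s : Fin d, Fin (n s)) → ℝ) : ∀ y ∈ SetTT n ν A, 0 ≤ y := by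
  rintro y ⟨ρ, h0, hl, G, hG, rfl⟩
  exact Finset.prod_nonneg fun s _ => sliceNormInf_nonneg ν hnonneg _

lemma SetTT_nonempty {d : ℕ} (hd : 2 ≤ d) (n : Fin d → ℕ)
    (ν : ∀ p q : ℕ, Matrix (Fin p) (Fin q) ℝ → ℝ)
    (A : (∀ s : Fin d, Fin (n s)) → ℝ) : (SetTT n ν A).Nonempty := by
  obtain ⟨ρ, h0, hl, G, hG⟩ := exists_tt hd n A
  exact ⟨_, ρ, h0, hl, G, hG, rfl⟩

lemma SetTT_lower {d : ℕ} (hd : 2 ≤ d) (n : Fin d → ℕ)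
    (ν : ∀ p q : ℕ, Matrix (Fin p) (Fin q) ℝ → ℝ)
    (hnonneg : ∀ p q (A : Matrix (Fin p) (Fin q) ℝ), 0 ≤ ν p q A)
    (hdef : ∀ p q (A : Matrix (Fin p) (Fin q) ℝ), ν p q A = 0 ↔ A = 0)
    (hhom : ∀ p q (c : ℝ) (A : Matrix (Fin p) (Fin q) ℝ), ν p q (c • A) = |c| * ν p q A)
    (hsub : ∀ p q r (A : Matrix (Fin p) (Fin q) ℝ) (B : Matrix (Fin q) (Fin r) ℝ),
      ν p r (A * B) ≤ ν p q A * ν q r B)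
    (A : (∀ s : Fin d, Fin (n s)) → ℝ) :
    ∀ y ∈ SetTT n ν A, ∀ i, |A i| ≤ y := by
  rintro y ⟨ρ, h0, hl, G, rfl, rfl⟩ i
  exact abs_ttEval_le ν hnonneg hdef hhom hsub (by omega) n ρ G h0 hl i

lemma SetTT_zero_mem {d : ℕ} (hd : 2 ≤ d) (n : Fin d → ℕ)
    (ν : ∀ p q : ℕ, Matrix (Fin p) (Fin q) ℝ → ℝ)
    (hdef : ∀ p q (A : Matrix (Fin p) (Fin q) ℝ), ν p q A = 0 ↔ A = 0) :
    (0:ℝ) ∈ SetTT n ν (0 : (∀ s : Fin d, Fin (n s)) → ℝ) := by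
  refine ⟨fun _ => 1, rfl, rfl, fun s a i b => 0, ttEval_zero (by omega) n, ?_⟩
  rw [Finset.prod_eq_zero (Finset.mem_univ (⟨0, by omega⟩ : Fin d))
    (sliceNormInf_zero ν hdef)]

lemma SetTT_scale {d : ℕ} (hd : 2 ≤ d) (n : Fin d → ℕ)
    (ν : ∀ p q : ℕ, Matrix (Fin p) (Fin q) ℝ → ℝ)
    (hhom : ∀ p q (c : ℝ) (A : Matrix (Fin p) (Fin q) ℝ), ν p q (c • A) = |c| * ν p q A)
    (A : (∀ s : Fin d, Fin (n s)) → ℝ) (c : ℝ) :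
    ∀ y ∈ SetTT n ν A, |c| * y ∈ SetTT n ν (c • A) := by
  rintro y ⟨ρ, h0, hl, G, rfl, rfl⟩
  exact ⟨ρ, h0, hl, fun s => if (s:ℕ) = 0 then c • G s else G s,
    scale_eval (by omega) n c ρ G, (scale_slice (by omega) n ν hhom c ρ G).symm⟩

end Aux


lemma gammaTT_eq_sInf {d : ℕ} (n : Fin d → ℕ) (ν : ∀ p q : ℕ, Matrix (Fin p) (Fin q) ℝ → ℝ)
    (A : (∀ s : Fin d, Fin (n s)) → ℝ) : gammaTT n ν A = sInf (SetTT n ν A) := rfl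


/-- Properties of the TT factorization quasinorm associated with a submultiplicative
matrix norm: definiteness and absolute homogeneity. -/
theorem gammaTT_definite_and_homogeneous {d : ℕ} (hd : 2 ≤ d) (n : Fin d → ℕ)
    (ν : ∀ p q : ℕ, Matrix (Fin p) (Fin q) ℝ → ℝ)
    (hnonneg : ∀ p q (A : Matrix (Fin p) (Fin q) ℝ), 0 ≤ ν p q A)
    (hdef : ∀ p q (A : Matrix (Fin p) (Fin q) ℝ), ν p q A = 0 ↔ A = 0)
    (hhom : ∀ p q (c : ℝ) (A : Matrix (Fin p) (Fin q) ℝ), ν p q (c • A) = |c| * ν p q A)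
    (htri : ∀ p q (A B : Matrix (Fin p) (Fin q) ℝ), ν p q (A + B) ≤ ν p q A + ν p q B)
    (hsub : ∀ p q r (A : Matrix (Fin p) (Fin q) ℝ) (B : Matrix (Fin q) (Fin r) ℝ),
      ν p r (A * B) ≤ ν p q A * ν q r B)
    (A : (∀ s : Fin d, Fin (n s)) → ℝ) :
    (gammaTT n ν A = 0 ↔ A = 0) ∧
    (∀ c : ℝ, gammaTT n ν (c • A) = |c| * gammaTT n ν A) := by
  have hzero : gammaTT n ν (0 : (∀ s : Fin d, Fin (n s)) → ℝ) = 0 := by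
    rw [gammaTT_eq_sInf]
    apply le_antisymm
    · exact csInf_le ⟨0, fun y hy => SetTT_nonneg n ν hnonneg _ y hy⟩
        (SetTT_zero_mem hd n ν hdef)
    · exact Real.sInf_nonneg (SetTT_nonneg n ν hnonneg _)
  constructor
  · constructor
    · intro h0
      by_contra hA
      obtain ⟨i, hi⟩ : ∃ i, A i ≠ 0 := by
        by_contra h
        push_neg at h
        exact hA (funext h)
      have hlow : |A i| ≤ sInf (SetTT n ν A) :=
        le_csInf (SetTT_nonempty hd n ν A)
          (fun y hy => SetTT_lower hd n ν hnonneg hdef hhom hsub A y hy i)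
      rw [← gammaTT_eq_sInf, h0] at hlow
      exact hi (abs_nonpos_iff.mp hlow)
    · rintro rfl
      exact hzero
  · intro c
    by_cases hc : c = 0
    · subst hc
      rw [zero_smul, hzero, abs_zero, zero_mul]
    · have hset : SetTT n ν (c • A) = |c| • SetTT n ν A := by
        ext y
        constructor
        · intro hy
          have h2 := SetTT_scale hd n ν hhom (c • A) c⁻¹ y hy
          rw [smul_smul, inv_mul_cancel₀ hc, one_smul] at h2
          refine Set.mem_smul_set.mpr ⟨|c⁻¹| * y, h2, ?_⟩
          rw [smul_eq_mul, abs_inv, ← mul_assoc,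
            mul_inv_cancel₀ (abs_ne_zero.mpr hc), one_mul]
        · intro hy
          obtain ⟨z, hz, rfl⟩ := Set.mem_smul_set.mp hy
          exact SetTT_scale hd n ν hhom A c z hz
      rw [gammaTT_eq_sInf, gammaTT_eq_sInf, hset,
        Real.sInf_smul_of_nonneg (abs_nonneg c), smul_eq_mul]

end TT
end

section
/- Let ∅ ≠ Ω ⊆ [N] and π = {℧_τ}_{τ=1}^κ ∈ 𝔓_κ(Ω ⊕ Ω). For ω ∈ Ω define θ_{π,ω} = 1/2 if ω and ω+N belong to the same cell of π, and θ_{π,ω} = 0 otherwise. For every τ ∈ [κ], let Ω_τ = (℧_τ ∪ (℧_τ − N)) ∩ Ω. Then for every m ∈ ℕ^N and every collection of partial arrays {C^{(τ)}}_{τ=1}^κ with C^{(τ)} ∈ ℝ^m(Ω_τ), it holds that Σ_{i∈𝔍^m(Ω)} Π_{τ∈[κ]} C^{(τ)}_{i_{Ω_τ}} ≤ Π_{ω∈Ω} m_ω^{θ_{π,ω}} · Π_{τ∈[κ]} ‖C^{(τ)}‖_F. -/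
open scoped BigOperators Classical

namespace PArray

variable {ι : Type} [DecidableEq ι]

/-- A partial index on `Ω` with dimensions `m`: a map `i : Ω → ℕ` with `i_ω ∈ [m_ω]`. -/
abbrev PIdx (m : ι → ℕ) (Ω : Finset ι) : Type := ∀ ω : Ω, Fin (m ω.val)

/-- A partial array on `Ω`: a map `𝔍^m(Ω) → ℝ`. -/
abbrev PArr (m : ι → ℕ) (Ω : Finset ι) : Type := PIdx m Ω → ℝ

/-- Join `i ⊔ j` of two partial indices (on disjoint sets, the first takes precedence). -/
def pjoin {m : ι → ℕ} {Ω₁ Ω₂ : Finset ι} (i : PIdx m Ω₁) (j : PIdx m Ω₂) :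
    PIdx m (Ω₁ ∪ Ω₂) := fun ω =>
  if h : ω.val ∈ Ω₁ then i ⟨ω.val, h⟩
  else j ⟨ω.val, (Finset.mem_union.mp ω.property).resolve_left h⟩

/-- Transport of a partial index along an equality of index sets. -/
def pcast {m : ι → ℕ} {Ω₁ Ω₂ : Finset ι} (h : Ω₁ = Ω₂) (i : PIdx m Ω₁) : PIdx m Ω₂ :=
  fun ω => i ⟨ω.val, by rw [h]; exact ω.property⟩

/-- Restriction `i_{Ω'}` of a partial index to a subset. -/
def prestrict {m : ι → ℕ} {Ω Ω' : Finset ι} (h : Ω' ⊆ Ω) (i : PIdx m Ω) : PIdx m Ω' :=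
  fun ω => i ⟨ω.val, h ω.property⟩

/-- Frobenius norm `‖D‖_F` of a partial array. -/
noncomputable def pfrobNorm {m : ι → ℕ} {Ω : Finset ι} (D : PArr m Ω) : ℝ :=
  Real.sqrt (∑ i : PIdx m Ω, (D i) ^ 2)

/-- Partial Frobenius norm `‖D‖_{F(Ω')} ∈ ℝ^m(Ω \ Ω')`. -/
noncomputable def pfrob {m : ι → ℕ} {Ω Ω' : Finset ι} (h : Ω' ⊆ Ω) (D : PArr m Ω) :
    PArr m (Ω \ Ω') := fun i =>
  Real.sqrt (∑ j : PIdx m Ω',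
    (D (pcast (Finset.sdiff_union_of_subset h) (pjoin i j))) ^ 2)

/-- The doubled index set `Ω' ⊕ Ω''` (disjoint union inside `ι ⊕ ι`). -/
def oplus (Ω' Ω'' : Finset ι) : Finset (ι ⊕ ι) :=
  Ω'.map ⟨Sum.inl, Sum.inl_injective⟩ ∪ Ω''.map ⟨Sum.inr, Sum.inr_injective⟩

/-- Doubled dimension tuple `m^{×2}`. -/
abbrev mdup (m : ι → ℕ) : ι ⊕ ι → ℕ := Sum.elim m m

theorem inl_mem_oplus {Ω' Ω'' : Finset ι} {a : ι} (h : a ∈ Ω') :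
    Sum.inl a ∈ oplus Ω' Ω'' :=
  Finset.mem_union_left _ (Finset.mem_map_of_mem _ h)

theorem inr_mem_oplus {Ω' Ω'' : Finset ι} {a : ι} (h : a ∈ Ω'') :
    Sum.inr a ∈ oplus Ω' Ω'' :=
  Finset.mem_union_right _ (Finset.mem_map_of_mem _ h)

theorem mem_of_inl_mem_oplus {Ω' Ω'' : Finset ι} {a : ι} (h : Sum.inl a ∈ oplus Ω' Ω'') :
    a ∈ Ω' := by
  rcases Finset.mem_union.mp h with h1 | h2
  · rcases Finset.mem_map.mp h1 with ⟨b, hb, hba⟩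
    simp only [Function.Embedding.coeFn_mk] at hba
    rcases hba
    exact hb
  · rcases Finset.mem_map.mp h2 with ⟨b, hb, hba⟩
    simp at hba

theorem mem_of_inr_mem_oplus {Ω' Ω'' : Finset ι} {a : ι} (h : Sum.inr a ∈ oplus Ω' Ω'') :
    a ∈ Ω'' := by
  rcases Finset.mem_union.mp h with h1 | h2
  · rcases Finset.mem_map.mp h1 with ⟨b, hb, hba⟩
    simp at hba
  · rcases Finset.mem_map.mp h2 with ⟨b, hb, hba⟩
    simp only [Function.Embedding.coeFn_mk] at hba
    rcases hba
    exact hb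

/-- Concatenation `i ⌢ j ∈ 𝔍^{m^{×2}}(Ω' ⊕ Ω'')` of partial indices. -/
def pcat {m : ι → ℕ} {Ω' Ω'' : Finset ι} (i : PIdx m Ω') (j : PIdx m Ω'') :
    PIdx (mdup m) (oplus Ω' Ω'') := fun ω =>
  Sum.rec (motive := fun x => x ∈ oplus Ω' Ω'' → Fin (mdup m x))
    (fun a h => i ⟨a, mem_of_inl_mem_oplus h⟩)
    (fun a h => j ⟨a, mem_of_inr_mem_oplus h⟩) ω.val ω.property

/-- First (unprimed) component of an index on `Ω' ⊕ Ω''`. -/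
def pleft {m : ι → ℕ} {Ω' Ω'' : Finset ι} (κ : PIdx (mdup m) (oplus Ω' Ω'')) : PIdx m Ω' :=
  fun ω => κ ⟨Sum.inl ω.val, inl_mem_oplus ω.property⟩

/-- Second (primed) component of an index on `Ω' ⊕ Ω''`. -/
def pright {m : ι → ℕ} {Ω' Ω'' : Finset ι} (κ : PIdx (mdup m) (oplus Ω' Ω'')) : PIdx m Ω'' :=
  fun ω => κ ⟨Sum.inr ω.val, inr_mem_oplus ω.property⟩

/-- Transport of a partial array along an equality of index sets. -/
def parrCast {ι' : Type} {m : ι' → ℕ} {S₁ S₂ : Finset ι'} (h : S₁ = S₂) (C : PArr m S₁) :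
    PArr m S₂ := fun κ => C (pcast h.symm κ)

/-- Partial trace `C^⟨Ω'⟩` of an array `C ∈ ℝ^{m^{×2}}(Ω ⊕ Ω)` along `Ω' ⊆ Ω`. -/
noncomputable def ptrace {m : ι → ℕ} {Ω Ω' : Finset ι} (h : Ω' ⊆ Ω)
    (C : PArr (mdup m) (oplus Ω Ω)) : PArr (mdup m) (oplus (Ω \ Ω') (Ω \ Ω')) := fun κ =>
  ∑ ℓ : PIdx m Ω',
    C (pcast (by rw [Finset.sdiff_union_of_subset h])
        (pcat (pjoin (pleft κ) ℓ) (pjoin (pright κ) ℓ)))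

/-- `P` is a partition of the set `S` into mutually disjoint non-empty cells. -/
def IsPartition {α : Type} [DecidableEq α] (S : Finset α) (P : Finset (Finset α)) : Prop :=
  (∀ c ∈ P, c.Nonempty) ∧ (∀ c ∈ P, ∀ c' ∈ P, c ≠ c' → c ∩ c' = ∅) ∧ P.biUnion id = S

/-- The norm `‖C‖_π` associated with a partition `P` of the index set `S`. -/
noncomputable def partNorm {α : Type} [DecidableEq α] (m : α → ℕ) (S : Finset α)
    (P : Finset (Finset α)) (C : PArr m S) : ℝ :=
  sSup { y | ∃ Z : ∀ c : Finset α, PArr m (c ∩ S),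
    (∀ c ∈ P, pfrobNorm (Z c) = 1) ∧
    y = ∑ i : PIdx m S, C i * ∏ c ∈ P, Z c (prestrict Finset.inter_subset_right i) }

/-- `θ_{π,ω}`: `1/2` if `ω` and its primed copy lie in the same cell of the partition, else `0`. -/
noncomputable def theta (P : Finset (Finset (ι ⊕ ι))) (ω : ι) : ℝ :=
  if ∃ c ∈ P, Sum.inl ω ∈ c ∧ Sum.inr ω ∈ c then 1 / 2 else 0

/-- `℧ ∪ (℧ − N)`: the set of base positions hit by a cell of the doubled index set. -/
def flatten [Fintype ι] (c : Finset (ι ⊕ ι)) : Finset ι :=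
  Finset.univ.filter (fun a => Sum.inl a ∈ c ∨ Sum.inr a ∈ c)

end PArray

namespace PArray


section AuxCS

variable {ι : Type} [DecidableEq ι] [Fintype ι]

/-- ambient box of indices -/
def box (m : ι → ℕ) (Ω : Finset ι) : Finset (ι → ℕ) :=
  Fintype.piFinset fun ω => if ω ∈ Ω then Finset.range (m ω) else {0}

/-- restriction by zeroing out -/
def restr (S : Finset ι) (i : ι → ℕ) : ι → ℕ := fun ω => if ω ∈ S then i ω else 0

lemma mem_box {m : ι → ℕ} {Ω : Finset ι} {i : ι → ℕ} :
    i ∈ box m Ω ↔ ∀ ω, (ω ∈ Ω → i ω < m ω) ∧ (ω ∉ Ω → i ω = 0) := by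
  simp only [box, Fintype.mem_piFinset]
  constructor
  · intro h ω
    have := h ω
    constructor <;> intro hω <;> simp [hω] at this <;> simpa using this
  · intro h ω
    by_cases hω : ω ∈ Ω
    · simp [hω, (h ω).1 hω]
    · simp [hω, (h ω).2 hω]

lemma box_empty (m : ι → ℕ) : box m (∅ : Finset ι) = {fun _ => 0} := by
  ext i
  simp only [mem_box, Finset.notMem_empty, Finset.mem_singleton]
  constructor
  · intro h; funext ω; exact (h ω).2 (by simp)
  · rintro rfl ω; simp

lemma sum_box_insert {M : Type*} [AddCommMonoid M] (m : ι → ℕ) {ω : ι} {Ω : Finset ι}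
    (hω : ω ∉ Ω) (F : (ι → ℕ) → M) :
    ∑ i ∈ box m (insert ω Ω), F i
      = ∑ x ∈ Finset.range (m ω), ∑ i ∈ box m Ω, F (Function.update i ω x) := by
  rw [← Finset.sum_product']
  refine Finset.sum_nbij' (fun i => (i ω, Function.update i ω 0))
    (fun p => Function.update p.2 ω p.1) ?_ ?_ ?_ ?_ ?_
  · intro i hi
    rw [mem_box] at hi
    refine Finset.mem_product.mpr ⟨?_, ?_⟩
    · exact Finset.mem_range.mpr ((hi ω).1 (Finset.mem_insert_self _ _))
    · rw [mem_box]
      intro a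
      dsimp only
      by_cases ha : a = ω
      · rw [ha]; simp [hω]
      · rw [Function.update_of_ne ha]
        exact ⟨fun haΩ => (hi a).1 (Finset.mem_insert_of_mem haΩ),
          fun haΩ => (hi a).2 (by simp [ha, haΩ])⟩
  · intro p hp
    rw [Finset.mem_product] at hp
    have h2 := mem_box.mp hp.2
    rw [mem_box]
    intro a
    by_cases ha : a = ω
    · rw [ha]; simp [Finset.mem_range.mp hp.1]
    · rw [Function.update_of_ne ha]
      exact ⟨fun haΩ => (h2 a).1 ((Finset.mem_insert.mp haΩ).resolve_left ha),
        fun haΩ => (h2 a).2 (fun h => haΩ (Finset.mem_insert_of_mem h))⟩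
  · intro i hi
    dsimp only
    funext a
    by_cases ha : a = ω
    · rw [ha]; simp
    · simp [Function.update_of_ne ha]
  · intro p hp
    rw [Finset.mem_product] at hp
    have h2 := mem_box.mp hp.2
    refine Prod.ext (by simp) ?_
    funext a
    by_cases ha : a = ω
    · rw [ha]; simp [(h2 ω).2 hω]
    · simp [Function.update_of_ne ha]
  · intro i hi
    dsimp only
    congr 1
    funext a
    by_cases ha : a = ω
    · rw [ha]; simp
    · simp [Function.update_of_ne ha]

/-- Equivalence between dependent partial indices and box elements. -/
def boxEquiv (m : ι → ℕ) (S : Finset ι) : PIdx m S ≃ {j : ι → ℕ // j ∈ box m S} where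
  toFun i := ⟨fun ω => if h : ω ∈ S then (i ⟨ω, h⟩ : ℕ) else 0, by
    rw [mem_box]
    intro ω
    constructor
    · intro hω; simp only [dif_pos hω]; exact (i ⟨ω, hω⟩).isLt
    · intro hω; simp only [dif_neg hω]⟩
  invFun j := fun ω => ⟨j.1 ω.1, ((mem_box.mp j.2) ω.1).1 ω.2⟩
  left_inv i := by
    funext ω
    apply Fin.ext
    simp only [dif_pos ω.2]
  right_inv j := by
    apply Subtype.ext
    funext ω
    dsimp
    split_ifs with h
    · rfl
    · exact (((mem_box.mp j.2) ω).2 h).symm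

lemma sum_box_eq_sum_pidx (m : ι → ℕ) (S : Finset ι) (G : (ι → ℕ) → ℝ) :
    ∑ j ∈ box m S, G j
      = ∑ i : PIdx m S, G (fun ω => if h : ω ∈ S then (i ⟨ω, h⟩ : ℕ) else 0) := by
  rw [← Finset.sum_coe_sort (box m S) G]
  exact (Fintype.sum_equiv (boxEquiv m S) _ _ (fun i => rfl)).symm

lemma sum_le_sqrt_card_mul {α : Type*} (s : Finset α) (f : α → ℝ) (hf : ∀ a ∈ s, 0 ≤ f a) :
    ∑ a ∈ s, f a ≤ Real.sqrt s.card * Real.sqrt (∑ a ∈ s, f a ^ 2) := by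
  rw [← Real.sqrt_mul (by positivity)]
  have h0 : 0 ≤ ∑ a ∈ s, f a := Finset.sum_nonneg hf
  rw [← Real.sqrt_sq h0]
  apply Real.sqrt_le_sqrt
  calc (∑ a ∈ s, f a) ^ 2 = (∑ a ∈ s, 1 * f a) ^ 2 := by simp
    _ ≤ (∑ a ∈ s, (1:ℝ) ^ 2) * ∑ a ∈ s, f a ^ 2 := Finset.sum_mul_sq_le_sq_mul_sq s _ _
    _ = s.card * ∑ a ∈ s, f a ^ 2 := by simp

lemma sum_mul_le_sqrt_mul_sqrt {α : Type*} (s : Finset α) (f g : α → ℝ) :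
    ∑ a ∈ s, f a * g a ≤ Real.sqrt (∑ a ∈ s, f a ^ 2) * Real.sqrt (∑ a ∈ s, g a ^ 2) := by
  calc ∑ a ∈ s, f a * g a ≤ |∑ a ∈ s, f a * g a| := le_abs_self _
    _ = Real.sqrt ((∑ a ∈ s, f a * g a) ^ 2) := (Real.sqrt_sq_eq_abs _).symm
    _ ≤ Real.sqrt ((∑ a ∈ s, f a ^ 2) * ∑ a ∈ s, g a ^ 2) :=
        Real.sqrt_le_sqrt (Finset.sum_mul_sq_le_sq_mul_sq s f g)
    _ = _ := Real.sqrt_mul (by positivity) _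


lemma keyA (m : ι → ℕ) {γ : Type} [DecidableEq γ] (P : Finset γ) (Ω : Finset ι) :
    ∀ (T : γ → Finset ι) (h : γ → (ι → ℕ) → ℝ),
    (∀ c ∈ P, T c ⊆ Ω) →
    (∀ c ∈ P, ∀ j, 0 ≤ h c j) →
    (∀ ω ∈ Ω, (P.filter fun c => ω ∈ T c).card = 1 ∨ (P.filter fun c => ω ∈ T c).card = 2) →
    ∑ i ∈ box m Ω, ∏ c ∈ P, h c (restr (T c) i)
      ≤ (∏ ω ∈ Ω, if (P.filter fun c => ω ∈ T c).card = 1 then Real.sqrt (m ω) else 1)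
        * ∏ c ∈ P, Real.sqrt (∑ j ∈ box m (T c), (h c j) ^ 2) := by
  induction Ω using Finset.induction_on with
  | empty =>
    intro T h hT hpos _
    rw [box_empty, Finset.sum_singleton, Finset.prod_empty, one_mul]
    apply Finset.prod_le_prod
    · intro c hc; exact hpos c hc _
    · intro c hc
      have hTc : T c = ∅ := Finset.subset_empty.mp (hT c hc)
      have : restr (T c) (fun _ => 0) = (fun _ => (0:ℕ)) := by
        funext a; simp [restr]
      rw [this, hTc, box_empty, Finset.sum_singleton, Real.sqrt_sq (hpos c hc _)]
  | @insert ω Ω' hω ih =>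
    intro T h hT hpos hdeg
    classical
    set D := P.filter (fun c => ω ∈ T c) with hD
    set T' : γ → Finset ι := fun c => (T c).erase ω with hT'
    set h' : γ → (ι → ℕ) → ℝ := fun c j =>
      if ω ∈ T c then Real.sqrt (∑ x ∈ Finset.range (m ω), (h c (Function.update j ω x)) ^ 2)
      else h c j with hh'
    have hT'sub : ∀ c ∈ P, T' c ⊆ Ω' := by
      intro c hc a ha
      have h1 : a ∈ T c := Finset.mem_of_mem_erase ha
      have h2 : a ≠ ω := Finset.ne_of_mem_erase ha
      exact (Finset.mem_insert.mp (hT c hc h1)).resolve_left h2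
    have hpos' : ∀ c ∈ P, ∀ j, 0 ≤ h' c j := by
      intro c hc j
      simp only [hh']
      split_ifs
      · exact Real.sqrt_nonneg _
      · exact hpos c hc j
    have hfiltereq : ∀ a ∈ Ω', (P.filter fun c => a ∈ T' c) = (P.filter fun c => a ∈ T c) := by
      intro a ha
      have hane : a ≠ ω := by rintro rfl; exact hω ha
      apply Finset.filter_congr
      intro c _
      simp [hT', Finset.mem_erase, hane]
    have hdeg' : ∀ a ∈ Ω',
        (P.filter fun c => a ∈ T' c).card = 1 ∨ (P.filter fun c => a ∈ T' c).card = 2 := by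
      intro a ha
      rw [hfiltereq a ha]
      exact hdeg a (Finset.mem_insert_of_mem ha)
    -- norm preservation
    have hnorm : ∀ c ∈ P,
        ∑ j ∈ box m (T' c), (h' c j) ^ 2 = ∑ j ∈ box m (T c), (h c j) ^ 2 := by
      intro c hc
      by_cases hmem : ω ∈ T c
      · have hins : T c = insert ω (T' c) := by
          rw [hT']; exact (Finset.insert_erase hmem).symm
        rw [hins, sum_box_insert m (Finset.notMem_erase ω (T c))]
        rw [Finset.sum_comm]
        apply Finset.sum_congr rfl
        intro j _
        rw [hh']
        simp only [hmem, if_true]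
        rw [Real.sq_sqrt (by positivity)]
      · have : T' c = T c := Finset.erase_eq_of_notMem hmem
        rw [this]
        apply Finset.sum_congr rfl
        intro j _
        rw [hh']
        simp [hmem]
    -- the pointwise bound
    have hpoint : ∀ i' ∈ box m Ω',
        ∑ x ∈ Finset.range (m ω), ∏ c ∈ P, h c (restr (T c) (Function.update i' ω x))
          ≤ (if D.card = 1 then Real.sqrt (m ω) else 1)
            * ∏ c ∈ P, h' c (restr (T' c) i') := by
      intro i' _
      have hrestr_not : ∀ c, ω ∉ T c → ∀ x,
          restr (T c) (Function.update i' ω x) = restr (T' c) i' := by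
        intro c hmem x
        have hTceq : T' c = T c := Finset.erase_eq_of_notMem hmem
        rw [hTceq]
        funext a
        simp only [restr]
        by_cases ha : a ∈ T c
        · have hane : a ≠ ω := by rintro rfl; exact hmem ha
          simp [ha, Function.update_of_ne hane]
        · simp [ha]
      have hrestr_mem : ∀ c, ω ∈ T c → ∀ x,
          restr (T c) (Function.update i' ω x)
            = Function.update (restr (T' c) i') ω x := by
        intro c hmem x
        funext a
        by_cases ha : a = ω
        · rw [ha]; simp [restr, hmem]
        · rw [Function.update_of_ne ha]
          simp only [restr, hT', Finset.mem_erase, ha, ne_eq, false_and, not_false_iff,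
            true_and, Function.update_of_ne ha]
      -- split the product
      have hsplit : ∀ x, ∏ c ∈ P, h c (restr (T c) (Function.update i' ω x))
          = (∏ c ∈ D, h c (Function.update (restr (T' c) i') ω x))
            * ∏ c ∈ P.filter (fun c => ω ∉ T c), h' c (restr (T' c) i') := by
        intro x
        rw [← Finset.prod_filter_mul_prod_filter_not P (fun c => ω ∈ T c)]
        congr 1
        · apply Finset.prod_congr rfl
          intro c hc
          rw [hrestr_mem c (Finset.mem_filter.mp hc).2 x]
        · apply Finset.prod_congr rfl
          intro c hc
          have hmem : ω ∉ T c := (Finset.mem_filter.mp hc).2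
          rw [hrestr_not c hmem x, hh']
          simp [hmem]
      simp only [hsplit]
      rw [← Finset.sum_mul]
      have hKnonneg : 0 ≤ ∏ c ∈ P.filter (fun c => ω ∉ T c), h' c (restr (T' c) i') :=
        Finset.prod_nonneg (fun c hc => hpos' c (Finset.mem_filter.mp hc).1 _)
      have hProdP : ∏ c ∈ P, h' c (restr (T' c) i')
          = (∏ c ∈ D, h' c (restr (T' c) i'))
            * ∏ c ∈ P.filter (fun c => ω ∉ T c), h' c (restr (T' c) i') := by
        rw [← Finset.prod_filter_mul_prod_filter_not P (fun c => ω ∈ T c)]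
      rw [hProdP, ← mul_assoc]
      apply mul_le_mul_of_nonneg_right _ hKnonneg
      -- main bound on the D part
      rcases hdeg ω (Finset.mem_insert_self ω Ω') with h1 | h2
      · -- card D = 1
        rw [← hD] at h1
        rw [if_pos h1]
        obtain ⟨c₁, hc₁⟩ := Finset.card_eq_one.mp h1
        have hc₁D : c₁ ∈ P.filter (fun c => ω ∈ T c) := by
          rw [← hD, hc₁]; exact Finset.mem_singleton_self c₁
        have hc₁P : c₁ ∈ P := (Finset.mem_filter.mp hc₁D).1
        have hωT : ω ∈ T c₁ := (Finset.mem_filter.mp hc₁D).2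
        rw [hc₁]
        simp only [Finset.prod_singleton]
        calc ∑ x ∈ Finset.range (m ω), h c₁ (Function.update (restr (T' c₁) i') ω x)
            ≤ Real.sqrt (Finset.range (m ω)).card
              * Real.sqrt (∑ x ∈ Finset.range (m ω),
                  (h c₁ (Function.update (restr (T' c₁) i') ω x)) ^ 2) := by
              apply sum_le_sqrt_card_mul
              intro a _
              exact hpos c₁ hc₁P _
          _ = Real.sqrt (m ω) * h' c₁ (restr (T' c₁) i') := by
              rw [Finset.card_range]
              congr 1
              rw [hh']; simp [hωT]
      · -- card D = 2
        rw [← hD] at h2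
        have hne1 : D.card ≠ 1 := by rw [h2]; norm_num
        rw [if_neg hne1, one_mul]
        obtain ⟨c₁, c₂, hc12, hcD⟩ := Finset.card_eq_two.mp h2
        have hc₁D : c₁ ∈ P.filter (fun c => ω ∈ T c) := by rw [← hD, hcD]; simp
        have hc₂D : c₂ ∈ P.filter (fun c => ω ∈ T c) := by rw [← hD, hcD]; simp
        have hωT₁ : ω ∈ T c₁ := (Finset.mem_filter.mp hc₁D).2
        have hωT₂ : ω ∈ T c₂ := (Finset.mem_filter.mp hc₂D).2
        rw [hcD]
        rw [Finset.prod_pair hc12]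
        calc ∑ x ∈ Finset.range (m ω),
              ∏ c ∈ ({c₁, c₂} : Finset γ), h c (Function.update (restr (T' c) i') ω x)
            = ∑ x ∈ Finset.range (m ω),
              (h c₁ (Function.update (restr (T' c₁) i') ω x))
              * (h c₂ (Function.update (restr (T' c₂) i') ω x)) := by
              apply Finset.sum_congr rfl
              intro x _
              rw [Finset.prod_pair hc12]
          _ ≤ Real.sqrt (∑ x ∈ Finset.range (m ω),
                (h c₁ (Function.update (restr (T' c₁) i') ω x)) ^ 2)
              * Real.sqrt (∑ x ∈ Finset.range (m ω),
                (h c₂ (Function.update (restr (T' c₂) i') ω x)) ^ 2) :=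
              sum_mul_le_sqrt_mul_sqrt _ _ _
          _ = h' c₁ (restr (T' c₁) i') * h' c₂ (restr (T' c₂) i') := by
              rw [hh']; simp [hωT₁, hωT₂]
    -- assemble
    have hwnn : (0:ℝ) ≤ (if D.card = 1 then Real.sqrt (m ω) else 1) := by
      split_ifs
      · exact Real.sqrt_nonneg _
      · norm_num
    calc ∑ i ∈ box m (insert ω Ω'), ∏ c ∈ P, h c (restr (T c) i)
        = ∑ i' ∈ box m Ω', ∑ x ∈ Finset.range (m ω),
            ∏ c ∈ P, h c (restr (T c) (Function.update i' ω x)) := by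
          rw [sum_box_insert m hω, Finset.sum_comm]
      _ ≤ ∑ i' ∈ box m Ω', (if D.card = 1 then Real.sqrt (m ω) else 1)
            * ∏ c ∈ P, h' c (restr (T' c) i') := Finset.sum_le_sum hpoint
      _ = (if D.card = 1 then Real.sqrt (m ω) else 1)
            * ∑ i' ∈ box m Ω', ∏ c ∈ P, h' c (restr (T' c) i') := by
          rw [Finset.mul_sum]
      _ ≤ (if D.card = 1 then Real.sqrt (m ω) else 1)
            * ((∏ a ∈ Ω', if (P.filter fun c => a ∈ T' c).card = 1 then Real.sqrt (m a) else 1)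
              * ∏ c ∈ P, Real.sqrt (∑ j ∈ box m (T' c), (h' c j) ^ 2)) := by
          apply mul_le_mul_of_nonneg_left (ih T' h' hT'sub hpos' hdeg') hwnn
      _ = (∏ a ∈ insert ω Ω', if (P.filter fun c => a ∈ T c).card = 1
              then Real.sqrt (m a) else 1)
            * ∏ c ∈ P, Real.sqrt (∑ j ∈ box m (T c), (h c j) ^ 2) := by
          rw [Finset.prod_insert hω, ← hD, mul_assoc]
          congr 1
          congr 1
          · apply Finset.prod_congr rfl
            intro a ha
            rw [hfiltereq a ha]
          · apply Finset.prod_congr rfl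
            intro c hc
            rw [hnorm c hc]


end AuxCS

/-- Bridge array: the absolute value of `C c`, as a total function on ambient indices. -/
noncomputable def bridgeH {N : ℕ} (m : Fin N → ℕ) (Ω : Finset (Fin N))
    (C : ∀ c : Finset (Fin N ⊕ Fin N), PArr m (flatten c ∩ Ω))
    (c : Finset (Fin N ⊕ Fin N)) (j : Fin N → ℕ) : ℝ :=
  if H : ∀ ω ∈ flatten c ∩ Ω, j ω < m ω
  then |C c (fun ω => ⟨j ω.1, H ω.1 ω.2⟩)| else 0


/-- Cauchy–Schwarz-type bound for a partition `π = {℧_τ}` of `Ω ⊕ Ω`: with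
`Ω_τ = (℧_τ ∪ (℧_τ − N)) ∩ Ω`, for any partial arrays `C^{(τ)} ∈ ℝ^m(Ω_τ)`,
`Σ_{i∈𝔍^m(Ω)} Π_τ C^{(τ)}_{i_{Ω_τ}} ≤ Π_{ω∈Ω} m_ω^{θ_{π,ω}} Π_τ ‖C^{(τ)}‖_F`. -/
theorem partition_cauchy_schwarz {N : ℕ} (m : Fin N → ℕ) (Ω : Finset (Fin N))
    (hΩ : Ω.Nonempty) (κ : ℕ) (P : Finset (Finset (Fin N ⊕ Fin N)))
    (hP : IsPartition (oplus Ω Ω) P) (hPcard : P.card = κ)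
    (C : ∀ c : Finset (Fin N ⊕ Fin N), PArr m (flatten c ∩ Ω)) :
    ∑ i : PIdx m Ω, ∏ c ∈ P, C c (prestrict Finset.inter_subset_right i) ≤
      (∏ ω ∈ Ω, (m ω : ℝ) ^ theta P ω) * ∏ c ∈ P, pfrobNorm (C c) := by
  classical
  have hUnion := hP.2.2
  have hDisj := hP.2.1
  have hcell : ∀ z ∈ oplus Ω Ω, ∃ c ∈ P, z ∈ c := by
    intro z hz
    rw [← hUnion] at hz
    simpa using Finset.mem_biUnion.mp hz
  have huniq : ∀ c ∈ P, ∀ c' ∈ P, ∀ z : Fin N ⊕ Fin N, z ∈ c → z ∈ c' → c = c' := by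
    intro c hc c' hc' z h1 h2
    by_contra hne
    have hint := hDisj c hc c' hc' hne
    have hz : z ∈ c ∩ c' := Finset.mem_inter.mpr ⟨h1, h2⟩
    rw [hint] at hz
    exact absurd hz (Finset.notMem_empty z)
  have hflat : ∀ (c : Finset (Fin N ⊕ Fin N)) (ω : Fin N), ω ∈ Ω →
      (ω ∈ flatten c ∩ Ω ↔ (Sum.inl ω ∈ c ∨ Sum.inr ω ∈ c)) := by
    intro c ω hωΩ
    simp [flatten, hωΩ]
  -- the cells containing the two copies of ω, and the filter description
  have hfilter : ∀ ω ∈ Ω, ∃ a ∈ P, ∃ b ∈ P, Sum.inl ω ∈ a ∧ Sum.inr ω ∈ b ∧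
      P.filter (fun c => ω ∈ flatten c ∩ Ω) = {a, b} := by
    intro ω hω
    obtain ⟨a, haP, hainl⟩ := hcell (Sum.inl ω) (inl_mem_oplus hω)
    obtain ⟨b, hbP, hbinr⟩ := hcell (Sum.inr ω) (inr_mem_oplus hω)
    refine ⟨a, haP, b, hbP, hainl, hbinr, ?_⟩
    ext c
    rw [Finset.mem_filter]
    constructor
    · rintro ⟨hcP, hc⟩
      rcases (hflat c ω hω).mp hc with h1 | h2
      · exact Finset.mem_insert.mpr (Or.inl (huniq c hcP a haP _ h1 hainl))
      · simp [huniq c hcP b hbP _ h2 hbinr]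
    · intro hc
      rcases Finset.mem_insert.mp hc with rfl | hc
      · exact ⟨haP, (hflat c ω hω).mpr (Or.inl hainl)⟩
      · rw [Finset.mem_singleton.mp hc]
        exact ⟨hbP, (hflat b ω hω).mpr (Or.inr hbinr)⟩
  -- degree condition
  have hdeg : ∀ ω ∈ Ω, (P.filter fun c => ω ∈ flatten c ∩ Ω).card = 1 ∨
      (P.filter fun c => ω ∈ flatten c ∩ Ω).card = 2 := by
    intro ω hω
    obtain ⟨a, haP, b, hbP, hainl, hbinr, hfeq⟩ := hfilter ω hω
    rw [hfeq]
    by_cases hab : a = b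
    · subst hab; simp
    · right; exact Finset.card_pair hab
  -- nonnegativity of the bridge arrays
  have hpos : ∀ c ∈ P, ∀ j, 0 ≤ bridgeH m Ω C c j := by
    intro c _ j
    unfold bridgeH
    split_ifs
    · exact abs_nonneg _
    · exact le_refl 0
  -- step 1+2: bound by the box sum of bridge arrays
  have hstep : ∑ i : PIdx m Ω, ∏ c ∈ P, C c (prestrict Finset.inter_subset_right i)
      ≤ ∑ j ∈ box m Ω, ∏ c ∈ P, bridgeH m Ω C c (restr (flatten c ∩ Ω) j) := by
    rw [sum_box_eq_sum_pidx]
    apply Finset.sum_le_sum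
    intro i _
    calc ∏ c ∈ P, C c (prestrict Finset.inter_subset_right i)
        ≤ |∏ c ∈ P, C c (prestrict Finset.inter_subset_right i)| := le_abs_self _
      _ = ∏ c ∈ P, |C c (prestrict Finset.inter_subset_right i)| := Finset.abs_prod _ _
      _ = _ := by
          apply Finset.prod_congr rfl
          intro c _
          set emb : Fin N → ℕ := fun ω => if h : ω ∈ Ω then (i ⟨ω, h⟩ : ℕ) else 0 with hemb
          have H : ∀ ω ∈ flatten c ∩ Ω, restr (flatten c ∩ Ω) emb ω < m ω := by
            intro ω hω
            have hωΩ : ω ∈ Ω := Finset.inter_subset_right hω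
            simp only [restr, if_pos hω, hemb, dif_pos hωΩ]
            exact (i ⟨ω, hωΩ⟩).isLt
          rw [bridgeH, dif_pos H]
          congr 1
          apply congrArg
          funext ωc
          apply Fin.ext
          have h1 : ωc.1 ∈ flatten c ∩ Ω := ωc.2
          have h2 : ωc.1 ∈ Ω := Finset.inter_subset_right h1
          simp only [restr, if_pos h1, hemb, dif_pos h2, prestrict]
  -- Frobenius norms agree
  have hfrob : ∀ c ∈ P,
      Real.sqrt (∑ j ∈ box m (flatten c ∩ Ω), (bridgeH m Ω C c j) ^ 2) = pfrobNorm (C c) := by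
    intro c _
    rw [pfrobNorm]
    congr 1
    rw [sum_box_eq_sum_pidx]
    apply Finset.sum_congr rfl
    intro i _
    set emb : Fin N → ℕ := fun ω => if h : ω ∈ flatten c ∩ Ω then (i ⟨ω, h⟩ : ℕ) else 0
      with hemb
    have H : ∀ ω ∈ flatten c ∩ Ω, emb ω < m ω := by
      intro ω hω
      simp only [hemb, dif_pos hω]
      exact (i ⟨ω, hω⟩).isLt
    rw [bridgeH, dif_pos H]
    rw [sq_abs]
    congr 1
    apply congrArg
    funext ωc
    apply Fin.ext
    simp only [hemb, dif_pos ωc.2]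
  -- weights agree
  have hweight : (∏ ω ∈ Ω, if (P.filter fun c => ω ∈ flatten c ∩ Ω).card = 1
        then Real.sqrt (m ω) else 1) = ∏ ω ∈ Ω, (m ω : ℝ) ^ theta P ω := by
    apply Finset.prod_congr rfl
    intro ω hω
    obtain ⟨a, haP, b, hbP, hainl, hbinr, hfeq⟩ := hfilter ω hω
    rw [hfeq]
    by_cases hab : a = b
    · subst hab
      have hcard : ({a, a} : Finset (Finset (Fin N ⊕ Fin N))).card = 1 := by simp
      rw [if_pos hcard]
      have hth : theta P ω = 1 / 2 := by
        rw [theta, if_pos ⟨a, haP, hainl, hbinr⟩]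
      rw [hth]
      exact Real.sqrt_eq_rpow _
    · have hcard : ({a, b} : Finset (Finset (Fin N ⊕ Fin N))).card ≠ 1 := by
        rw [Finset.card_pair hab]; norm_num
      rw [if_neg hcard]
      have hth : theta P ω = 0 := by
        rw [theta, if_neg]
        rintro ⟨c, hcP, h1, h2⟩
        exact hab ((huniq a haP c hcP _ hainl h1).trans (huniq c hcP b hbP _ h2 hbinr))
      rw [hth, Real.rpow_zero]
  -- conclude
  calc ∑ i : PIdx m Ω, ∏ c ∈ P, C c (prestrict Finset.inter_subset_right i)
      ≤ ∑ j ∈ box m Ω, ∏ c ∈ P, bridgeH m Ω C c (restr (flatten c ∩ Ω) j) := hstep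
    _ ≤ (∏ ω ∈ Ω, if (P.filter fun c => ω ∈ flatten c ∩ Ω).card = 1
            then Real.sqrt (m ω) else 1)
          * ∏ c ∈ P, Real.sqrt (∑ j ∈ box m (flatten c ∩ Ω), (bridgeH m Ω C c j) ^ 2) :=
        keyA m P Ω (fun c => flatten c ∩ Ω) (bridgeH m Ω C)
          (fun c _ => Finset.inter_subset_right) hpos hdeg
    _ = (∏ ω ∈ Ω, (m ω : ℝ) ^ theta P ω) * ∏ c ∈ P, pfrobNorm (C c) := by
        rw [hweight]
        congr 1
        exact Finset.prod_congr rfl hfrob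


end PArray
end

section
/- Let ∅ ≠ Ω ⊆ [N], π ∈ 𝔓_κ(Ω ⊕ Ω), and Θ_π = Σ_{ω∈Ω} θ_{π,ω}. Then 2Θ_π ≤ |Ω| if 1 ≤ κ ≤ |Ω|, and 2Θ_π ≤ 2|Ω| − κ if |Ω| < κ ≤ 2|Ω|. -/
open scoped BigOperators Classical

namespace PArray

/-- Bound on the number of paired dimensions of a partition: with
`Θ_π = Σ_{ω∈Ω} θ_{π,ω}`, one has `2Θ_π ≤ |Ω|` for `1 ≤ κ ≤ |Ω|` and
`2Θ_π ≤ 2|Ω| − κ` for `|Ω| < κ ≤ 2|Ω|`. -/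
theorem theta_sum_bound {N : ℕ} (Ω : Finset (Fin N)) (hΩ : Ω.Nonempty) (κ : ℕ)
    (P : Finset (Finset (Fin N ⊕ Fin N))) (hP : IsPartition (oplus Ω Ω) P)
    (hPcard : P.card = κ) :
    (1 ≤ κ → κ ≤ Ω.card → 2 * ∑ ω ∈ Ω, theta P ω ≤ (Ω.card : ℝ)) ∧
    (Ω.card < κ → κ ≤ 2 * Ω.card → 2 * ∑ ω ∈ Ω, theta P ω ≤ 2 * (Ω.card : ℝ) - κ) := by
  classical
  obtain ⟨hne, hdisj, hcover⟩ := hP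
  set paired := Ω.filter (fun ω => ∃ c ∈ P, Sum.inl ω ∈ c ∧ Sum.inr ω ∈ c) with hpaired
  have hsum : ∑ ω ∈ Ω, theta P ω = (paired.card : ℝ) / 2 := by
    rw [hpaired]
    simp only [theta]
    rw [Finset.sum_ite, Finset.sum_const, Finset.sum_const]
    simp
    ring
  have huniq : ∀ {c c' : Finset (Fin N ⊕ Fin N)}, c ∈ P → c' ∈ P →
      ∀ {x}, x ∈ c → x ∈ c' → c = c' := by
    intro c c' hc hc' x hx hx'
    by_contra h
    have h1 := hdisj c hc c' hc' h
    have h2 : x ∈ c ∩ c' := Finset.mem_inter.mpr ⟨hx, hx'⟩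
    rw [h1] at h2
    exact absurd h2 (Finset.notMem_empty x)
  -- each paired ω's inl lies in exactly one cell
  have hone : ∀ ω ∈ paired, (P.filter (fun c => Sum.inl ω ∈ c)).card = 1 := by
    intro ω hω
    have hωΩ : ω ∈ Ω := (Finset.mem_filter.mp hω).1
    obtain ⟨c, hc, hinl, _⟩ := (Finset.mem_filter.mp hω).2
    rw [Finset.card_eq_one]
    refine ⟨c, Finset.eq_singleton_iff_unique_mem.mpr ⟨Finset.mem_filter.mpr ⟨hc, hinl⟩, ?_⟩⟩
    intro c' hc'
    obtain ⟨hc'P, hc'mem⟩ := Finset.mem_filter.mp hc'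
    exact huniq hc'P hc hc'mem hinl
  have hfib : paired.card = ∑ c ∈ P, (paired.filter (fun ω => Sum.inl ω ∈ c)).card := by
    have : ∀ c ∈ P, (paired.filter (fun ω => Sum.inl ω ∈ c)).card
        = ∑ ω ∈ paired, if Sum.inl ω ∈ c then 1 else 0 := by
      intro c _; rw [Finset.sum_ite, Finset.sum_const, Finset.sum_const]; simp
    rw [Finset.sum_congr rfl this, Finset.sum_comm]
    have : ∀ ω ∈ paired, (∑ c ∈ P, if Sum.inl ω ∈ c then 1 else 0) = 1 := by
      intro ω hω
      rw [Finset.sum_ite, Finset.sum_const, Finset.sum_const]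
      simp [hone ω hω]
    rw [Finset.sum_congr rfl this, Finset.sum_const, smul_eq_mul, mul_one]
  have hcell : ∀ c ∈ P, (paired.filter (fun ω => Sum.inl ω ∈ c)).card + 1 ≤ c.card := by
    intro c hc
    set pc := paired.filter (fun ω => Sum.inl ω ∈ c) with hpc
    rcases pc.eq_empty_or_nonempty with h | h
    · rw [h]; simpa using Finset.card_pos.mpr (hne c hc)
    · have hsub : pc.map ⟨Sum.inl, Sum.inl_injective⟩ ∪ pc.map ⟨Sum.inr, Sum.inr_injective⟩
          ⊆ c := by
        intro x hx
        rcases Finset.mem_union.mp hx with hx | hx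
        · obtain ⟨ω, hω, rfl⟩ := Finset.mem_map.mp hx
          exact (Finset.mem_filter.mp hω).2
        · obtain ⟨ω, hω, rfl⟩ := Finset.mem_map.mp hx
          obtain ⟨hωp, hωinl⟩ := Finset.mem_filter.mp hω
          obtain ⟨-, c', hc', hinl, hinr⟩ := Finset.mem_filter.mp hωp
          have hcc : c' = c := huniq hc' hc hinl hωinl
          rwa [hcc] at hinr
      have hdisj2 : Disjoint (pc.map ⟨Sum.inl, Sum.inl_injective⟩)
          (pc.map ⟨Sum.inr, Sum.inr_injective⟩) := by
        rw [Finset.disjoint_left]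
        intro x hx hx'
        obtain ⟨ω, _, rfl⟩ := Finset.mem_map.mp hx
        obtain ⟨ω', _, h'⟩ := Finset.mem_map.mp hx'
        simp at h'
      have hcard : 2 * pc.card ≤ c.card := by
        have := Finset.card_le_card hsub
        rw [Finset.card_union_of_disjoint hdisj2, Finset.card_map, Finset.card_map] at this
        omega
      have : 1 ≤ pc.card := Finset.card_pos.mpr h
      omega
  have hcover_card : ∑ c ∈ P, c.card = 2 * Ω.card := by
    have h1 : ∑ c ∈ P, c.card = (P.biUnion id).card := by
      refine (Finset.card_biUnion ?_).symm
      intro x hx y hy hxy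
      show Disjoint x y
      rw [Finset.disjoint_iff_inter_eq_empty]
      exact hdisj x hx y hy hxy
    rw [h1, hcover]
    have hd : Disjoint (Ω.map ⟨Sum.inl, Sum.inl_injective⟩)
        (Ω.map ⟨Sum.inr, Sum.inr_injective⟩) := by
      rw [Finset.disjoint_left]
      intro x hx hx'
      obtain ⟨ω, _, rfl⟩ := Finset.mem_map.mp hx
      obtain ⟨ω', _, h'⟩ := Finset.mem_map.mp hx'
      simp at h'
    rw [oplus, Finset.card_union_of_disjoint hd, Finset.card_map, Finset.card_map]
    omega
  have hkey : κ + paired.card ≤ 2 * Ω.card := by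
    calc κ + paired.card = ∑ c ∈ P, ((paired.filter (fun ω => Sum.inl ω ∈ c)).card + 1) := by
          rw [Finset.sum_add_distrib, Finset.sum_const, smul_eq_mul, mul_one, hPcard, ← hfib]
          omega
      _ ≤ ∑ c ∈ P, c.card := Finset.sum_le_sum hcell
      _ = 2 * Ω.card := hcover_card
  have hple : paired.card ≤ Ω.card := Finset.card_filter_le _ _
  constructor
  · intro _ _
    rw [hsum]
    have : (paired.card : ℝ) ≤ (Ω.card : ℝ) := by exact_mod_cast hple
    linarith
  · intro _ _
    rw [hsum]
    have : (κ : ℝ) + paired.card ≤ 2 * Ω.card := by exact_mod_cast hkey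
    linarith

end PArray
end

section
/- Let d ≥ 2, k = (k₁,…,k_{d−1}), r = (r₁,…,r_{d−1}) ∈ ℕ^{d−1}, and let W₁ ∈ ℝ^{1×k₁}, W_s ∈ ℝ^{k_{s−1}×k_s} for 2 ≤ s ≤ d−1, W_d ∈ ℝ^{k_{d−1}×1}, and R_s ∈ ℝ^{k_s×r_s} for s ∈ [d−1]. Let D = Ψ_{[d−1]}(W₁,…,W_d). Then Δ(R₁,…,R_{d−1}) = Σ_{i,j∈𝔍^k} Σ_{α,β∈𝔍^r} D_{(α⊗i)⌢(β⊗j)} · Π_{s=1}^{d−1} R_s(i_s,α_s)·R_s(j_s,β_s). -/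
open scoped BigOperators Classical

namespace PArray

open Matrix

/-- The partial row-vector products
`z_s = W₁R₁R₁ᵀW₂R₂ ⋯ R_{s}` (0-indexed: `z 0 = (W 0 · R 0)ᵀ`, viewed as vectors). -/
noncomputable def zchain (K r : ℕ → ℕ)
    (W : ∀ s : ℕ, Matrix (Fin (K s)) (Fin (K (s + 1))) ℝ)
    (R : ∀ s : ℕ, Matrix (Fin (K (s + 1))) (Fin (r s)) ℝ) : ∀ s : ℕ, Fin (r s) → ℝ
  | 0 => (R 0)ᵀ.mulVec ((W 0)ᵀ.mulVec 1)
  | s + 1 => (R (s + 1))ᵀ.mulVec ((W (s + 1))ᵀ.mulVec ((R s).mulVec (zchain K r W R s)))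

/-- The quadratic form
`Δ(R₁,…,R_{d−1}) = (W₁R₁)(R₁ᵀW₂R₂)⋯(R_{d−2}ᵀW_{d−1}R_{d−1})(R_{d−1}ᵀW_d)`. -/
noncomputable def Delta (d : ℕ) (hd : 2 ≤ d) (K r : ℕ → ℕ)
    (W : ∀ s : ℕ, Matrix (Fin (K s)) (Fin (K (s + 1))) ℝ)
    (R : ∀ s : ℕ, Matrix (Fin (K (s + 1))) (Fin (r s)) ℝ) : ℝ :=
  ∑ b : Fin (K d),
    (W (d - 1))ᵀ.mulVec
      (fun y : Fin (K (d - 1)) =>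
        (R (d - 2)).mulVec (zchain K r W R (d - 2))
          (Fin.cast (congrArg K (by omega : d - 1 = d - 2 + 1)) y))
      (Fin.cast (congrArg K (by omega : d = d - 1 + 1)) b)

/-- Dimension tuple `k = (k₁,…,k_{d−1})` of the inner TT indices, `k_t = K_t`. -/
abbrev kdim (d : ℕ) (K : ℕ → ℕ) : Fin (d - 1) → ℕ := fun t => K (t.val + 1)

/-- Dimension tuple `r = (r₁,…,r_{d−1})` of the embedding ranks. -/
abbrev rdim (d : ℕ) (r : ℕ → ℕ) : Fin (d - 1) → ℕ := fun t => r t.val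

/-- Product index `α ⊗ i ∈ [a·b]` built from `α ∈ [a]` and `i ∈ [b]`. -/
def pprod {a b : ℕ} (α : Fin a) (i : Fin b) : Fin (a * b) :=
  ⟨α.val * b + i.val, by
    have hb : i.val < b := i.isLt
    calc α.val * b + i.val < (α.val + 1) * b := by nlinarith
      _ ≤ a * b := Nat.mul_le_mul_right b α.isLt⟩

/-- Product `α ⊗ i` of two partial indices. -/
def pkron {ι : Type} [DecidableEq ι] {rd kd : ι → ℕ} {Ω : Finset ι}
    (α : PIdx rd Ω) (i : PIdx kd Ω) : PIdx (fun ω => rd ω * kd ω) Ω :=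
  fun ω => pprod (α ω) (i ω)

/-- The `α`-part (quotient) of an element of `[a·b]`. -/
def pquot {a b : ℕ} (x : Fin (a * b)) : Fin a :=
  ⟨x.val / b, by
    have hb : 0 < b := by
      rcases Nat.eq_zero_or_pos b with h | h
      · exact absurd x.isLt (by simp [h])
      · exact h
    exact (Nat.div_lt_iff_lt_mul hb).mpr x.isLt⟩

/-- The `i`-part (remainder) of an element of `[a·b]`. -/
def prem {a b : ℕ} (x : Fin (a * b)) : Fin b :=
  ⟨x.val % b, by
    have hb : 0 < b := by
      rcases Nat.eq_zero_or_pos b with h | h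
      · exact absurd x.isLt (by simp [h])
      · exact h
    exact Nat.mod_lt _ hb⟩

/-- `Ψ_Ω` built from `Φ_Ω`: the entry at `(α⊗i) ⌢ (β⊗j)` equals
`Φ_Ω(…)_{i⌢j} Π_{ω∈Ω} δ_{α_ω,β_ω}`. -/
noncomputable def PsiOf {ι : Type} [DecidableEq ι] {kd : ι → ℕ} (rd : ι → ℕ) {Ω : Finset ι}
    (C : PArr (mdup kd) (oplus Ω Ω)) :
    PArr (mdup fun ω => rd ω * kd ω) (oplus Ω Ω) := fun κ =>
  C (pcat (fun ω => prem (pleft κ ω)) (fun ω => prem (pright κ ω))) *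
    ∏ ω : Ω, (if pquot (pleft κ ω) = pquot (pright κ ω) then (1 : ℝ) else 0)

/-- The array `Φ_{[d−1]}(W₁,…,W_d)`: its entry at `i ⌢ j` equals
`W₁(1,i₁) W₂(j₁,i₂) ⋯ W_d(j_{d−1},1)`. -/
noncomputable def PhiFull (d : ℕ) (K : ℕ → ℕ)
    (W : ∀ s : ℕ, Matrix (Fin (K s)) (Fin (K (s + 1))) ℝ) :
    PArr (mdup (kdim d K)) (oplus (Finset.univ : Finset (Fin (d - 1))) Finset.univ) :=
  fun κ =>
  ∑ a : Fin (K 0), ∑ b : Fin (K d), ∏ t : Fin d,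
    W t.val
      (if h : t.val = 0 then Fin.cast (congrArg K h).symm a
       else Fin.cast (congrArg K (by omega : t.val - 1 + 1 = t.val))
         (pright κ ⟨⟨t.val - 1, by omega⟩, Finset.mem_univ _⟩))
      (if h : t.val + 1 = d then Fin.cast (congrArg K h).symm b
       else pleft κ ⟨⟨t.val, by omega⟩, Finset.mem_univ _⟩)

end PArray

namespace PArray

open Matrix

/-! ### Auxiliary lemmas -/

theorem prem_pprod {a b : ℕ} (α : Fin a) (i : Fin b) : prem (pprod α i) = i := by
  ext
  show (α.val * b + i.val) % b = i.val
  rw [add_comm, Nat.add_mul_mod_self_right, Nat.mod_eq_of_lt i.isLt]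

theorem pquot_pprod {a b : ℕ} (α : Fin a) (i : Fin b) : pquot (pprod α i) = α := by
  ext
  show (α.val * b + i.val) / b = α.val
  rw [add_comm, Nat.add_mul_div_right _ _ i.pos, Nat.div_eq_of_lt i.isLt, Nat.zero_add]

theorem pleft_pcat' {ι : Type} [DecidableEq ι] {m : ι → ℕ} {Ω' Ω'' : Finset ι}
    (i : PIdx m Ω') (j : PIdx m Ω'') : pleft (pcat i j) = i := rfl

theorem pright_pcat' {ι : Type} [DecidableEq ι] {m : ι → ℕ} {Ω' Ω'' : Finset ι}
    (i : PIdx m Ω') (j : PIdx m Ω'') : pright (pcat i j) = j := rfl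

/-- Splitting a sum over dependent tuples of length `n+1` along `Fin.snoc`. -/
theorem sum_pi_snoc {n : ℕ} {α : Fin (n + 1) → Type} [∀ t, Fintype (α t)]
    (f : (∀ t, α t) → ℝ) :
    (∑ F : ∀ t, α t, f F) =
      ∑ x : α (Fin.last n), ∑ F : ∀ t : Fin n, α t.castSucc, f (Fin.snoc F x) := by
  rw [← (Fin.snocEquiv α).sum_comp f, Fintype.sum_prod_type]
  rfl

/-- An index tuple extended at the end. -/
abbrev snocIdx (K : ℕ → ℕ) {s : ℕ} (j : ∀ t : Fin s, Fin (K (t.val + 1)))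
    (y : Fin (K (s + 1))) : ∀ t : Fin (s + 1), Fin (K (t.val + 1)) :=
  Fin.snoc (α := fun u : Fin (s + 1) => Fin (K (u.val + 1))) j y

theorem snocIdx_castSucc (K : ℕ → ℕ) {s : ℕ} (j : ∀ t : Fin s, Fin (K (t.val + 1)))
    (y : Fin (K (s + 1))) (t : Fin s) : snocIdx K j y t.castSucc = j t :=
  Fin.snoc_castSucc (α := fun u : Fin (s + 1) => Fin (K (u.val + 1))) y j t

theorem snocIdx_last (K : ℕ → ℕ) {s : ℕ} (j : ∀ t : Fin s, Fin (K (t.val + 1)))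
    (y : Fin (K (s + 1))) : snocIdx K j y (Fin.last s) = y :=
  Fin.snoc_last (α := fun u : Fin (s + 1) => Fin (K (u.val + 1))) y j

theorem snocIdx_mk_lt (K : ℕ → ℕ) {s : ℕ} (j : ∀ t : Fin s, Fin (K (t.val + 1)))
    (y : Fin (K (s + 1))) {w : ℕ} (h : w < s) (h' : w < s + 1) :
    snocIdx K j y ⟨w, h'⟩ = j ⟨w, h⟩ :=
  Fin.snoc_castSucc (α := fun u : Fin (s + 1) => Fin (K (u.val + 1))) y j ⟨w, h⟩

/-- The row index used in the `W`-product. -/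
def wrow (K : ℕ → ℕ) {n : ℕ} (a : Fin (K 0)) (j : ∀ t : Fin n, Fin (K (t.val + 1)))
    (t : Fin n) : Fin (K t.val) :=
  if h : t.val = 0 then Fin.cast (congrArg K h).symm a
  else Fin.cast (congrArg K (by omega : t.val - 1 + 1 = t.val))
    (j ⟨t.val - 1, Nat.lt_of_le_of_lt (Nat.sub_le _ _) t.isLt⟩)

theorem wrow_castSucc (K : ℕ → ℕ) {s : ℕ} (a : Fin (K 0))
    (j : ∀ t : Fin (s + 1), Fin (K (t.val + 1))) (y : Fin (K (s + 2))) (t : Fin (s + 1)) :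
    wrow K a (snocIdx K j y) t.castSucc = wrow K a j t := by
  unfold wrow
  by_cases h : t.val = 0
  · rw [dif_pos (show (t.castSucc).val = 0 from h), dif_pos h]
  · rw [dif_neg (show ¬(t.castSucc).val = 0 from h), dif_neg h]
    ext
    show ((snocIdx K j y) ⟨t.val - 1, _⟩).val = (j ⟨t.val - 1, _⟩).val
    rw [snocIdx_mk_lt K j y (Nat.lt_of_le_of_lt (Nat.sub_le _ _) t.isLt)]

theorem wrow_snoc_last (K : ℕ → ℕ) {s : ℕ} (a : Fin (K 0))
    (j : ∀ t : Fin (s + 1), Fin (K (t.val + 1))) (y : Fin (K (s + 2))) :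
    wrow K a (snocIdx K j y) (Fin.last (s + 1)) = j (Fin.last s) := by
  unfold wrow
  rw [dif_neg (by simp : ¬(Fin.last (s + 1)).val = 0)]
  ext
  show ((snocIdx K j y) ⟨s, Nat.lt_succ_of_lt (Nat.lt_succ_self s)⟩).val = (j (Fin.last s)).val
  rw [snocIdx_mk_lt K j y (Nat.lt_succ_self s)]
  rfl

/-- Product of `W`-factors along a chain, summed over the (trivial) first index. -/
private noncomputable def Pa (K : ℕ → ℕ)
    (W : ∀ s : ℕ, Matrix (Fin (K s)) (Fin (K (s + 1))) ℝ) {s : ℕ}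
    (i j : ∀ t : Fin (s + 1), Fin (K (t.val + 1))) : ℝ :=
  ∑ a : Fin (K 0), ∏ t : Fin (s + 1), W t.val (wrow K a j t) (i t)

/-- Product of Gram-matrix factors along a chain. -/
private noncomputable def Pm (K r : ℕ → ℕ)
    (R : ∀ s : ℕ, Matrix (Fin (K (s + 1))) (Fin (r s)) ℝ) {s : ℕ}
    (i j : ∀ t : Fin (s + 1), Fin (K (t.val + 1))) : ℝ :=
  ∏ t : Fin (s + 1), ∑ c : Fin (r t.val), R t.val (i t) c * R t.val (j t) c

private theorem Pa_succ (K : ℕ → ℕ)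
    (W : ∀ s : ℕ, Matrix (Fin (K s)) (Fin (K (s + 1))) ℝ) {s : ℕ}
    (i : ∀ t : Fin (s + 1), Fin (K (t.val + 1))) (x : Fin (K (s + 2)))
    (j : ∀ t : Fin (s + 1), Fin (K (t.val + 1))) (y : Fin (K (s + 2))) :
    Pa K W (snocIdx K i x) (snocIdx K j y) = Pa K W i j * W (s + 1) (j (Fin.last s)) x := by
  unfold Pa
  rw [Finset.sum_mul]
  refine Finset.sum_congr rfl fun a _ => ?_
  rw [Fin.prod_univ_castSucc]
  congr 1
  · exact Finset.prod_congr rfl fun t _ => by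
      rw [wrow_castSucc, snocIdx_castSucc]; rfl
  · rw [wrow_snoc_last, snocIdx_last]; rfl

private theorem Pm_succ (K r : ℕ → ℕ)
    (R : ∀ s : ℕ, Matrix (Fin (K (s + 1))) (Fin (r s)) ℝ) {s : ℕ}
    (i : ∀ t : Fin (s + 1), Fin (K (t.val + 1))) (x : Fin (K (s + 2)))
    (j : ∀ t : Fin (s + 1), Fin (K (t.val + 1))) (y : Fin (K (s + 2))) :
    Pm K r R (snocIdx K i x) (snocIdx K j y) =
      Pm K r R i j * ∑ c : Fin (r (s + 1)), R (s + 1) x c * R (s + 1) y c := by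
  unfold Pm
  rw [Fin.prod_univ_castSucc]
  congr 1
  · exact Finset.prod_congr rfl fun t _ => by rw [snocIdx_castSucc, snocIdx_castSucc]; rfl
  · rw [snocIdx_last, snocIdx_last]; rfl

/-- Sums over `PIdx m univ` are sums over plain dependent tuples. -/
def piEquiv {n : ℕ} (m : Fin n → ℕ) : (∀ t : Fin n, Fin (m t)) ≃ PIdx m Finset.univ where
  toFun f := fun ω => f ω.val
  invFun g := fun t => g ⟨t, Finset.mem_univ t⟩
  left_inv _ := rfl
  right_inv _ := rfl

private theorem claim (K r : ℕ → ℕ)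
    (W : ∀ s : ℕ, Matrix (Fin (K s)) (Fin (K (s + 1))) ℝ)
    (R : ∀ s : ℕ, Matrix (Fin (K (s + 1))) (Fin (r s)) ℝ) (s : ℕ) :
    ∀ (y : Fin (K (s + 1))),
      (R s).mulVec (zchain K r W R s) y =
        ∑ i : ∀ t : Fin (s + 1), Fin (K (t.val + 1)),
        ∑ j : ∀ t : Fin s, Fin (K (t.val + 1)),
          Pa K W i (snocIdx K j y) * Pm K r R i (snocIdx K j y) := by
  induction s with
  | zero =>
    intro y
    rw [sum_pi_snoc]
    simp only [Fintype.sum_unique, Pa, Pm, Fin.prod_univ_succ, Fin.prod_univ_zero, mul_one]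
    show _ = ∑ x : Fin (K 1), (∑ a : Fin (K 0), W 0 a x) * (∑ c : Fin (r 0), R 0 x c * R 0 y c)
    simp only [zchain, Matrix.mulVec, dotProduct, Matrix.transpose_apply, Pi.one_apply,
      mul_one]
    simp only [Finset.mul_sum, Finset.sum_mul]
    rw [Finset.sum_comm]
    refine Finset.sum_congr rfl fun u _ => ?_
    rw [Finset.sum_comm]
    rw [Finset.sum_comm]
    refine Finset.sum_congr rfl fun a _ => Finset.sum_congr rfl fun c _ => ?_
    ring
  | succ s IH =>
    intro y
    rw [sum_pi_snoc]
    have h1 : ∀ (x : Fin (K (s + 2))) (i₀ : ∀ t : Fin (s + 1), Fin (K (t.val + 1))),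
        (∑ j : ∀ t : Fin (s + 1), Fin (K (t.val + 1)),
          Pa K W (Fin.snoc i₀ x) (snocIdx K j y) * Pm K r R (Fin.snoc i₀ x) (snocIdx K j y))
        = ∑ z : Fin (K (s + 1)), ∑ j₀ : ∀ t : Fin s, Fin (K (t.val + 1)),
            (Pa K W i₀ (snocIdx K j₀ z) * Pm K r R i₀ (snocIdx K j₀ z)) *
              (W (s + 1) z x * ∑ c : Fin (r (s + 1)), R (s + 1) x c * R (s + 1) y c) := by
      intro x i₀
      rw [sum_pi_snoc]
      refine Finset.sum_congr rfl fun z _ => Finset.sum_congr rfl fun j₀ _ => ?_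
      rw [Pa_succ, Pm_succ, Fin.snoc_last]
      ring
    refine Eq.trans ?_
      (Finset.sum_congr rfl fun x _ => Finset.sum_congr rfl fun i₀ _ => (h1 x i₀)).symm
    refine Eq.trans ?_ (Finset.sum_congr rfl fun x _ => Finset.sum_comm).symm
    have h2 : ∀ (x : Fin (K (s + 2))) (z : Fin (K (s + 1))),
        (∑ i₀ : ∀ t : Fin (s + 1), Fin (K (t.val + 1)),
         ∑ j₀ : ∀ t : Fin s, Fin (K (t.val + 1)),
            (Pa K W i₀ (snocIdx K j₀ z) * Pm K r R i₀ (snocIdx K j₀ z)) *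
              (W (s + 1) z x * ∑ c : Fin (r (s + 1)), R (s + 1) x c * R (s + 1) y c))
        = (W (s + 1) z x * ∑ c : Fin (r (s + 1)), R (s + 1) x c * R (s + 1) y c) *
            (R s *ᵥ zchain K r W R s) z := by
      intro x z
      rw [IH z]
      simp only [← Finset.sum_mul]
      exact mul_comm _ _
    refine Eq.trans ?_ (Finset.sum_congr rfl fun x _ =>
      Finset.sum_congr rfl fun z _ => (h2 x z)).symm
    -- now expand the matrix side
    simp only [zchain, Matrix.mulVec, dotProduct, Matrix.transpose_apply]
    simp only [Finset.mul_sum, Finset.sum_mul]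
    rw [Finset.sum_comm]
    refine Finset.sum_congr rfl fun x _ => ?_
    rw [Finset.sum_comm]
    refine Finset.sum_congr rfl fun z _ => ?_
    rw [Finset.sum_comm]
    refine Finset.sum_congr rfl fun c _ => Finset.sum_congr rfl fun q _ => ?_
    ring

end PArray

namespace PArray

/-- The quadratic form `Δ(R₁,…,R_{d−1})` expands as
`Σ_{i,j∈𝔍^k} Σ_{α,β∈𝔍^r} D_{(α⊗i)⌢(β⊗j)} Π_s R_s(i_s,α_s) R_s(j_s,β_s)` where
`D = Ψ_{[d−1]}(W₁,…,W_d)`. -/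
theorem delta_eq_quadratic_form (d : ℕ) (hd : 2 ≤ d) (K r : ℕ → ℕ)
    (hK0 : K 0 = 1) (hKd : K d = 1)
    (W : ∀ s : ℕ, Matrix (Fin (K s)) (Fin (K (s + 1))) ℝ)
    (R : ∀ s : ℕ, Matrix (Fin (K (s + 1))) (Fin (r s)) ℝ) :
    Delta d hd K r W R =
      ∑ i : PIdx (kdim d K) Finset.univ, ∑ j : PIdx (kdim d K) Finset.univ,
      ∑ α : PIdx (rdim d r) Finset.univ, ∑ β : PIdx (rdim d r) Finset.univ,
        PsiOf (rdim d r) (PhiFull d K W) (pcat (pkron α i) (pkron β j)) *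
          ∏ t : Fin (d - 1),
            R t.val (i ⟨t, Finset.mem_univ t⟩) (α ⟨t, Finset.mem_univ t⟩) *
              R t.val (j ⟨t, Finset.mem_univ t⟩) (β ⟨t, Finset.mem_univ t⟩) := by
  obtain ⟨e, rfl⟩ : ∃ e, d = e + 2 := ⟨d - 2, by omega⟩
  have hDelta : Delta (e + 2) hd K r W R =
      ∑ b : Fin (K (e + 2)), ∑ y : Fin (K (e + 1)),
        W (e + 1) y b * ((R e).mulVec (zchain K r W R e) y) := by
    show (∑ b : Fin (K (e + 2)),
        ((W (e + 1)).transpose.mulVec (fun y : Fin (K (e + 1)) =>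
          (R e).mulVec (zchain K r W R e) y) b)) = _
    refine Finset.sum_congr rfl fun b _ => ?_
    simp [Matrix.mulVec, dotProduct, Matrix.transpose_apply]
  rw [hDelta]
  simp only [claim K r W R e]
  trans (∑ y : Fin (K (e + 1)), ∑ i : ∀ t : Fin (e + 1), Fin (K (t.val + 1)),
      ∑ j : ∀ t : Fin e, Fin (K (t.val + 1)),
        (Pa K W i (snocIdx K j y) *
            ∑ b : Fin (K (e + 2)), W (e + 1) (snocIdx K j y (Fin.last e)) b) *
          Pm K r R i (snocIdx K j y))
  · rw [Finset.sum_comm]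
    refine Finset.sum_congr rfl fun y _ => ?_
    rw [← Finset.sum_mul, Finset.mul_sum]
    refine Finset.sum_congr rfl fun i _ => ?_
    rw [Finset.mul_sum]
    refine Finset.sum_congr rfl fun j _ => ?_
    rw [snocIdx_last K j y]
    ring
  trans (∑ i : ∀ t : Fin (e + 1), Fin (K (t.val + 1)),
      ∑ j : ∀ t : Fin (e + 1), Fin (K (t.val + 1)),
        (Pa K W i j * ∑ b : Fin (K (e + 2)), W (e + 1) (j (Fin.last e)) b) * Pm K r R i j)
  · rw [Finset.sum_comm]
    refine Finset.sum_congr rfl fun i _ => ?_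
    exact (sum_pi_snoc fun j' => (Pa K W i j' *
      ∑ b : Fin (K (e + 2)), W (e + 1) (j' (Fin.last e)) b) * Pm K r R i j').symm
  symm
  simp only [← Equiv.sum_comp (piEquiv (kdim (e + 2) K)),
    ← Equiv.sum_comp (piEquiv (rdim (e + 2) r))]
  have psi_simp : ∀ (i j : ∀ t : Fin (e + 2 - 1), Fin (kdim (e + 2) K t))
      (α β : ∀ t : Fin (e + 2 - 1), Fin (rdim (e + 2) r t)),
      PsiOf (rdim (e + 2) r) (PhiFull (e + 2) K W)
          (pcat (pkron (piEquiv (rdim (e + 2) r) α) (piEquiv (kdim (e + 2) K) i))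
            (pkron (piEquiv (rdim (e + 2) r) β) (piEquiv (kdim (e + 2) K) j))) =
        PhiFull (e + 2) K W
            (pcat (piEquiv (kdim (e + 2) K) i) (piEquiv (kdim (e + 2) K) j)) *
          (if β = α then (1 : ℝ) else 0) := by
    intro i j α β
    unfold PsiOf
    congr 1
    · exact congrArg (PhiFull (e + 2) K W)
        (congrArg₂ pcat (funext fun ω => prem_pprod _ _) (funext fun ω => prem_pprod _ _))
    · trans (∏ ω : {x // x ∈ (Finset.univ : Finset (Fin (e + 2 - 1)))},
          if α ω.val = β ω.val then (1 : ℝ) else 0)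
      · refine Finset.prod_congr rfl fun ω _ => ?_
        show (if pquot (pprod (α ω.val) (i ω.val)) = pquot (pprod (β ω.val) (j ω.val))
            then (1 : ℝ) else 0) = _
        rw [pquot_pprod, pquot_pprod]
      · by_cases h : β = α
        · rw [if_pos h, h]
          simp
        · rw [if_neg h]
          obtain ⟨x, hx⟩ : ∃ x, ¬α x = β x := by
            by_contra hc
            push_neg at hc
            exact h (funext fun x => (hc x).symm)
          exact Finset.prod_eq_zero (Finset.mem_univ
            (⟨x, Finset.mem_univ x⟩ : {y // y ∈ (Finset.univ : Finset (Fin (e + 2 - 1)))}))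
            (if_neg hx)
  have hcollapse : ∀ (G : (∀ t : Fin (e + 1), Fin (r t.val)) → ℝ) (c : ℝ)
      (α : ∀ t : Fin (e + 1), Fin (r t.val)),
      (∑ β : ∀ t : Fin (e + 1), Fin (r t.val),
        (c * if β = α then (1 : ℝ) else 0) * G β) = c * G α := by
    intro G c α
    have h1 : ∀ β, (c * if β = α then (1 : ℝ) else 0) * G β =
        if β = α then c * G β else 0 := fun β => by
      by_cases h : β = α <;> simp [h]
    simp_rw [h1]
    rw [Finset.sum_ite_eq' Finset.univ α fun β => c * G β]
    simp
  have hswap : ∀ (i j : ∀ t : Fin (e + 1), Fin (K (t.val + 1))),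
      (∑ α : ∀ t : Fin (e + 1), Fin (r t.val),
        ∏ t : Fin (e + 1), R t.val (i t) (α t) * R t.val (j t) (α t)) = Pm K r R i j := by
    intro i j
    unfold Pm
    rw [Finset.prod_univ_sum (fun _ => Finset.univ) (fun t c => R t.val (i t) c * R t.val (j t) c)]
    rw [Fintype.piFinset_univ]
  have hphi : ∀ (i j : ∀ t : Fin (e + 1), Fin (K (t.val + 1))),
      PhiFull (e + 2) K W (pcat (piEquiv (kdim (e + 2) K) i) (piEquiv (kdim (e + 2) K) j)) =
        Pa K W i j * ∑ b : Fin (K (e + 2)), W (e + 1) (j (Fin.last e)) b := by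
    intro i j
    unfold PhiFull Pa
    rw [Finset.sum_mul]
    refine Finset.sum_congr rfl fun a _ => ?_
    rw [Finset.mul_sum]
    refine Finset.sum_congr rfl fun b _ => ?_
    rw [Fin.prod_univ_castSucc]
    congr 1
    · refine Finset.prod_congr rfl fun t _ => ?_
      rw [dif_neg (show ¬((t.castSucc : Fin (e + 2)).val + 1 = e + 2) from by
        have := t.isLt
        simp only [Fin.coe_castSucc]
        omega)]
      rfl
    · rw [dif_neg (show ¬((Fin.last (e + 1)).val = 0) from by simp),
        dif_pos (show (Fin.last (e + 1)).val + 1 = e + 2 from by simp)]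
      rfl
  refine Finset.sum_congr rfl fun i _ => Finset.sum_congr rfl fun j _ => ?_
  trans (∑ α : ∀ t : Fin (e + 1), Fin (r t.val),
      ∑ β : ∀ t : Fin (e + 1), Fin (r t.val),
        (PhiFull (e + 2) K W (pcat (piEquiv (kdim (e + 2) K) i) (piEquiv (kdim (e + 2) K) j)) *
            (if β = α then (1 : ℝ) else 0)) *
          ∏ t : Fin (e + 1), R t.val (i t) (α t) * R t.val (j t) (β t))
  · refine Finset.sum_congr rfl fun α _ => Finset.sum_congr rfl fun β _ => ?_
    rw [psi_simp i j α β]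
    rfl
  trans (PhiFull (e + 2) K W
      (pcat (piEquiv (kdim (e + 2) K) i) (piEquiv (kdim (e + 2) K) j)) * Pm K r R i j)
  · calc (∑ α : ∀ t : Fin (e + 1), Fin (r t.val),
        ∑ β : ∀ t : Fin (e + 1), Fin (r t.val),
          (PhiFull (e + 2) K W (pcat (piEquiv (kdim (e + 2) K) i) (piEquiv (kdim (e + 2) K) j)) *
              (if β = α then (1 : ℝ) else 0)) *
            ∏ t : Fin (e + 1), R t.val (i t) (α t) * R t.val (j t) (β t))
        = ∑ α : ∀ t : Fin (e + 1), Fin (r t.val),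
            PhiFull (e + 2) K W
                (pcat (piEquiv (kdim (e + 2) K) i) (piEquiv (kdim (e + 2) K) j)) *
              ∏ t : Fin (e + 1), R t.val (i t) (α t) * R t.val (j t) (α t) :=
          Finset.sum_congr rfl fun α _ =>
            hcollapse (fun β => ∏ t : Fin (e + 1), R t.val (i t) (α t) * R t.val (j t) (β t)) _ α
      _ = PhiFull (e + 2) K W
              (pcat (piEquiv (kdim (e + 2) K) i) (piEquiv (kdim (e + 2) K) j)) *
            ∑ α : ∀ t : Fin (e + 1), Fin (r t.val),
              ∏ t : Fin (e + 1), R t.val (i t) (α t) * R t.val (j t) (α t) := by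
          rw [← Finset.mul_sum]
      _ = _ := by rw [hswap i j]
  · rw [hphi i j]

end PArray
end

section
/- Let d ≥ 2, k = (k₁,…,k_{d−1}), r = (r₁,…,r_{d−1}) ∈ ℕ^{d−1}, W₁ ∈ ℝ^{1×k₁}, W_s ∈ ℝ^{k_{s−1}×k_s} for 2 ≤ s ≤ d−1, W_d ∈ ℝ^{k_{d−1}×1}. Let C = Φ_{[d−1]}(W₁,…,W_d) and D = Ψ_{[d−1]}(W₁,…,W_d). Then for every s ∈ [d−1]: C^⟨{s}⟩ = Φ_{[d−1]∖{s}}(W₁,…,W_{s−1}, W_s·W_{s+1}, W_{s+2},…,W_d) and D^⟨{s}⟩ = r_s · Ψ_{[d−1]∖{s}}(W₁,…,W_{s−1}, W_s·W_{s+1}, W_{s+2},…,W_d). -/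
open scoped BigOperators Classical

namespace PArray

/-- The array `Φ_{[d−1]∖{s}}(W₁,…,W_{s−1}, W_s·W_{s+1}, W_{s+2},…,W_d)`: its entry at `i ⌢ j`
is the chain `W₁(1,i₁)⋯[W_s W_{s+1}](j_{s−1}, i_{s+1})⋯W_d(j_{d−1},1)`, written with the
matrix product `W_s·W_{s+1}` expanded as a sum over `c`. -/
noncomputable def PhiDel (d : ℕ) (K : ℕ → ℕ)
    (W : ∀ s : ℕ, Matrix (Fin (K s)) (Fin (K (s + 1))) ℝ) (s₀ : Fin (d - 1)) :
    PArr (mdup (kdim d K)) (oplus (Finset.univ \ {s₀}) (Finset.univ \ {s₀})) := fun κ =>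
  ∑ a : Fin (K 0), ∑ b : Fin (K d), ∑ c : Fin (K (s₀.val + 1)), ∏ t : Fin d,
    W t.val
      (if h1 : t.val = s₀.val + 1 then Fin.cast (congrArg K h1).symm c
       else if h : t.val = 0 then Fin.cast (congrArg K h).symm a
       else Fin.cast (congrArg K (by omega : t.val - 1 + 1 = t.val))
         (pright κ ⟨⟨t.val - 1, by omega⟩,
            Finset.mem_sdiff.mpr ⟨Finset.mem_univ _, by
              simp only [Finset.mem_singleton]
              intro hc
              have hv : t.val - 1 = s₀.val := congrArg Fin.val hc
              omega⟩⟩))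
      (if h2 : t.val = s₀.val then
         Fin.cast (congrArg K (by omega : s₀.val + 1 = t.val + 1)) c
       else if h : t.val + 1 = d then Fin.cast (congrArg K h).symm b
       else pleft κ ⟨⟨t.val, by omega⟩,
         Finset.mem_sdiff.mpr ⟨Finset.mem_univ _, by
           simp only [Finset.mem_singleton]
           intro hc
           have hv : t.val = s₀.val := congrArg Fin.val hc
           omega⟩⟩)


section Helpers

variable {ι : Type} [DecidableEq ι]

/-- Equiv between partial indices on a singleton and a single `Fin`. -/
def singletonEquiv (m : ι → ℕ) (a : ι) : PIdx m ({a} : Finset ι) ≃ Fin (m a) where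
  toFun ℓ := ℓ ⟨a, Finset.mem_singleton_self a⟩
  invFun c := fun ω => Fin.cast (congrArg m (Finset.mem_singleton.mp ω.property).symm) c
  left_inv ℓ := by
    funext ω
    obtain ⟨v, hv⟩ := ω
    have h : v = a := Finset.mem_singleton.mp hv
    subst h
    apply Fin.ext
    simp [Fin.cast]
  right_inv c := rfl

lemma sum_pidx_singleton (m : ι → ℕ) (a : ι) (f : PIdx m ({a} : Finset ι) → ℝ) :
    ∑ ℓ : PIdx m ({a} : Finset ι), f ℓ =
      ∑ c : Fin (m a),
        f (fun ω => Fin.cast (congrArg m (Finset.mem_singleton.mp ω.property).symm) c) :=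
  (Equiv.sum_comp (singletonEquiv m a).symm f).symm

lemma sum_fin_mul (a b : ℕ) (f : Fin b → ℝ) :
    ∑ x : Fin (a * b), f (prem x) = (a : ℝ) * ∑ c : Fin b, f c := by
  rw [← Equiv.sum_comp (finProdFinEquiv (m := a) (n := b)) (fun x => f (prem x))]
  have h : ∀ p : Fin a × Fin b, prem (finProdFinEquiv p) = p.2 := by
    intro p
    apply Fin.ext
    simp [prem, finProdFinEquiv, Nat.add_mul_mod_self_left, Nat.mod_eq_of_lt p.2.isLt]
  simp only [h]
  rw [Fintype.sum_prod_type]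
  simp [Finset.sum_const, nsmul_eq_mul]

end Helpers


lemma val_app_congr {n m : ℕ} (f : Fin n → Fin m → ℝ) {x x' : Fin n} {y y' : Fin m}
    (hx : x.val = x'.val) (hy : y.val = y'.val) : f x y = f x' y' := by
  rw [Fin.ext hx, Fin.ext hy]

lemma key_phi (d : ℕ) (hd : 2 ≤ d) (K : ℕ → ℕ)
    (W : ∀ s : ℕ, Matrix (Fin (K s)) (Fin (K (s + 1))) ℝ) (s₀ : Fin (d - 1))
    (κ : PIdx (mdup (kdim d K)) (oplus (Finset.univ \ {s₀}) (Finset.univ \ {s₀}))) :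
    ptrace (Finset.subset_univ {s₀}) (PhiFull d K W) κ = PhiDel d K W s₀ κ := by
  simp only [ptrace, PhiFull, PhiDel, pcast, pcat, pleft, pright, pjoin]
  rw [sum_pidx_singleton]
  rw [Finset.sum_comm]
  refine Finset.sum_congr rfl fun a _ => ?_
  rw [Finset.sum_comm]
  refine Finset.sum_congr rfl fun b _ => ?_
  refine Finset.sum_congr rfl fun c _ => ?_
  refine Finset.prod_congr rfl fun t _ => ?_
  have hs : s₀.val < d - 1 := s₀.isLt
  have ht : t.val < d := t.isLt
  refine val_app_congr (W t.val) ?_ ?_ <;>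
  · simp only [Finset.mem_sdiff, Finset.mem_univ, true_and, Finset.mem_singleton,
      Fin.ext_iff]
    split_ifs <;> simp_all [Fin.coe_cast] <;> (try split_ifs) <;> simp_all [Fin.ext_iff] <;> omega


lemma key_psi (d : ℕ) (hd : 2 ≤ d) (K r : ℕ → ℕ)
    (W : ∀ s : ℕ, Matrix (Fin (K s)) (Fin (K (s + 1))) ℝ) (s₀ : Fin (d - 1))
    (κ : PIdx (mdup fun ω => rdim d r ω * kdim d K ω)
      (oplus (Finset.univ \ {s₀}) (Finset.univ \ {s₀}))) :
    ptrace (Finset.subset_univ {s₀}) (PsiOf (rdim d r) (PhiFull d K W)) κ =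
      (r s₀.val : ℝ) * PsiOf (rdim d r) (PhiDel d K W s₀) κ := by
  classical
  set κ₀ : PIdx (mdup (kdim d K)) (oplus (Finset.univ \ {s₀}) (Finset.univ \ {s₀})) :=
    pcat (fun ω => prem (pleft κ ω)) (fun ω => prem (pright κ ω)) with hκ₀
  set Δ : ℝ := ∏ ω : ((Finset.univ \ {s₀} : Finset (Fin (d-1))) : Type),
    (if pquot (pleft κ ω) = pquot (pright κ ω) then (1:ℝ) else 0) with hΔ
  have hRHS : PsiOf (rdim d r) (PhiDel d K W s₀) κ = PhiDel d K W s₀ κ₀ * Δ := rfl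
  rw [hRHS]
  -- the inverse of the singleton equivalence, for the product dims and for kdims
  set sinvP : Fin (rdim d r s₀ * kdim d K s₀) → PIdx (fun ω => rdim d r ω * kdim d K ω) ({s₀} : Finset (Fin (d-1))) :=
    fun x ω => Fin.cast (congrArg (fun ω => rdim d r ω * kdim d K ω) (Finset.mem_singleton.mp ω.property).symm) x with hsinvP
  set sinv : Fin (kdim d K s₀) → PIdx (kdim d K) ({s₀} : Finset (Fin (d-1))) :=
    fun c ω => Fin.cast (congrArg (kdim d K) (Finset.mem_singleton.mp ω.property).symm) c with hsinv
  have pf : oplus ((Finset.univ \ {s₀}) ∪ {s₀}) ((Finset.univ \ {s₀}) ∪ {s₀})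
      = oplus (Finset.univ : Finset (Fin (d-1))) Finset.univ := by
    rw [Finset.sdiff_union_of_subset (Finset.subset_univ {s₀})]
  set f : Fin (kdim d K s₀) → ℝ := fun c =>
    PhiFull d K W (pcast pf (pcat (pjoin (pleft κ₀) (sinv c)) (pjoin (pright κ₀) (sinv c)))) * Δ
    with hf
  have hbody : ∀ x : Fin (rdim d r s₀ * kdim d K s₀),
      PsiOf (rdim d r) (PhiFull d K W)
        (pcast pf (pcat (pjoin (pleft κ) (sinvP x)) (pjoin (pright κ) (sinvP x))))
      = f (prem x) := by
    intro x
    set Q : PIdx (mdup fun ω => rdim d r ω * kdim d K ω) (oplus (Finset.univ : Finset (Fin (d-1))) Finset.univ) :=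
      pcast pf (pcat (pjoin (pleft κ) (sinvP x)) (pjoin (pright κ) (sinvP x))) with hQ
    have hidx : (pcat (fun ω => prem (pleft Q ω)) (fun ω => prem (pright Q ω)))
        = pcast pf (pcat (pjoin (pleft κ₀) (sinv (prem x))) (pjoin (pright κ₀) (sinv (prem x)))) := by
      funext ζ
      obtain ⟨z, hz⟩ := ζ
      cases z with
      | inl v =>
        by_cases hv : v ∈ Finset.univ \ ({s₀} : Finset (Fin (d-1)))
        · simp only [hκ₀, hQ, hsinvP, hsinv, pcat, pcast, pleft, pright, pjoin, dite_cond_eq_true (eq_true hv)]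
          simp [hv]
        · have hv' : v = s₀ := by
            exact Finset.mem_singleton.mp (by simpa [Finset.mem_sdiff] using hv)
          simp only [hκ₀, hQ, hsinvP, hsinv, pcat, pcast, pleft, pright, pjoin, dif_neg hv]
          apply Fin.ext
          simp [prem, hv']
      | inr v =>
        by_cases hv : v ∈ Finset.univ \ ({s₀} : Finset (Fin (d-1)))
        · simp only [hκ₀, hQ, hsinvP, hsinv, pcat, pcast, pleft, pright, pjoin, dite_cond_eq_true (eq_true hv)]
          simp [hv]
        · have hv' : v = s₀ := by
            exact Finset.mem_singleton.mp (by simpa [Finset.mem_sdiff] using hv)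
          simp only [hκ₀, hQ, hsinvP, hsinv, pcat, pcast, pleft, pright, pjoin, dif_neg hv]
          apply Fin.ext
          simp [prem, hv']
    have hprod : (∏ ω : ((Finset.univ : Finset (Fin (d-1))) : Type),
        (if pquot (pleft Q ω) = pquot (pright Q ω) then (1:ℝ) else 0)) = Δ := by
      set g : Fin (d-1) → ℝ := fun v =>
        if pquot (pleft Q ⟨v, Finset.mem_univ v⟩) = pquot (pright Q ⟨v, Finset.mem_univ v⟩)
        then (1:ℝ) else 0 with hg
      have h1 : (∏ ω : ((Finset.univ : Finset (Fin (d-1))) : Type),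
          (if pquot (pleft Q ω) = pquot (pright Q ω) then (1:ℝ) else 0))
          = ∏ v ∈ (Finset.univ : Finset (Fin (d-1))), g v := by
        exact Finset.prod_coe_sort _ g
      rw [h1, Finset.prod_eq_prod_diff_singleton_mul (Finset.mem_univ s₀) g]
      have hs : s₀ ∉ Finset.univ \ ({s₀} : Finset (Fin (d-1))) := by simp
      have hgs : g s₀ = 1 := by
        rw [hg]
        simp only [hQ, hsinvP, pcat, pcast, pleft, pright, pjoin, dif_neg hs]
        simp
      rw [hgs, mul_one, hΔ]
      refine Eq.trans (Finset.prod_coe_sort _ g).symm (Finset.prod_congr rfl fun ω hω => ?_)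
      rw [hg]
      simp only [hQ, pcat, pcast, pleft, pright, pjoin, dite_cond_eq_true (eq_true ω.property)]
      simp [ω.property]
      exact if_congr Iff.rfl rfl rfl
    calc PsiOf (rdim d r) (PhiFull d K W) Q
        = PhiFull d K W (pcat (fun ω => prem (pleft Q ω)) (fun ω => prem (pright Q ω))) *
          (∏ ω : ((Finset.univ : Finset (Fin (d-1))) : Type),
            (if pquot (pleft Q ω) = pquot (pright Q ω) then (1:ℝ) else 0)) := rfl
      _ = f (prem x) := by rw [hidx, hprod, hf]
  have hL : ptrace (Finset.subset_univ {s₀}) (PsiOf (rdim d r) (PhiFull d K W)) κ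
      = ∑ x : Fin (rdim d r s₀ * kdim d K s₀), f (prem x) := by
    show (∑ ℓ : PIdx (fun ω => rdim d r ω * kdim d K ω) ({s₀} : Finset (Fin (d-1))),
      PsiOf (rdim d r) (PhiFull d K W)
        (pcast pf (pcat (pjoin (pleft κ) ℓ) (pjoin (pright κ) ℓ)))) = _
    rw [sum_pidx_singleton]
    exact Finset.sum_congr rfl fun x _ => hbody x
  rw [hL]
  rw [sum_fin_mul (r s₀.val) (K (s₀.val + 1)) f]
  congr 1
  -- ∑ c, f c = PhiDel κ₀ * Δ
  rw [hf]
  rw [← Finset.sum_mul]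
  congr 1
  have := (sum_pidx_singleton (kdim d K) s₀ (fun ℓ =>
    PhiFull d K W (pcast pf (pcat (pjoin (pleft κ₀) ℓ) (pjoin (pright κ₀) ℓ))))).symm
  rw [this]
  exact key_phi d hd K W s₀ κ₀

/-- Partial traces of `Φ` and `Ψ` along a singleton `{s}` contract the chain:
`C^⟨{s}⟩ = Φ_{[d−1]∖{s}}(W₁,…,W_s W_{s+1},…,W_d)` and
`D^⟨{s}⟩ = r_s · Ψ_{[d−1]∖{s}}(W₁,…,W_s W_{s+1},…,W_d)`. -/
theorem trace_singleton_phi_psi (d : ℕ) (hd : 2 ≤ d) (K r : ℕ → ℕ)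
    (hK0 : K 0 = 1) (hKd : K d = 1)
    (W : ∀ s : ℕ, Matrix (Fin (K s)) (Fin (K (s + 1))) ℝ) (s₀ : Fin (d - 1)) :
    (ptrace (Finset.subset_univ {s₀}) (PhiFull d K W) = PhiDel d K W s₀) ∧
    (ptrace (Finset.subset_univ {s₀}) (PsiOf (rdim d r) (PhiFull d K W)) =
      fun κ => (r s₀.val : ℝ) * PsiOf (rdim d r) (PhiDel d K W s₀) κ) := by
  constructor
  · funext κ
    exact key_phi d hd K W s₀ κ
  · funext κ
    exact key_psi d hd K r W s₀ κ

end PArray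
end
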